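/- arXiv:1009.2673 — 6 statements merged into one kernel-verified Lean document; each statement's English description precedes it below -/
import Mathlib

section
/- Let E be a real inner product space of dimension 2n with 2n ≥ 4, and let J be an almost complex structure on E compatible with the metric. Let T : E×E×E×E → ℝ be a multilinear map satisfying: (1) T(x,y,z,u) = -T(y,x,z,u); (2) T(x,y,z,u) + T(y,z,x,u) + T(z,x,y,u) = 0; (3) T(x,y,z,u) = -T(x,y,u,z); (4) T(x,y,z,u) = T(Jx,Jy,Jz,Ju); (5) T(x,y,y,x) = 0 whenever {x,y} is an orthonormal pair with y = Jx (holomorphic plane) or with ⟨Jx,y⟩ = 0 (antiholomorphic plane). Then T = 0. -/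
open scoped RealInnerProductSpace

set_option maxHeartbeats 1600000 in
/-- Lemma (Ganchev–Gribachev): a (0,4)-tensor with the curvature symmetries, the
Kähler identity `T(x,y,z,u) = T(Jx,Jy,Jz,Ju)`, and vanishing on all holomorphic and
antiholomorphic 2-planes, is identically zero. -/
theorem stmt_0 {E : Type*} [NormedAddCommGroup E] [InnerProductSpace ℝ E]
    [FiniteDimensional ℝ E] {n : ℕ} (hn : 4 ≤ 2 * n)
    (hdim : Module.finrank ℝ E = 2 * n)
    (J : E →ₗ[ℝ] E)
    (hJ2 : ∀ x : E, J (J x) = -x)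
    (hJg : ∀ x y : E, ⟪J x, J y⟫ = ⟪x, y⟫)
    (T : E →ₗ[ℝ] E →ₗ[ℝ] E →ₗ[ℝ] E →ₗ[ℝ] ℝ)
    (h1 : ∀ x y z u : E, T x y z u = - T y x z u)
    (h2 : ∀ x y z u : E, T x y z u + T y z x u + T z x y u = 0)
    (h3 : ∀ x y z u : E, T x y z u = - T x y u z)
    (h4 : ∀ x y z u : E, T x y z u = T (J x) (J y) (J z) (J u))
    (h5 : ∀ x y : E, ‖x‖ = 1 → ‖y‖ = 1 → ⟪x, y⟫ = 0 →
      (y = J x ∨ ⟪J x, y⟫ = 0) → T x y y x = 0) :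
    ∀ x y z u : E, T x y z u = 0 := by
  -- basic consequences of the antisymmetries
  have hzz : ∀ a b c : E, T a b c c = 0 := fun a b c => by have := h3 a b c c; linarith
  have hxx : ∀ a b c : E, T a a b c = 0 := fun a b c => by have := h1 a a b c; linarith
  -- pair symmetry
  have pair : ∀ x y z u : E, T x y z u = T z u x y := by
    intro x y z u
    linarith [h2 x y z u, h2 y z u x, h2 z u x y, h2 u x y z,
      h3 x y z u, h3 y z x u, h3 z x y u, h3 y z u x, h3 z u y x, h3 u y z x,
      h3 z u x y, h3 u x z y, h3 x z u y, h3 u x y z, h3 x y u z, h3 y u x z,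
      h1 x y z u, h1 y z x u, h1 z x y u, h1 y z u x, h1 z u y x, h1 u y z x,
      h1 z u x y, h1 u x z y, h1 x z u y, h1 u x y z, h1 x y u z, h1 y u x z,
      h1 x y u z, h1 y z x u, h1 z x u y, h1 u y x z, h1 x z y u, h1 y u z x]
  -- ⟪v, J v⟫ = 0
  have hJxJ : ∀ v : E, ⟪v, J v⟫ = 0 := by
    intro v
    have h := hJg v (J v)
    rw [hJ2, inner_neg_right, real_inner_comm] at h
    linarith
  -- ‖J v‖ = ‖v‖
  have normJ : ∀ v : E, ‖J v‖ = ‖v‖ := by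
    intro v
    have h := hJg v v
    rw [real_inner_self_eq_norm_sq, real_inner_self_eq_norm_sq] at h
    rw [← Real.sqrt_sq (norm_nonneg (J v)), ← Real.sqrt_sq (norm_nonneg v), h]
  -- holomorphic sectional vanishing, scaled
  have hH : ∀ v : E, T v (J v) (J v) v = 0 := by
    intro v
    rcases eq_or_ne v 0 with rfl | hv
    · simp
    · have hnv : ‖v‖ ≠ 0 := norm_ne_zero_iff.mpr hv
      set c : ℝ := ‖v‖⁻¹ with hc
      have hcne : c ≠ 0 := inv_ne_zero hnv
      have hu1 : ‖c • v‖ = 1 := by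
        rw [norm_smul, hc, norm_inv, norm_norm, inv_mul_cancel₀ hnv]
      have hJu : J (c • v) = c • J v := map_smul J c v
      have hu2 : ‖J (c • v)‖ = 1 := by rw [normJ]; exact hu1
      have hinner : ⟪c • v, J (c • v)⟫ = 0 := by
        rw [hJu, real_inner_smul_left, real_inner_smul_right, hJxJ]; ring
      have h0 := h5 (c • v) (J (c • v)) hu1 hu2 hinner (Or.inl rfl)
      rw [hJu] at h0
      simp only [map_smul, LinearMap.smul_apply, smul_eq_mul] at h0
      -- h0 : c * (c * (c * (c * T v (J v) (J v) v))) = 0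
      rcases mul_eq_zero.mp h0 with h | h
      · exact absurd h hcne
      rcases mul_eq_zero.mp h with h | h
      · exact absurd h hcne
      rcases mul_eq_zero.mp h with h | h
      · exact absurd h hcne
      rcases mul_eq_zero.mp h with h | h
      · exact absurd h hcne
      · exact h
  -- antiholomorphic sectional vanishing, scaled (x unit)
  have hA : ∀ x z : E, ‖x‖ = 1 → ⟪x, z⟫ = 0 → ⟪J x, z⟫ = 0 → T x z z x = 0 := by
    intro x z hx hxz hJxz
    rcases eq_or_ne z 0 with rfl | hz
    · simp
    · have hnz : ‖z‖ ≠ 0 := norm_ne_zero_iff.mpr hz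
      set c : ℝ := ‖z‖⁻¹ with hc
      have hcne : c ≠ 0 := inv_ne_zero hnz
      have hu1 : ‖c • z‖ = 1 := by
        rw [norm_smul, hc, norm_inv, norm_norm, inv_mul_cancel₀ hnz]
      have hi1 : ⟪x, c • z⟫ = 0 := by rw [real_inner_smul_right, hxz]; ring
      have hi2 : ⟪J x, c • z⟫ = 0 := by rw [real_inner_smul_right, hJxz]; ring
      have h0 := h5 x (c • z) hx hu1 hi1 (Or.inr hi2)
      simp only [map_smul, LinearMap.smul_apply, smul_eq_mul] at h0
      have hcc : c * c ≠ 0 := mul_ne_zero hcne hcne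
      rcases mul_eq_zero.mp h0 with h0' | h0'
      · exact absurd h0' hcne
      · rcases mul_eq_zero.mp h0' with h0'' | h0''
        · exact absurd h0'' hcne
        · exact h0''
  -- key polarization identity (I): for all x z, A1 + A2 = 0
  have hI : ∀ x z : E, T z (J x) (J x) x + T x (J z) (J x) x = 0 := by
    intro x z
    -- polarize the quartic v ↦ T v (J v) (J v) v at t = ±1, ±2
    have e1 := hH (x + z)
    have e2 := hH (x - z)
    have e3 := hH (x + (2:ℝ) • z)
    have e4 := hH (x - (2:ℝ) • z)
    have hTs : ∀ a b c d e : E, T (a - b) c d e = T a c d e - T b c d e := by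
      intro a b c d e; rw [sub_eq_add_neg, ← neg_one_smul ℝ b]
      simp only [map_add, map_smul, LinearMap.add_apply, LinearMap.smul_apply, smul_eq_mul]; ring
    simp only [map_add, map_sub, hTs, map_smul, LinearMap.add_apply, LinearMap.sub_apply,
      LinearMap.smul_apply, smul_eq_mul] at e1 e2 e3 e4
    -- c1 = 0 : T z (Jx) (Jx) x + T x (Jz) (Jx) x + T x (Jx) (Jz) x + T x (Jx) (Jx) z = 0
    have c1 : T z (J x) (J x) x + T x (J z) (J x) x + T x (J x) (J z) x
        + T x (J x) (J x) z = 0 := by linarith [hH x, hH z]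
    -- A4 = A1 via pair symmetry
    have hA4 : T x (J x) (J x) z = T z (J x) (J x) x := by
      have hp := pair x (J x) (J x) z
      have := h1 (J x) z x (J x)
      have := h3 z (J x) x (J x)
      linarith
    -- A3 = A2 via first Bianchi
    have hA3 : T x (J x) (J z) x = T x (J z) (J x) x := by
      have hb := h2 x (J x) (J z) x
      have := hzz (J x) (J z) x
      have := h1 (J z) x (J x) x
      linarith
    linarith
  -- β(w) = T x w (J x) x = 0 for all x w
  have hBeta : ∀ x w : E, T x w (J x) x = 0 := by
    intro x w
    -- from hI with z := -J w : β(w) = T (Jw) (Jx) (Jx) x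
    have hi := hI x (-(J w))
    have hTn : ∀ a c d e : E, T (-a) c d e = -T a c d e := by
      intro a c d e; rw [← neg_one_smul ℝ a]
      simp only [map_smul, LinearMap.smul_apply, smul_eq_mul]; ring
    simp only [map_neg, hTn, LinearMap.neg_apply, hJ2, neg_neg] at hi
    -- hi : -(T (J w) (J x) (J x) x) + T x w (J x) x = 0
    have hbianchi := h2 (J w) (J x) (J x) x
    have hz0 : T (J x) (J x) (J w) x = 0 := hxx (J x) (J w) x
    -- β(w) = T (Jw)(Jx)(Jx) x = - T (Jx)(Jw)(Jx) x
    have h4' := h4 (J x) (J w) (J x) x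
    rw [hJ2, hJ2] at h4'
    simp only [map_neg, hTn, LinearMap.neg_apply] at h4'
    -- h4' : T (Jx)(Jw)(Jx) x = T (-x)(-w)(-x)(Jx) expanded
    have h3' := h3 x w x (J x)
    linarith
  -- sectional vanishing for unit x and arbitrary y
  have hQunit : ∀ x y : E, ‖x‖ = 1 → T x y y x = 0 := by
    intro x y hx
    set b : ℝ := ⟪x, y⟫ with hb
    set a : ℝ := ⟪J x, y⟫ with ha
    set z : E := y - b • x - a • (J x) with hzdef
    have hxx1 : ⟪x, x⟫ = 1 := by rw [real_inner_self_eq_norm_sq, hx]; norm_num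
    have hJxJx : ⟪J x, J x⟫ = 1 := by rw [hJg]; exact hxx1
    have hxz : ⟪x, z⟫ = 0 := by
      simp only [hzdef, inner_sub_right, real_inner_smul_right, hxx1, hJxJ x]
      have : ⟪x, J x⟫ = 0 := hJxJ x
      simp [hb, this]
    have hJxz : ⟪J x, z⟫ = 0 := by
      simp only [hzdef, inner_sub_right, real_inner_smul_right, hJxJx]
      have hJxx : ⟪J x, x⟫ = 0 := by rw [real_inner_comm]; exact hJxJ x
      simp [ha, hJxx]
    have hy : y = b • x + a • (J x) + z := by rw [hzdef]; abel
    have f1 : T x x x x = 0 := hxx x x x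
    have f2 : T x x (J x) x = 0 := hxx x (J x) x
    have f3 : T x x z x = 0 := hxx x z x
    have f4 : T x (J x) x x = 0 := hzz x (J x) x
    have f5 : T x z x x = 0 := hzz x z x
    have f6 : T x (J x) (J x) x = 0 := hH x
    have f7 : T x z z x = 0 := hA x z hx hxz hJxz
    have f8 : T x z (J x) x = 0 := hBeta x z
    have f9 : T x (J x) z x = 0 := by
      have hb2 := h2 x (J x) z x
      have := hzz (J x) z x
      have := h1 z x (J x) x
      linarith
    rw [hy]
    simp only [map_add, map_smul, LinearMap.add_apply, LinearMap.smul_apply, smul_eq_mul]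
    rw [f1, f2, f3, f4, f5, f6, f7, f8, f9]
    ring
  -- sectional vanishing for all x y
  have hQ : ∀ x y : E, T x y y x = 0 := by
    intro x y
    rcases eq_or_ne x 0 with rfl | hx0
    · simp
    · have hnx : ‖x‖ ≠ 0 := norm_ne_zero_iff.mpr hx0
      set c : ℝ := ‖x‖⁻¹ with hc
      have hu1 : ‖c • x‖ = 1 := by
        rw [norm_smul, hc, norm_inv, norm_norm, inv_mul_cancel₀ hnx]
      have h0 := hQunit (c • x) y hu1
      simp only [map_smul, LinearMap.smul_apply, smul_eq_mul] at h0
      have hcne : c ≠ 0 := inv_ne_zero hnx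
      rcases mul_eq_zero.mp h0 with h | h
      · exact absurd h hcne
      · rcases mul_eq_zero.mp h with h' | h'
        · exact absurd h' hcne
        · exact h'
  -- T x y y z = 0 for all x y z
  have hD : ∀ x y z : E, T x y y z = 0 := by
    intro x y z
    have e := hQ (x + z) y
    simp only [map_add, LinearMap.add_apply] at e
    have q1 := hQ x y
    have q2 := hQ z y
    -- T z y y x = T x y y z via pair symmetry + antisymmetries
    have hp := pair z y y x
    have := h1 y x z y
    have := h3 x y z y
    linarith
  -- middle antisymmetry
  have hM : ∀ x y w z : E, T x y w z = - T x w y z := by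
    intro x y w z
    have e := hD x (y + w) z
    simp only [map_add, LinearMap.add_apply] at e
    have := hD x y z
    have := hD x w z
    linarith
  -- conclude
  intro x y z u
  have b := h2 x y z u
  have m1 := hM y z x u
  have m2 := hM z x y u
  have a1 := h1 y x z u
  have a2 := h1 z y x u
  have a3 := h1 x y z u
  linarith
end

section
/- Let E be a real inner product space of dimension 2n with 2n ≥ 4, J a compatible almost complex structure, and R an algebraic curvature tensor on E that is an RK-tensor and has constant antiholomorphic sectional curvature ν. Then for every unit vector x ∈ E, S(x,x) - R(x,Jx,Jx,x) = 2(n-1)ν, where S is the Ricci tensor of R. -/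
open scoped RealInnerProductSpace

/-- For an RK-curvature tensor of constant antiholomorphic sectional curvature ν on a
2n-dimensional space (2n ≥ 4): S(x,x) - R(x,Jx,Jx,x) = 2(n-1)ν for every unit x. -/
theorem stmt_1 {E : Type*} [NormedAddCommGroup E] [InnerProductSpace ℝ E]
    {n : ℕ} (hn : 4 ≤ 2 * n)
    (b : OrthonormalBasis (Fin (2 * n)) ℝ E)
    (J : E →ₗ[ℝ] E)
    (hJ2 : ∀ x : E, J (J x) = -x)
    (hJg : ∀ x y : E, ⟪J x, J y⟫ = ⟪x, y⟫)
    (R : E →ₗ[ℝ] E →ₗ[ℝ] E →ₗ[ℝ] E →ₗ[ℝ] ℝ)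
    (hR1 : ∀ x y z u : E, R x y z u = - R y x z u)
    (hR2 : ∀ x y z u : E, R x y z u = - R x y u z)
    (hRb : ∀ x y z u : E, R x y z u + R y z x u + R z x y u = 0)
    (hRK : ∀ x y z u : E, R x y z u = R (J x) (J y) (J z) (J u))
    (ν : ℝ)
    (hν : ∀ x y : E, ‖x‖ = 1 → ‖y‖ = 1 → ⟪x, y⟫ = 0 → ⟪J x, y⟫ = 0 →
      R x y y x = ν)
    (S : E → E → ℝ)
    (hS : ∀ x y : E, S x y = ∑ i, R (b i) x y (b i)) :
    ∀ x : E, ‖x‖ = 1 → S x x - R x (J x) (J x) x = 2 * ((n : ℝ) - 1) * ν := by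
  intro x hx
  have hfd : FiniteDimensional ℝ E := Module.Finite.of_basis b.toBasis
  have hrank : Module.finrank ℝ E = Fintype.card (Fin (2 * n)) :=
    Module.finrank_eq_card_basis b.toBasis
  -- basic inner product facts
  have hxJx : ⟪x, J x⟫ = 0 := by
    have h1 := hJg x (J x)
    rw [hJ2 x, inner_neg_right, real_inner_comm x (J x)] at h1
    linarith
  have hJxnorm : ‖J x‖ = 1 := by
    have h1 : ⟪J x, J x⟫ = ⟪x, x⟫ := hJg x x
    rw [real_inner_self_eq_norm_sq, real_inner_self_eq_norm_sq, hx] at h1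
    nlinarith [norm_nonneg (J x)]
  -- indices
  set i0 : Fin (2 * n) := ⟨0, by omega⟩ with hi0
  set i1 : Fin (2 * n) := ⟨1, by omega⟩ with hi1
  have hi01 : i0 ≠ i1 := by simp [hi0, hi1, Fin.ext_iff]
  set v : Fin (2 * n) → E := fun i => if i = i0 then x else J x with hv
  have hvi0 : v i0 = x := if_pos rfl
  have hvi1 : v i1 = J x := if_neg (Ne.symm hi01)
  have hJxx : ⟪J x, x⟫ = 0 := by rw [real_inner_comm]; exact hxJx
  have hvo : Orthonormal ℝ (Set.restrict ({i0, i1} : Set (Fin (2 * n))) v) := by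
    constructor
    · rintro ⟨i, hi⟩
      show ‖v i‖ = 1
      rcases hi with h | h
      · rw [h, hvi0]; exact hx
      · rw [Set.mem_singleton_iff] at h; rw [h, hvi1]; exact hJxnorm
    · rintro ⟨i, hi⟩ ⟨j, hj⟩ hij
      have hij' : i ≠ j := by simpa [Subtype.ext_iff] using hij
      show ⟪v i, v j⟫ = 0
      rcases hi with h | h <;> rcases hj with h' | h' <;>
        subst h <;> subst h'
      · exact absurd rfl hij'
      · rw [hvi0, hvi1]; exact hxJx
      · rw [hvi0, hvi1]; exact hJxx
      · exact absurd rfl hij' 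
  obtain ⟨c, hc⟩ := hvo.exists_orthonormalBasis_extension_of_card_eq hrank
  have hc0 : c i0 = x := by simpa [hv] using hc i0 (by simp)
  have hc1 : c i1 = J x := by
    have := hc i1 (by simp)
    simpa [hv, hi01.symm] using this
  -- basis independence of the trace
  have key : ∑ i, R (b i) x x (b i) = ∑ j, R (c j) x x (c j) := by
    have expand : ∀ i, R (b i) x x (b i)
        = ∑ j, ∑ k, ⟪c j, b i⟫ * (⟪c k, b i⟫ * R (c j) x x (c k)) := by
      intro i
      conv_lhs => rw [← c.sum_repr' (b i)]
      simp only [map_sum, map_smul, LinearMap.sum_apply, LinearMap.smul_apply, smul_eq_mul,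
        Finset.mul_sum, Finset.sum_mul]
      rw [Finset.sum_comm]
      exact Finset.sum_congr rfl fun j _ => Finset.sum_congr rfl fun k _ => by ring
    calc ∑ i, R (b i) x x (b i)
        = ∑ i, ∑ j, ∑ k, ⟪c j, b i⟫ * (⟪c k, b i⟫ * R (c j) x x (c k)) :=
          Finset.sum_congr rfl fun i _ => expand i
      _ = ∑ j, ∑ k, (∑ i, ⟪c j, b i⟫ * ⟪c k, b i⟫) * R (c j) x x (c k) := by
          rw [Finset.sum_comm]
          refine Finset.sum_congr rfl fun j _ => ?_
          rw [Finset.sum_comm]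
          refine Finset.sum_congr rfl fun k _ => ?_
          rw [Finset.sum_mul]
          refine Finset.sum_congr rfl fun i _ => ?_
          ring
      _ = ∑ j, ∑ k, ⟪c j, c k⟫ * R (c j) x x (c k) := by
          refine Finset.sum_congr rfl fun j _ => Finset.sum_congr rfl fun k _ => ?_
          congr 1
          have := b.sum_inner_mul_inner (c j) (c k)
          simpa [real_inner_comm] using this
      _ = ∑ j, R (c j) x x (c j) := by
          refine Finset.sum_congr rfl fun j _ => ?_
          rw [Finset.sum_eq_single j]
          · simp [real_inner_self_eq_norm_sq, c.orthonormal.1 j]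
          · intro k _ hk
            have : ⟪c j, c k⟫ = 0 := c.orthonormal.2 (Ne.symm hk)
            simp [this]
          · simp
  -- split the sum over c
  have hsub : ({i0, i1} : Finset (Fin (2 * n))) ⊆ Finset.univ := Finset.subset_univ _
  have hsplit : ∑ j, R (c j) x x (c j)
      = ∑ j ∈ Finset.univ \ {i0, i1}, R (c j) x x (c j)
        + ∑ j ∈ ({i0, i1} : Finset (Fin (2 * n))), R (c j) x x (c j) :=
    (Finset.sum_sdiff hsub).symm
  have hpair : ∑ j ∈ ({i0, i1} : Finset (Fin (2 * n))), R (c j) x x (c j)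
      = R x (J x) (J x) x := by
    rw [Finset.sum_pair hi01, hc0, hc1]
    have h0 : R x x x x = 0 := by have := hR1 x x x x; linarith
    have h1 : R (J x) x x (J x) = R x (J x) (J x) x := by
      rw [hR1 (J x) x x (J x), hR2 x (J x) x (J x)]; ring
    rw [h0, h1]; ring
  have hrest : ∑ j ∈ Finset.univ \ ({i0, i1} : Finset (Fin (2 * n))), R (c j) x x (c j)
      = (2 * n - 2 : ℕ) • ν := by
    rw [Finset.sum_congr rfl (fun j hj => ?_), Finset.sum_const,
      Finset.card_sdiff_of_subset hsub, Finset.card_pair hi01, Finset.card_univ, Fintype.card_fin]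
    have hj' : j ≠ i0 ∧ j ≠ i1 := by
      simp only [Finset.mem_sdiff, Finset.mem_insert, Finset.mem_singleton] at hj
      tauto
    have hx0 : ⟪x, c j⟫ = 0 := by
      rw [← hc0]; exact c.orthonormal.2 (Ne.symm hj'.1)
    have hx1 : ⟪J x, c j⟫ = 0 := by
      rw [← hc1]; exact c.orthonormal.2 (Ne.symm hj'.2)
    have hcj : ‖c j‖ = 1 := c.orthonormal.1 j
    have := hν x (c j) hx hcj hx0 hx1
    rw [hR1 (c j) x x (c j), hR2 x (c j) x (c j)]
    linarith
  have hn' : (2 : ℕ) ≤ 2 * n := by omega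
  rw [hS, key, hsplit, hpair, hrest]
  have : ((2 * n - 2 : ℕ) : ℝ) = 2 * n - 2 := by
    push_cast [Nat.cast_sub hn']; ring
  rw [nsmul_eq_mul, this]
  ring
end

section
/- Let E be a real inner product space of dimension 2n with 2n ≥ 4, J a compatible almost complex structure, and R an algebraic curvature tensor on E that is an RK-tensor and has constant antiholomorphic sectional curvature ν. Then R = (1/6)ψ + ν·R₁ - ((2n-1)/3)·ν·R₂, i.e. R(x,y,z,u) = (1/6)ψ(x,y,z,u) + ν·R₁(x,y,z,u) - ((2n-1)/3)·ν·R₂(x,y,z,u) for all x,y,z,u ∈ E. -/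
open scoped RealInnerProductSpace


section
variable {E : Type*} [NormedAddCommGroup E] [InnerProductSpace ℝ E]

theorem aux_pair_symm (f : E → E → E → E → ℝ)
    (h1 : ∀ x y z u, f x y z u = - f y x z u)
    (h2 : ∀ x y z u, f x y z u = - f x y u z)
    (hb : ∀ x y z u, f x y z u + f y z x u + f z x y u = 0) :
    ∀ x y z u, f x y z u = f z u x y := by
  intro x y z u
  have B1 := hb y z x u
  have B2 := hb z x u y
  have B3 := hb x u y z
  have B4 := hb u y z x
  have e1 := h2 z x u y
  have e2 := h2 x u z y
  have e3 := h1 u z x y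
  have e4 := h2 u y x z
  have e5 := h1 y x u z
  have e6 := h2 x y u z
  have e7 := h2 y z u x
  have e8 := h2 z u y x
  linarith

theorem aux_Jskew (J : E →ₗ[ℝ] E) (hJ2 : ∀ x : E, J (J x) = -x)
    (hJg : ∀ x y : E, ⟪J x, J y⟫ = ⟪x, y⟫) (x y : E) : ⟪J x, y⟫ = - ⟪x, J y⟫ := by
  have h := hJg x (J y)
  rw [hJ2 y] at h
  simp only [inner_neg_right] at h
  linarith

theorem aux_Jself (J : E →ₗ[ℝ] E) (hJ2 : ∀ x : E, J (J x) = -x)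
    (hJg : ∀ x y : E, ⟪J x, J y⟫ = ⟪x, y⟫) (x : E) : ⟪J x, x⟫ = 0 := by
  have h := aux_Jskew J hJ2 hJg x x
  have h2 : ⟪x, J x⟫ = ⟪J x, x⟫ := real_inner_comm (J x) x
  linarith


set_option linter.unusedSectionVars false
set_option maxHeartbeats 1000000

theorem aux_unit_compl {n : ℕ} (hn : 4 ≤ 2 * n) (b : OrthonormalBasis (Fin (2 * n)) ℝ E)
    (x z : E) :
    ∃ y : E, ‖y‖ = 1 ∧ ⟪x, y⟫ = 0 ∧ ⟪z, y⟫ = 0 := by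
  classical
  haveI : FiniteDimensional ℝ E := Module.Finite.of_basis b.toBasis
  have hfr : Module.finrank ℝ E = 2 * n := by
    rw [Module.finrank_eq_card_basis b.toBasis, Fintype.card_fin]
  set K : Submodule ℝ E := Submodule.span ℝ {x, z} with hK
  have hKle : Module.finrank ℝ K ≤ 2 := by
    have h1 : Module.finrank ℝ K ≤ ({x, z} : Finset E).card := by
      have h2 := finrank_span_finset_le_card (R := ℝ) ({x, z} : Finset E)
      have h3 : (({x, z} : Finset E) : Set E) = ({x, z} : Set E) := by simp
      rw [Set.finrank, h3] at h2
      exact h2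
    calc Module.finrank ℝ K ≤ ({x, z} : Finset E).card := h1
      _ ≤ 2 := by
        apply le_trans (Finset.card_insert_le _ _); simp
  have horth : Kᗮ ≠ ⊥ := by
    intro hbot
    have h4 := Submodule.finrank_add_finrank_orthogonal (K := K)
    rw [hbot] at h4
    simp [hfr] at h4
    omega
  obtain ⟨y₀, hy₀K, hy₀⟩ := Submodule.exists_mem_ne_zero_of_ne_bot horth
  refine ⟨‖y₀‖⁻¹ • y₀, norm_smul_inv_norm hy₀, ?_, ?_⟩
  · rw [inner_smul_right]
    have : ⟪x, y₀⟫ = 0 := by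
      have := (Submodule.mem_orthogonal K y₀).mp hy₀K x
        (Submodule.subset_span (by simp))
      simpa [real_inner_comm] using this
    simp [this]
  · rw [inner_smul_right]
    have : ⟪z, y₀⟫ = 0 := by
      have := (Submodule.mem_orthogonal K y₀).mp hy₀K z
        (Submodule.subset_span (by simp))
      simpa [real_inner_comm] using this
    simp [this]

theorem aux_trace4 {n : ℕ} (b : OrthonormalBasis (Fin (2 * n)) ℝ E)
    (U : E →ₗ[ℝ] E →ₗ[ℝ] E →ₗ[ℝ] E →ₗ[ℝ] ℝ)
    (g : Fin 4 → E) (hg : Orthonormal ℝ g) (p q : E)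
    (hv : ∀ w : E, (∀ k, ⟪g k, w⟫ = 0) → U w p q w = 0) :
    ∑ i, U (b i) p q (b i) = ∑ k, U (g k) p q (g k) := by
  classical
  have hgij := orthonormal_iff_ite.mp hg
  set v : Fin (2 * n) → E := fun i => b i - ∑ k, ⟪g k, b i⟫ • g k with hvdef
  have horth : ∀ i k, ⟪g k, v i⟫ = 0 := by
    intro i k
    simp only [hvdef, inner_sub_right, inner_sum, inner_smul_right]
    rw [Finset.sum_eq_single k]
    · simp [hgij, hg.1 k]
    · intro j _ hj
      simp [hgij, (Ne.symm hj)]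
    · simp
  have hexp : ∀ i, b i = v i + ∑ k, ⟪g k, b i⟫ • g k := by
    intro i; simp [hvdef]
  have e1 : ∀ k, ∑ i, ⟪g k, b i⟫ • b i = g k := by
    intro k
    calc ∑ i, ⟪g k, b i⟫ • b i = ∑ i, ⟪b i, g k⟫ • b i :=
          Finset.sum_congr rfl fun i _ => by rw [real_inner_comm]
      _ = g k := b.sum_repr' (g k)
  have e2 : ∀ k j, ∑ i, ⟪g k, b i⟫ * ⟪g j, b i⟫ = if k = j then (1:ℝ) else 0 := by
    intro k j
    calc ∑ i, ⟪g k, b i⟫ * ⟪g j, b i⟫ = ∑ i, ⟪g k, b i⟫ * ⟪b i, g j⟫ :=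
          Finset.sum_congr rfl fun i _ => by rw [real_inner_comm (g j) (b i)]
      _ = ⟪g k, g j⟫ := b.sum_inner_mul_inner _ _
      _ = _ := hgij k j
  have hvsum : ∀ k, ∑ i, ⟪g k, b i⟫ • v i = 0 := by
    intro k
    have step : ∑ i, ⟪g k, b i⟫ • v i
        = (∑ i, ⟪g k, b i⟫ • b i) - ∑ i, ∑ j, (⟪g k, b i⟫ * ⟪g j, b i⟫) • g j := by
      rw [← Finset.sum_sub_distrib]
      refine Finset.sum_congr rfl fun i _ => ?_
      rw [hvdef]
      simp only [smul_sub, Finset.smul_sum, smul_smul]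
    rw [step, e1, Finset.sum_comm]
    have : ∀ j, ∑ i, (⟪g k, b i⟫ * ⟪g j, b i⟫) • g j = (if k = j then (1:ℝ) else 0) • g j := by
      intro j
      rw [← Finset.sum_smul, e2]
    rw [Finset.sum_congr rfl fun j _ => this j]
    simp
  -- linearity helpers
  have hlin1 : ∀ (c : Fin (2 * n) → ℝ) (w : Fin (2 * n) → E) (C : E),
      ∑ i, c i * U (w i) p q C = U (∑ i, c i • w i) p q C := by
    intro c w C
    simp [map_sum, LinearMap.sum_apply, map_smul, LinearMap.smul_apply, smul_eq_mul]
  have hlin4 : ∀ (c : Fin (2 * n) → ℝ) (w : Fin (2 * n) → E) (C : E),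
      ∑ i, c i * U C p q (w i) = U C p q (∑ i, c i • w i) := by
    intro c w C
    simp [map_sum, map_smul, smul_eq_mul]
  have hadd4 : ∀ (A B C : E), U A p q (B + C) = U A p q B + U A p q C := by
    intro A B C; simp
  have hadd1 : ∀ (A B C : E), U (A + B) p q C = U A p q C + U B p q C := by
    intro A B C; simp [map_add, LinearMap.add_apply]
  have hsum1 : ∀ (C : E) i, U (∑ k, ⟪g k, b i⟫ • g k) p q C
      = ∑ k, ⟪g k, b i⟫ * U (g k) p q C := by
    intro C i
    simp [map_sum, LinearMap.sum_apply, map_smul, LinearMap.smul_apply, smul_eq_mul]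
  have hsum4 : ∀ (C : E) i, U C p q (∑ k, ⟪g k, b i⟫ • g k)
      = ∑ k, ⟪g k, b i⟫ * U C p q (g k) := by
    intro C i
    simp [map_sum, map_smul, smul_eq_mul]
  have hsplit : ∀ i, U (b i) p q (b i)
      = U (v i) p q (v i)
        + (∑ k, ⟪g k, b i⟫ * U (v i) p q (g k))
        + (∑ k, ⟪g k, b i⟫ * U (g k) p q (v i))
        + ∑ k, ⟪g k, b i⟫ * ∑ l, ⟪g l, b i⟫ * U (g k) p q (g l) := by
    intro i
    conv_lhs => rw [hexp i]
    rw [hadd1 (v i) (∑ k, ⟪g k, b i⟫ • g k) (v i + ∑ k, ⟪g k, b i⟫ • g k)]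
    rw [hadd4 (v i) (v i) (∑ k, ⟪g k, b i⟫ • g k), hsum4 (v i) i]
    rw [hsum1 (v i + ∑ k, ⟪g k, b i⟫ • g k) i]
    have : ∀ k, ⟪g k, b i⟫ * U (g k) p q (v i + ∑ l, ⟪g l, b i⟫ • g l)
        = ⟪g k, b i⟫ * U (g k) p q (v i) + ⟪g k, b i⟫ * ∑ l, ⟪g l, b i⟫ * U (g k) p q (g l) := by
      intro k
      rw [hadd4, hsum4]; ring
    rw [Finset.sum_congr rfl fun k _ => this k, Finset.sum_add_distrib]
    ring
  calc ∑ i, U (b i) p q (b i)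
      = ∑ i, (U (v i) p q (v i)
        + (∑ k, ⟪g k, b i⟫ * U (v i) p q (g k))
        + (∑ k, ⟪g k, b i⟫ * U (g k) p q (v i))
        + ∑ k, ⟪g k, b i⟫ * ∑ l, ⟪g l, b i⟫ * U (g k) p q (g l)) :=
        Finset.sum_congr rfl fun i _ => hsplit i
    _ = (∑ i, U (v i) p q (v i))
        + (∑ i, ∑ k, ⟪g k, b i⟫ * U (v i) p q (g k))
        + (∑ i, ∑ k, ⟪g k, b i⟫ * U (g k) p q (v i))
        + ∑ i, ∑ k, ⟪g k, b i⟫ * ∑ l, ⟪g l, b i⟫ * U (g k) p q (g l) := by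
        simp [Finset.sum_add_distrib]
    _ = ∑ k, U (g k) p q (g k) := by
        have t1 : ∑ i, U (v i) p q (v i) = 0 := by
          refine Finset.sum_eq_zero fun i _ => hv (v i) (horth i)
        have t2 : ∑ i, ∑ k, ⟪g k, b i⟫ * U (v i) p q (g k) = 0 := by
          rw [Finset.sum_comm]
          refine Finset.sum_eq_zero fun k _ => ?_
          rw [hlin1 (fun i => ⟪g k, b i⟫) v (g k), hvsum k]
          simp
        have t3 : ∑ i, ∑ k, ⟪g k, b i⟫ * U (g k) p q (v i) = 0 := by
          rw [Finset.sum_comm]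
          refine Finset.sum_eq_zero fun k _ => ?_
          rw [hlin4 (fun i => ⟪g k, b i⟫) v (g k), hvsum k]
          simp
        have t4 : ∑ i, ∑ k, ⟪g k, b i⟫ * ∑ l, ⟪g l, b i⟫ * U (g k) p q (g l)
            = ∑ k, U (g k) p q (g k) := by
          rw [Finset.sum_comm]
          refine Finset.sum_congr rfl fun k _ => ?_
          have : ∀ i, ⟪g k, b i⟫ * ∑ l, ⟪g l, b i⟫ * U (g k) p q (g l)
              = ∑ l, (⟪g k, b i⟫ * ⟪g l, b i⟫) * U (g k) p q (g l) := by
            intro i; rw [Finset.mul_sum]; exact Finset.sum_congr rfl fun l _ => by ring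
          rw [Finset.sum_congr rfl fun i _ => this i, Finset.sum_comm]
          have : ∀ l, ∑ i, (⟪g k, b i⟫ * ⟪g l, b i⟫) * U (g k) p q (g l)
              = (if k = l then (1:ℝ) else 0) * U (g k) p q (g l) := by
            intro l; rw [← Finset.sum_mul, e2]
          rw [Finset.sum_congr rfl fun l _ => this l]
          simp
        rw [t1, t2, t3, t4]; ring
theorem aux_frame (J : E →ₗ[ℝ] E) (hJ2 : ∀ x : E, J (J x) = -x)
    (hJg : ∀ x y : E, ⟪J x, J y⟫ = ⟪x, y⟫) (x y : E)
    (hxx : ⟪x, x⟫ = 1) (hyy : ⟪y, y⟫ = 1) (hxy : ⟪x, y⟫ = 0) (hJxy : ⟪J x, y⟫ = 0) :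
    Orthonormal ℝ ![x, J x, y, J y] := by
  have Jskew := aux_Jskew J hJ2 hJg
  have Jself := aux_Jself J hJ2 hJg
  have h1 : ⟪x, J x⟫ = 0 := by rw [real_inner_comm]; exact Jself x
  have h2 : ⟪J x, x⟫ = 0 := Jself x
  have h3 : ⟪J x, J x⟫ = 1 := by rw [hJg]; exact hxx
  have h4 : ⟪J y, J y⟫ = 1 := by rw [hJg]; exact hyy
  have h5 : ⟪y, J y⟫ = 0 := by rw [real_inner_comm]; exact Jself y
  have h6 : ⟪J y, y⟫ = 0 := Jself y
  have h7 : ⟪y, x⟫ = 0 := by rw [real_inner_comm]; exact hxy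
  have h8 : ⟪x, J y⟫ = 0 := by have := Jskew x y; linarith
  have h9 : ⟪J y, x⟫ = 0 := by rw [real_inner_comm]; exact h8
  have h10 : ⟪y, J x⟫ = 0 := by rw [real_inner_comm]; exact hJxy
  have h11 : ⟪J x, J y⟫ = 0 := by rw [hJg]; exact hxy
  have h12 : ⟪J y, J x⟫ = 0 := by rw [real_inner_comm]; exact h11
  rw [orthonormal_iff_ite]
  intro i j
  fin_cases i <;> fin_cases j <;>
    simp [hxx, hyy, hxy, hJxy, h1, h2, h3, h4, h5, h6, h7, h8, h9, h10, h11, h12,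
        (show ‖x‖ ^ 2 = 1 by rw [← real_inner_self_eq_norm_sq]; exact hxx),
        (show ‖J x‖ ^ 2 = 1 by rw [← real_inner_self_eq_norm_sq]; exact h3),
        (show ‖y‖ ^ 2 = 1 by rw [← real_inner_self_eq_norm_sq]; exact hyy),
        (show ‖J y‖ ^ 2 = 1 by rw [← real_inner_self_eq_norm_sq]; exact h4)]

theorem aux_main {n : ℕ} (hn : 4 ≤ 2 * n) (b : OrthonormalBasis (Fin (2 * n)) ℝ E)
    (J : E →ₗ[ℝ] E) (hJ2 : ∀ x : E, J (J x) = -x)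
    (hJg : ∀ x y : E, ⟪J x, J y⟫ = ⟪x, y⟫)
    (U : E →ₗ[ℝ] E →ₗ[ℝ] E →ₗ[ℝ] E →ₗ[ℝ] ℝ)
    (hA : ∀ x y z u : E, U x y z u = - U y x z u)
    (hB : ∀ x y z u : E, U x y z u = - U x y u z)
    (hBi : ∀ x y z u : E, U x y z u + U y z x u + U z x y u = 0)
    (hK : ∀ x y z u : E, U x y z u = U (J x) (J y) (J z) (J u))
    (h0 : ∀ x y : E, ⟪x, y⟫ = 0 → ⟪J x, y⟫ = 0 → U x y y x = 0)
    (hRic : ∀ p q : E, ∑ i, U (b i) p q (b i) = 0) :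
    ∀ x y z u : E, U x y z u = 0 := by
  have Jskew : ∀ x y : E, ⟪J x, y⟫ = - ⟪x, J y⟫ := aux_Jskew J hJ2 hJg
  have Jself : ∀ x : E, ⟪J x, x⟫ = 0 := aux_Jself J hJ2 hJg
  have comm : ∀ u v : E, ⟪u, v⟫ = ⟪v, u⟫ := fun u v => real_inner_comm v u
  have Jself' : ∀ x : E, ⟪x, J x⟫ = 0 := fun x => by rw [comm]; exact Jself x
  have rot : ∀ u v : E, ⟪u, v⟫ = 0 → ⟪J u, v⟫ = 0 →
      ⟪v, u⟫ = 0 ∧ ⟪v, J u⟫ = 0 ∧ ⟪u, J v⟫ = 0 ∧ ⟪J v, u⟫ = 0 ∧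
      ⟪J u, J v⟫ = 0 ∧ ⟪J v, J u⟫ = 0 := by
    intro u v h1 h2
    have a1 : ⟪v, u⟫ = 0 := by rw [comm]; exact h1
    have a2 : ⟪v, J u⟫ = 0 := by rw [comm]; exact h2
    have a3 : ⟪u, J v⟫ = 0 := by have := Jskew u v; linarith
    have a4 : ⟪J v, u⟫ = 0 := by rw [comm]; exact a3
    have a5 : ⟪J u, J v⟫ = 0 := by rw [hJg]; exact h1
    have a6 : ⟪J v, J u⟫ = 0 := by rw [comm]; exact a5
    exact ⟨a1, a2, a3, a4, a5, a6⟩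
  have pair : ∀ x y z u : E, U x y z u = U z u x y :=
    aux_pair_symm (fun x y z u => U x y z u) hA hB hBi
  have diag12 : ∀ x z u : E, U x x z u = 0 := fun x z u => by have := hA x x z u; linarith
  have diag34 : ∀ x y z : E, U x y z z = 0 := fun x y z => by have := hB x y z z; linarith
  have midsym : ∀ x p q : E, U x p q x = U x q p x := by
    intro x p q
    calc U x p q x = - U p x q x := hA x p q x
      _ = U p x x q := by rw [hB p x q x]; ring
      _ = U x q p x := pair p x x q
  have Z1 : ∀ x p q : E, ⟪x, p⟫ = 0 → ⟪J x, p⟫ = 0 → ⟪x, q⟫ = 0 → ⟪J x, q⟫ = 0 →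
      U x p q x = 0 := by
    intro x p q hp hJp hq hJq
    have hpq := h0 x (p + q) (by rw [inner_add_right, hp, hq]; ring)
      (by rw [inner_add_right, hJp, hJq]; ring)
    have hp0 := h0 x p hp hJp
    have hq0 := h0 x q hq hJq
    have hexp : U x (p + q) (p + q) x
        = U x p p x + U x p q x + U x q p x + U x q q x := by
      simp [map_add, LinearMap.add_apply]; ring
    have hm := midsym x p q
    rw [hexp] at hpq
    linarith
  -- W ≡ 0  (uses the trace / vanishing Ricci)
  have W0 : ∀ x : E, U x (J x) (J x) x = 0 := by
    intro x
    rcases eq_or_ne x 0 with h | h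
    · simp [h]
    · set e : E := ‖x‖⁻¹ • x with he
      have he1 : ‖e‖ = 1 := norm_smul_inv_norm h
      obtain ⟨y, hy1, hey, hJey⟩ := aux_unit_compl hn b e (J e)
      obtain ⟨r1, r2, r3, r4, r5, r6⟩ := rot e y hey hJey
      have hee : ⟪e, e⟫ = 1 := by
        rw [real_inner_self_eq_norm_sq, he1]; norm_num
      have hyy : ⟪y, y⟫ = 1 := by
        rw [real_inner_self_eq_norm_sq, hy1]; norm_num
      set g : Fin 4 → E := ![e, J e, y, J y] with hgdef
      have hg : Orthonormal ℝ g := aux_frame J hJ2 hJg e y hee hyy hey hJey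
      have hv : ∀ w : E, (∀ k, ⟪g k, w⟫ = 0) → U w e e w = 0 := by
        intro w hw
        have hw0 : ⟪e, w⟫ = 0 := by simpa [hgdef] using hw 0
        have hw1 : ⟪J e, w⟫ = 0 := by simpa [hgdef] using hw 1
        obtain ⟨s1, s2, s3, s4, s5, s6⟩ := rot e w hw0 hw1
        exact h0 w e s1 s4
      have ht := aux_trace4 b U g hg e e hv
      rw [hRic e e] at ht
      have hsum : (0:ℝ) = U e e e e + U (J e) e e (J e) + U y e e y + U (J y) e e (J y) := by
        rw [ht, Fin.sum_univ_four]
        simp [hgdef]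
      have hy0 : U y e e y = 0 := h0 y e r1 r4
      have hJy0 : U (J y) e e (J y) = 0 := by
        refine h0 (J y) e r4 ?_
        rw [hJ2 y, inner_neg_left, r1]; ring
      have hJe : U (J e) e e (J e) = 0 := by
        have hd := diag12 e e e
        linarith
      have hUe : U e (J e) (J e) e = 0 := by
        have hk := hK e (J e) (J e) e
        rw [hJ2 e] at hk
        simp only [map_neg, LinearMap.neg_apply, neg_neg] at hk
        rw [hk]; exact hJe
      have hxe : x = ‖x‖ • e := by
        rw [he, smul_smul, mul_inv_cancel₀ (norm_ne_zero_iff.mpr h), one_smul]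
      rw [hxe]
      simp [map_smul, LinearMap.smul_apply, smul_eq_mul, hUe]
  -- TR1
  have TR1 : ∀ x y : E, ⟪x, x⟫ = 1 → ⟪y, y⟫ = 1 → ⟪x, y⟫ = 0 → ⟪J x, y⟫ = 0 →
      U x (J x) y x = U y (J y) x y := by
    intro x y hxx hyy hxy hJxy
    obtain ⟨r1, r2, r3, r4, r5, r6⟩ := rot x y hxy hJxy
    set g : Fin 4 → E := ![x, J x, y, J y] with hgdef
    have hg : Orthonormal ℝ g := aux_frame J hJ2 hJg x y hxx hyy hxy hJxy
    have hv : ∀ w : E, (∀ k, ⟪g k, w⟫ = 0) → U w (J x) y w = 0 := by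
      intro w hw
      have hw0 : ⟪x, w⟫ = 0 := by simpa [hgdef] using hw 0
      have hw1 : ⟪J x, w⟫ = 0 := by simpa [hgdef] using hw 1
      have hw2 : ⟪y, w⟫ = 0 := by simpa [hgdef] using hw 2
      have hw3 : ⟪J y, w⟫ = 0 := by simpa [hgdef] using hw 3
      obtain ⟨s1, s2, s3, s4, s5, s6⟩ := rot x w hw0 hw1
      obtain ⟨t1, t2, t3, t4, t5, t6⟩ := rot y w hw2 hw3
      refine Z1 w (J x) y s2 ?_ t1 t4
      rw [hJg, comm]; exact hw0
    have ht := aux_trace4 b U g hg (J x) y hv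
    rw [hRic (J x) y] at ht
    have hsum : (0:ℝ) = U x (J x) y x + U (J x) (J x) y (J x)
        + U y (J x) y y + U (J y) (J x) y (J y) := by
      rw [ht, Fin.sum_univ_four]
      simp [hgdef]
    have d1 := diag12 (J x) y (J x)
    have d2 := diag34 y (J x) y
    have hlast : U (J y) (J x) y (J y) = - U y (J y) x y := by
      have hm := midsym (J y) (J x) y
      have hk := hK y (J y) x y
      rw [hJ2 y] at hk
      simp only [map_neg, LinearMap.neg_apply] at hk
      -- hk : U y (J y) x y = - U (J y) y (J x) (J y)
      rw [hm]
      linarith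
    linarith
  -- star1 : ‖x‖² U x y y x = 2 ⟪Jx,y⟫ U x (Jx) y x
  have star1 : ∀ x y : E, ‖x‖ ^ 2 * U x y y x = 2 * ⟪J x, y⟫ * U x (J x) y x := by
    intro x y
    rcases eq_or_ne x 0 with h | h
    · simp [h]
    · have hxx : ⟪x, x⟫ = ‖x‖ ^ 2 := real_inner_self_eq_norm_sq x
      have hJxJx : ⟪J x, J x⟫ = ‖x‖ ^ 2 := by rw [hJg]; exact hxx
      have hJxx : ⟪J x, x⟫ = 0 := Jself x
      have hxJx : ⟪x, J x⟫ = 0 := Jself' x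
      have h1 : ⟪x, ((‖x‖ ^ 2 : ℝ) • y - ⟪J x, y⟫ • J x - ⟪x, y⟫ • x)⟫ = 0 := by
        rw [inner_sub_right, inner_sub_right, inner_smul_right, inner_smul_right,
          inner_smul_right, hxJx, hxx]
        ring
      have h2 : ⟪J x, ((‖x‖ ^ 2 : ℝ) • y - ⟪J x, y⟫ • J x - ⟪x, y⟫ • x)⟫ = 0 := by
        rw [inner_sub_right, inner_sub_right, inner_smul_right, inner_smul_right,
          inner_smul_right, hJxJx, hJxx]
        ring
      have hz := h0 x _ h1 h2
      simp only [map_sub, map_smul, LinearMap.sub_apply, LinearMap.smul_apply,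
        smul_eq_mul] at hz
      rw [diag34 x y x, diag34 x (J x) x, diag12 x (J x) x, diag12 x y x,
        diag12 x x x, midsym x y (J x), W0 x] at hz
      have hne : (‖x‖ ^ 2 : ℝ) ≠ 0 := pow_ne_zero 2 (norm_ne_zero_iff.mpr h)
      apply mul_left_cancel₀ hne
      linear_combination hz
  have star2 : ∀ x y : E, ‖y‖ ^ 2 * U x y y x = - (2 * ⟪J x, y⟫ * U y (J y) x y) := by
    intro x y
    have hs := star1 y x
    have hp : U y x x y = U x y y x := pair y x x y
    have hsk : ⟪J y, x⟫ = - ⟪J x, y⟫ := by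
      have h1 := Jskew y x
      have h2 : ⟪y, J x⟫ = ⟪J x, y⟫ := comm y (J x)
      linarith
    rw [hp, hsk] at hs
    linarith
  have star4 : ∀ x y : E,
      ⟪J x, y⟫ * (‖y‖ ^ 2 * U x (J x) y x + ‖x‖ ^ 2 * U y (J y) x y) = 0 := by
    intro x y
    have h1 := star1 x y
    have h2 := star2 x y
    linear_combination -(‖y‖ ^ 2 / 2) * h1 + (‖x‖ ^ 2 / 2) * h2
  -- star5
  have star5 : ∀ x y : E, ‖y‖ ^ 2 * U x (J x) y x + ‖x‖ ^ 2 * U y (J y) x y = 0 := by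
    intro x y
    rcases eq_or_ne x 0 with h | h
    · simp [h]
    · have hxx : ⟪x, x⟫ = ‖x‖ ^ 2 := real_inner_self_eq_norm_sq x
      have hJxJx : ⟪J x, J x⟫ = ‖x‖ ^ 2 := by rw [hJg]; exact hxx
      have hnormJx : ‖J x‖ ^ 2 = ‖x‖ ^ 2 := by
        rw [← real_inner_self_eq_norm_sq, hJg, real_inner_self_eq_norm_sq]
      have hW' : U (J x) x x (J x) = 0 := by
        have hk := hK (J x) x x (J x)
        rw [hJ2 x] at hk
        simp only [map_neg, LinearMap.neg_apply, neg_neg] at hk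
        rw [hk, ← neg_one_smul ℝ x, map_smul]; simp [W0 x]
      have hkey : ∀ t : ℝ,
          (⟪J x, y⟫ + t * ‖x‖ ^ 2) *
            ((‖y‖ ^ 2 + 2 * (t * ⟪J x, y⟫) + t ^ 2 * ‖x‖ ^ 2) * U x (J x) y x
            + ‖x‖ ^ 2 * (U y (J y) x y
                + t * (- U y x x y + U (J x) (J y) x y + U y (J y) x (J x))
                + t ^ 2 * (- U (J x) x x y - U y x x (J x) + U (J x) (J y) x (J x)))) = 0 := by
        intro t
        have h4 := star4 x (y + t • J x)
        have e1 : ⟪J x, y + t • J x⟫ = ⟪J x, y⟫ + t * ‖x‖ ^ 2 := by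
          rw [inner_add_right, inner_smul_right, hJxJx]
        have e2 : ‖y + t • J x‖ ^ 2 = ‖y‖ ^ 2 + 2 * (t * ⟪J x, y⟫) + t ^ 2 * ‖x‖ ^ 2 := by
          have hsm : ‖t • J x‖ ^ 2 = t ^ 2 * ‖x‖ ^ 2 := by
            rw [norm_smul, mul_pow, Real.norm_eq_abs, sq_abs, hnormJx]
          rw [norm_add_sq_real, hsm, inner_smul_right]
          all_goals rw [comm y (J x)]
          all_goals ring
        have e3 : U x (J x) (y + t • J x) x = U x (J x) y x := by
          simp only [map_add, map_smul, LinearMap.add_apply, LinearMap.smul_apply,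
            smul_eq_mul]
          rw [W0 x]; ring
        have e4 : J (y + t • J x) = J y - t • x := by
          rw [map_add, map_smul, hJ2]
          module
        have e5 : U (y + t • J x) (J (y + t • J x)) x (y + t • J x)
            = U y (J y) x y
              + t * (- U y x x y + U (J x) (J y) x y + U y (J y) x (J x))
              + t ^ 2 * (- U (J x) x x y - U y x x (J x) + U (J x) (J y) x (J x))
              + t ^ 3 * (- U (J x) x x (J x)) := by
          rw [e4]
          simp only [map_add, map_sub, map_smul, LinearMap.add_apply, LinearMap.sub_apply,
            LinearMap.smul_apply, smul_eq_mul]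
          ring
        rw [e1, e2, e3, e5, hW'] at h4
        linear_combination h4
      set a := ⟪J x, y⟫ with hadef
      set N := ‖x‖ ^ 2 with hNdef
      set c := U x (J x) y x with hcdef
      set C0 := U y (J y) x y with hC0
      set C1 := - U y x x y + U (J x) (J y) x y + U y (J y) x (J x) with hC1
      set C2 := - U (J x) x x y - U y x x (J x) + U (J x) (J y) x (J x) with hC2
      have hNne : N ≠ 0 := pow_ne_zero 2 (norm_ne_zero_iff.mpr h)
      have E1 := hkey 1
      have Em1 := hkey (-1)
      have E2 := hkey 2
      have Em2 := hkey (-2)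
      have hb2 : N * c + N * C2 = 0 := by
        have hp3 : N * (N * c + N * C2) = 0 := by
          linear_combination (-1/6 : ℝ) * E1 + (1/6 : ℝ) * Em1 + (1/12 : ℝ) * E2
            + (-1/12 : ℝ) * Em2
        rcases mul_eq_zero.mp hp3 with h' | h'
        exacts [absurd h' hNne, h']
      have hb1 : 2 * a * c + N * C1 = 0 := by
        have hp2 : N * (2 * a * c + N * C1) = 0 := by
          linear_combination (-1/6 : ℝ) * E1 + (-1/6 : ℝ) * Em1 + (1/6 : ℝ) * E2
            + (1/6 : ℝ) * Em2 - a * hb2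
        rcases mul_eq_zero.mp hp2 with h' | h'
        exacts [absurd h' hNne, h']
      have hp1 : N * (‖y‖ ^ 2 * c + N * C0) = 0 := by
        linear_combination (1/2 : ℝ) * E1 + (-1/2 : ℝ) * Em1 - a * hb1 - N * hb2
      rcases mul_eq_zero.mp hp1 with h' | h'
      exacts [absurd h' hNne, h']
  -- c ≡ 0
  have czero : ∀ x y : E, U x (J x) y x = 0 := by
    intro x y
    rcases eq_or_ne x 0 with h | h
    · simp [h]
    · set e : E := ‖x‖⁻¹ • x with he
      have he1 : ‖e‖ = 1 := norm_smul_inv_norm h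
      have hee : ⟪e, e⟫ = 1 := by rw [real_inner_self_eq_norm_sq, he1]; norm_num
      clear_value e
      have heJe : ⟪e, J e⟫ = 0 := Jself' e
      have hJee : ⟪J e, e⟫ = 0 := Jself e
      have hJeJe : ⟪J e, J e⟫ = 1 := by rw [hJg]; exact hee
      have hmain : ∀ z : E, U e (J e) z e = 0 := by
        intro z
        set z' := z - ⟪e, z⟫ • e - ⟪J e, z⟫ • (J e) with hz'
        have hdec : z = ⟪e, z⟫ • e + ⟪J e, z⟫ • (J e) + z' := by
          rw [hz']; abel
        have h1 : ⟪e, z'⟫ = 0 := by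
          rw [hz', inner_sub_right, inner_sub_right, inner_smul_right, inner_smul_right,
            hee, heJe]
          ring
        have h2 : ⟪J e, z'⟫ = 0 := by
          rw [hz', inner_sub_right, inner_sub_right, inner_smul_right, inner_smul_right,
            hJee, hJeJe]
          ring
        have hcz' : U e (J e) z' e = 0 := by
          rcases eq_or_ne z' 0 with hz0 | hz0
          · rw [hz0]; simp
          · set w : E := ‖z'‖⁻¹ • z' with hw
            have hw1 : ‖w‖ = 1 := norm_smul_inv_norm hz0
            have hww : ⟪w, w⟫ = 1 := by rw [real_inner_self_eq_norm_sq, hw1]; norm_num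
            have hew : ⟪e, w⟫ = 0 := by rw [hw, inner_smul_right, h1]; ring
            have hJew : ⟪J e, w⟫ = 0 := by rw [hw, inner_smul_right, h2]; ring
            have htr := TR1 e w hee hww hew hJew
            have hst := star5 e w
            rw [he1, hw1] at hst
            norm_num at hst
            have hzero : U e (J e) w e = 0 := by linarith
            have hzw : z' = ‖z'‖ • w := by
              rw [hw, smul_smul, mul_inv_cancel₀ (norm_ne_zero_iff.mpr hz0), one_smul]
            rw [hzw]
            simp [map_smul, LinearMap.smul_apply, smul_eq_mul, hzero]
        conv_lhs => rw [hdec]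
        simp only [map_add, map_smul, LinearMap.add_apply, LinearMap.smul_apply,
          smul_eq_mul]
        rw [diag34 e (J e) e, W0 e, hcz']
        ring
      have hxe : x = ‖x‖ • e := by
        rw [he, smul_smul, mul_inv_cancel₀ (norm_ne_zero_iff.mpr h), one_smul]
      rw [hxe]
      simp [map_smul, LinearMap.smul_apply, smul_eq_mul, hmain y]
  -- biquadratic vanishes
  have Q0 : ∀ x y : E, U x y y x = 0 := by
    intro x y
    rcases eq_or_ne x 0 with h | h
    · simp [h]
    · have h1 := star1 x y
      rw [czero x y] at h1
      have hne : (‖x‖ ^ 2 : ℝ) ≠ 0 := pow_ne_zero 2 (norm_ne_zero_iff.mpr h)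
      have h2 : ‖x‖ ^ 2 * U x y y x = 0 := by linear_combination h1
      rcases mul_eq_zero.mp h2 with h' | h'
      exacts [absurd h' hne, h']
  -- polarization
  have step1 : ∀ x y w : E, U x y y w = 0 := by
    intro x y w
    have hq := Q0 (x + w) y
    have hexp : U (x + w) y y (x + w)
        = U x y y x + U x y y w + U w y y x + U w y y w := by
      simp [map_add, LinearMap.add_apply]; ring
    rw [hexp, Q0 x y, Q0 w y] at hq
    have hsym : U w y y x = U x y y w := by
      have e1 := pair w y y x
      have e2 := hA y x w y
      have e3 := hB x y w y
      linarith
    linarith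
  have step2 : ∀ x y z w : E, U x y z w = - U x z y w := by
    intro x y z w
    have h1 := step1 x (y + z) w
    have hexp : U x (y + z) (y + z) w
        = U x y y w + U x y z w + U x z y w + U x z z w := by
      simp [map_add, LinearMap.add_apply]; ring
    rw [hexp, step1 x y w, step1 x z w] at h1
    linarith
  intro x y z u
  have h1 := hBi x y z u
  have h2 : U y z x u = U x y z u := by
    have e1 := step2 y z x u
    have e2 := hA x y z u
    linarith
  have h3 : U z x y u = U x y z u := by
    have e1 := hA z x y u
    have e2 := step2 x z y u
    linarith
  linarith

noncomputable def auxT {n : ℕ} (b : OrthonormalBasis (Fin (2 * n)) ℝ E)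
    (R : E →ₗ[ℝ] E →ₗ[ℝ] E →ₗ[ℝ] E →ₗ[ℝ] ℝ) (μ : ℝ) : E →ₗ[ℝ] E →ₗ[ℝ] ℝ :=
  LinearMap.mk₂ ℝ (fun p q => (∑ i, R (b i) p q (b i)) - μ * ⟪p, q⟫)
    (fun m₁ m₂ q => by
      simp only [map_add, LinearMap.add_apply, inner_add_left, Finset.sum_add_distrib]
      ring)
    (fun c m q => by
      simp only [map_smul, LinearMap.smul_apply, real_inner_smul_left, smul_eq_mul,
        ← Finset.mul_sum]
      ring)
    (fun p n₁ n₂ => by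
      simp only [map_add, LinearMap.add_apply, inner_add_right, Finset.sum_add_distrib]
      ring)
    (fun c p q => by
      simp only [map_smul, LinearMap.smul_apply, real_inner_smul_right, smul_eq_mul,
        ← Finset.mul_sum]
      ring)

theorem auxT_apply {n : ℕ} (b : OrthonormalBasis (Fin (2 * n)) ℝ E)
    (R : E →ₗ[ℝ] E →ₗ[ℝ] E →ₗ[ℝ] E →ₗ[ℝ] ℝ) (μ : ℝ) (p q : E) :
    auxT b R μ p q = (∑ i, R (b i) p q (b i)) - μ * ⟪p, q⟫ := rfl

noncomputable def auxU (J : E →ₗ[ℝ] E) (R : E →ₗ[ℝ] E →ₗ[ℝ] E →ₗ[ℝ] E →ₗ[ℝ] ℝ)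
    (T : E →ₗ[ℝ] E →ₗ[ℝ] ℝ) (ν : ℝ) : E →ₗ[ℝ] E →ₗ[ℝ] E →ₗ[ℝ] E →ₗ[ℝ] ℝ :=
  LinearMap.mk₂ ℝ (fun x y => LinearMap.mk₂ ℝ (fun z u =>
      R x y z u - ν * (⟪y, z⟫ * ⟪x, u⟫ - ⟪x, z⟫ * ⟪y, u⟫)
        - (1/6) * (⟪J y, z⟫ * T (J x) u - ⟪J x, z⟫ * T (J y) u
            - 2 * ⟪J x, y⟫ * T (J z) u + ⟪J x, u⟫ * T (J y) z
            - ⟪J y, u⟫ * T (J x) z - 2 * ⟪J z, u⟫ * T (J x) y))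
    (fun z₁ z₂ u => by
      simp only [map_add, LinearMap.add_apply, inner_add_left, inner_add_right]
      ring)
    (fun c z u => by
      simp only [map_smul, LinearMap.smul_apply, real_inner_smul_left,
        real_inner_smul_right, smul_eq_mul]
      ring)
    (fun z u₁ u₂ => by
      simp only [map_add, LinearMap.add_apply, inner_add_left, inner_add_right]
      ring)
    (fun c z u => by
      simp only [map_smul, LinearMap.smul_apply, real_inner_smul_left,
        real_inner_smul_right, smul_eq_mul]
      ring))
  (fun x₁ x₂ y => by
    refine LinearMap.ext fun z => LinearMap.ext fun u => ?_
    simp only [LinearMap.mk₂_apply, LinearMap.add_apply, map_add, inner_add_left,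
      inner_add_right]
    ring)
  (fun c x y => by
    refine LinearMap.ext fun z => LinearMap.ext fun u => ?_
    simp only [LinearMap.mk₂_apply, LinearMap.smul_apply, map_smul, real_inner_smul_left,
      real_inner_smul_right, smul_eq_mul]
    ring)
  (fun x y₁ y₂ => by
    refine LinearMap.ext fun z => LinearMap.ext fun u => ?_
    simp only [LinearMap.mk₂_apply, LinearMap.add_apply, map_add, inner_add_left,
      inner_add_right]
    ring)
  (fun c x y => by
    refine LinearMap.ext fun z => LinearMap.ext fun u => ?_
    simp only [LinearMap.mk₂_apply, LinearMap.smul_apply, map_smul, real_inner_smul_left,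
      real_inner_smul_right, smul_eq_mul]
    ring)

theorem auxU_apply (J : E →ₗ[ℝ] E) (R : E →ₗ[ℝ] E →ₗ[ℝ] E →ₗ[ℝ] E →ₗ[ℝ] ℝ)
    (T : E →ₗ[ℝ] E →ₗ[ℝ] ℝ) (ν : ℝ) (x y z u : E) :
    auxU J R T ν x y z u
      = R x y z u - ν * (⟪y, z⟫ * ⟪x, u⟫ - ⟪x, z⟫ * ⟪y, u⟫)
        - (1/6) * (⟪J y, z⟫ * T (J x) u - ⟪J x, z⟫ * T (J y) u
            - 2 * ⟪J x, y⟫ * T (J z) u + ⟪J x, u⟫ * T (J y) z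
            - ⟪J y, u⟫ * T (J x) z - 2 * ⟪J z, u⟫ * T (J x) y) := rfl

theorem aux_rot {n : ℕ} (b : OrthonormalBasis (Fin (2 * n)) ℝ E)
    (J : E →ₗ[ℝ] E) (hJ2 : ∀ x : E, J (J x) = -x)
    (hJg : ∀ x y : E, ⟪J x, J y⟫ = ⟪x, y⟫)
    (R : E →ₗ[ℝ] E →ₗ[ℝ] E →ₗ[ℝ] E →ₗ[ℝ] ℝ)
    (hRK : ∀ x y z u : E, R x y z u = R (J x) (J y) (J z) (J u)) (p q : E) :
    ∑ i, R (b i) (J p) (J q) (b i) = ∑ i, R (b i) p q (b i) := by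
  classical
  have Jskew := aux_Jskew J hJ2 hJg
  have hon := orthonormal_iff_ite.mp b.orthonormal
  suffices hs : ∀ Y Z : E, ∑ i, R (J (b i)) Y Z (J (b i)) = ∑ i, R (b i) Y Z (b i) by
    calc ∑ i, R (b i) (J p) (J q) (b i)
        = ∑ i, R (J (b i)) (J p) (J q) (J (b i)) := (hs (J p) (J q)).symm
      _ = ∑ i, R (b i) p q (b i) :=
          Finset.sum_congr rfl fun i _ => (hRK (b i) p q (b i)).symm
  intro Y Z
  have hexp : ∀ w : E, R w Y Z w
      = ∑ j, ∑ k, (⟪b j, w⟫ * ⟪b k, w⟫) * R (b k) Y Z (b j) := by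
    intro w
    conv_lhs => rw [← b.sum_repr' w]
    simp only [map_sum, map_smul, LinearMap.sum_apply, LinearMap.smul_apply, smul_eq_mul]
    refine Finset.sum_congr rfl fun j _ => ?_
    rw [Finset.mul_sum]
    refine Finset.sum_congr rfl fun k _ => by ring
  calc ∑ i, R (J (b i)) Y Z (J (b i))
      = ∑ i, ∑ j, ∑ k, (⟪b j, J (b i)⟫ * ⟪b k, J (b i)⟫) * R (b k) Y Z (b j) :=
        Finset.sum_congr rfl fun i _ => hexp (J (b i))
    _ = ∑ j, ∑ k, (∑ i, ⟪b j, J (b i)⟫ * ⟪b k, J (b i)⟫) * R (b k) Y Z (b j) := by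
        rw [Finset.sum_comm]
        refine Finset.sum_congr rfl fun j _ => ?_
        rw [Finset.sum_comm]
        refine Finset.sum_congr rfl fun k _ => ?_
        rw [Finset.sum_mul]
    _ = ∑ j, ∑ k, ⟪b j, b k⟫ * R (b k) Y Z (b j) := by
        refine Finset.sum_congr rfl fun j _ => Finset.sum_congr rfl fun k _ => ?_
        congr 1
        have hco : ∀ i, ⟪b j, J (b i)⟫ * ⟪b k, J (b i)⟫
            = ⟪J (b j), b i⟫ * ⟪b i, J (b k)⟫ := by
          intro i
          have e1 : ⟪J (b j), b i⟫ = - ⟪b j, J (b i)⟫ := Jskew (b j) (b i)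
          have e2 : ⟪J (b k), b i⟫ = - ⟪b k, J (b i)⟫ := Jskew (b k) (b i)
          have e3 : ⟪b i, J (b k)⟫ = ⟪J (b k), b i⟫ := real_inner_comm _ _
          rw [e3, e2, e1]; ring
        rw [Finset.sum_congr rfl fun i _ => hco i, b.sum_inner_mul_inner, hJg]
    _ = ∑ j, R (b j) Y Z (b j) := by
        refine Finset.sum_congr rfl fun j _ => ?_
        rw [Finset.sum_eq_single j]
        · rw [hon j j]; simp
        · intro k _ hk
          rw [hon j k]; simp [Ne.symm hk]
        · simp

end

open scoped RealInnerProductSpace in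
set_option maxHeartbeats 2000000 in
/-- Proposition 1, equation (6): an RK-curvature tensor of constant antiholomorphic
sectional curvature ν satisfies R = (1/6)ψ + ν R₁ - ((2n-1)/3) ν R₂. -/
theorem stmt_2 {E : Type*} [NormedAddCommGroup E] [InnerProductSpace ℝ E]
    {n : ℕ} (hn : 4 ≤ 2 * n)
    (b : OrthonormalBasis (Fin (2 * n)) ℝ E)
    (J : E →ₗ[ℝ] E)
    (hJ2 : ∀ x : E, J (J x) = -x)
    (hJg : ∀ x y : E, ⟪J x, J y⟫ = ⟪x, y⟫)
    (R : E →ₗ[ℝ] E →ₗ[ℝ] E →ₗ[ℝ] E →ₗ[ℝ] ℝ)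
    (hR1 : ∀ x y z u : E, R x y z u = - R y x z u)
    (hR2 : ∀ x y z u : E, R x y z u = - R x y u z)
    (hRb : ∀ x y z u : E, R x y z u + R y z x u + R z x y u = 0)
    (hRK : ∀ x y z u : E, R x y z u = R (J x) (J y) (J z) (J u))
    (ν : ℝ)
    (hν : ∀ x y : E, ‖x‖ = 1 → ‖y‖ = 1 → ⟪x, y⟫ = 0 → ⟪J x, y⟫ = 0 →
      R x y y x = ν)
    (S : E → E → ℝ)
    (hS : ∀ x y : E, S x y = ∑ i, R (b i) x y (b i))
    (R₁ : E → E → E → E → ℝ)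
    (hR₁def : ∀ x y z u : E, R₁ x y z u = ⟪y, z⟫ * ⟪x, u⟫ - ⟪x, z⟫ * ⟪y, u⟫)
    (R₂ : E → E → E → E → ℝ)
    (hR₂def : ∀ x y z u : E, R₂ x y z u =
      ⟪J y, z⟫ * ⟪J x, u⟫ - ⟪J x, z⟫ * ⟪J y, u⟫ - 2 * ⟪J x, y⟫ * ⟪J z, u⟫)
    (ψ : E → E → E → E → ℝ)
    (hψdef : ∀ x y z u : E, ψ x y z u =
      ⟪J y, z⟫ * S (J x) u - ⟪J x, z⟫ * S (J y) u - 2 * ⟪J x, y⟫ * S (J z) u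
      + ⟪J x, u⟫ * S (J y) z - ⟪J y, u⟫ * S (J x) z - 2 * ⟪J z, u⟫ * S (J x) y) :
    ∀ x y z u : E, R x y z u =
      (1 / 6) * ψ x y z u + ν * R₁ x y z u
        - ((2 * (n : ℝ) - 1) / 3) * ν * R₂ x y z u := by
  classical
  set μ : ℝ := ν * (2 * (n : ℝ) - 1) with hμ
  set T : E →ₗ[ℝ] E →ₗ[ℝ] ℝ := auxT b R μ with hT
  have Jskew := aux_Jskew J hJ2 hJg
  have Jself := aux_Jself J hJ2 hJg
  have comm : ∀ u v : E, ⟪u, v⟫ = ⟪v, u⟫ := fun u v => real_inner_comm v u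
  have askew : ∀ u v : E, ⟪J u, v⟫ = - ⟪J v, u⟫ := by
    intro u v
    rw [Jskew u v, comm u (J v)]
  have Rpair : ∀ x y z u : E, R x y z u = R z u x y :=
    aux_pair_symm (fun x y z u => R x y z u) hR1 hR2 hRb
  have Tapp : ∀ p q : E, T p q = (∑ i, R (b i) p q (b i)) - μ * ⟪p, q⟫ :=
    fun p q => rfl
  have Tsym : ∀ p q : E, T p q = T q p := by
    intro p q
    rw [Tapp, Tapp, comm p q]
    congr 1
    refine Finset.sum_congr rfl fun i _ => ?_
    have e1 := hR1 (b i) p q (b i)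
    have e2 := hR2 p (b i) q (b i)
    have e3 := Rpair p (b i) (b i) q
    linarith
  have TJ : ∀ p q : E, T (J p) (J q) = T p q := by
    intro p q
    rw [Tapp, Tapp, aux_rot b J hJ2 hJg R hRK p q, hJg]
  have TskewJ : ∀ p q : E, T (J p) q = - T (J q) p := by
    intro p q
    have h1 : T (J (J p)) (J q) = T (J p) q := TJ (J p) q
    rw [hJ2 p] at h1
    have h2 : T (-p) (J q) = - T p (J q) := by
      simp [map_neg, LinearMap.neg_apply]
    have h3 : T p (J q) = T (J q) p := Tsym p (J q)
    linarith
  have Tzero : ∀ e : E, T (J e) e = 0 := fun e => by have := TskewJ e e; linarith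
  set U : E →ₗ[ℝ] E →ₗ[ℝ] E →ₗ[ℝ] E →ₗ[ℝ] ℝ := auxU J R T ν with hU
  have Uapp : ∀ x y z u : E, U x y z u
      = R x y z u - ν * (⟪y, z⟫ * ⟪x, u⟫ - ⟪x, z⟫ * ⟪y, u⟫)
        - (1/6) * (⟪J y, z⟫ * T (J x) u - ⟪J x, z⟫ * T (J y) u
            - 2 * ⟪J x, y⟫ * T (J z) u + ⟪J x, u⟫ * T (J y) z
            - ⟪J y, u⟫ * T (J x) z - 2 * ⟪J z, u⟫ * T (J x) y) := fun x y z u => rfl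
  have hUA : ∀ x y z u : E, U x y z u = - U y x z u := by
    intro x y z u
    rw [Uapp, Uapp, hR1 x y z u, askew y x, TskewJ y x]
    ring
  have hUB : ∀ x y z u : E, U x y z u = - U x y u z := by
    intro x y z u
    rw [Uapp, Uapp, hR2 x y z u, askew u z, TskewJ u z]
    ring
  have hUBi : ∀ x y z u : E, U x y z u + U y z x u + U z x y u = 0 := by
    intro x y z u
    rw [Uapp, Uapp, Uapp, comm z x, comm y x, comm z y, askew z x, askew z y, askew y x,
      TskewJ z x, TskewJ z y, TskewJ y x]
    linear_combination hRb x y z u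
  have hUK : ∀ x y z u : E, U x y z u = U (J x) (J y) (J z) (J u) := by
    intro x y z u
    rw [Uapp, Uapp, hJg y z, hJg x u, hJg x z, hJg y u,
      hJg (J y) z, hJg (J x) z, hJg (J x) y, hJg (J x) u, hJg (J y) u, hJg (J z) u,
      TJ (J x) u, TJ (J y) u, TJ (J z) u, TJ (J y) z, TJ (J x) z, TJ (J x) y,
      ← hRK x y z u]
  have hnu' : ∀ x y : E, ⟪x, y⟫ = 0 → ⟪J x, y⟫ = 0 →
      R x y y x = ν * (⟪x, x⟫ * ⟪y, y⟫) := by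
    intro x y hxy hJxy
    rcases eq_or_ne x 0 with hx | hx
    · rw [hx]; simp
    rcases eq_or_ne y 0 with hy | hy
    · rw [hy]; simp
    have hx2 : ⟪x, x⟫ = ‖x‖ ^ 2 := real_inner_self_eq_norm_sq x
    have hy2 : ⟪y, y⟫ = ‖y‖ ^ 2 := real_inner_self_eq_norm_sq y
    have hxn : ‖x‖ ≠ 0 := norm_ne_zero_iff.mpr hx
    have hyn : ‖y‖ ≠ 0 := norm_ne_zero_iff.mpr hy
    have happ := hν (‖x‖⁻¹ • x) (‖y‖⁻¹ • y) (norm_smul_inv_norm hx)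
      (norm_smul_inv_norm hy)
      (by rw [real_inner_smul_left, real_inner_smul_right, hxy]; ring)
      (by rw [map_smul, real_inner_smul_left, real_inner_smul_right, hJxy]; ring)
    simp only [map_smul, LinearMap.smul_apply, smul_eq_mul] at happ
    rw [hx2, hy2]
    field_simp at happ
    linear_combination happ
  have hU0 : ∀ x y : E, ⟪x, y⟫ = 0 → ⟪J x, y⟫ = 0 → U x y y x = 0 := by
    intro x y hxy hJxy
    have z1 : ⟪J y, y⟫ = 0 := Jself y
    have z2 : ⟪J x, x⟫ = 0 := Jself x
    have z3 : ⟪J y, x⟫ = 0 := by rw [askew y x, hJxy]; ring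
    rw [Uapp, hnu' x y hxy hJxy, hxy, hJxy, z1, z2, z3]
    ring
  -- Ricci of U vanishes
  have hbb : ∀ i, ⟪b i, b i⟫ = 1 := fun i => by
    rw [real_inner_self_eq_norm_sq, b.orthonormal.1 i]; norm_num
  have hsum_repr : ∀ w : E, ∑ i, ⟪w, b i⟫ • b i = w := by
    intro w
    have h1 : ∀ i : Fin (2 * n), ⟪w, b i⟫ • b i = ⟪b i, w⟫ • b i := fun i => by
      rw [real_inner_comm]
    rw [Finset.sum_congr rfl fun i _ => h1 i]
    exact b.sum_repr' w
  have hLsum : ∀ (L : E →ₗ[ℝ] ℝ) (w : E), ∑ i, ⟪w, b i⟫ * L (b i) = L w := by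
    intro L w
    have h2 := congrArg L (hsum_repr w)
    rw [map_sum] at h2
    simp only [map_smul, smul_eq_mul] at h2
    exact h2
  have s1'' : ∑ i, T (J (b i)) (b i) = 0 :=
    Finset.sum_eq_zero fun i _ => Tzero (b i)
  have s4' : ∀ p q : E, ∑ i, ⟪J (b i), b i⟫ * T (J p) q = 0 := by
    intro p q
    refine Finset.sum_eq_zero fun i _ => ?_
    rw [Jself (b i)]; ring
  have s2' : ∀ p q : E, ∑ i, ⟪J (b i), q⟫ * T (J p) (b i) = - T p q := by
    intro p q
    have h1 : ∀ i : Fin (2 * n), ⟪J (b i), q⟫ * T (J p) (b i)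
        = - (⟪J q, b i⟫ * T (J p) (b i)) := by
      intro i
      have e1 := Jskew (b i) q
      have e2 : ⟪b i, J q⟫ = ⟪J q, b i⟫ := comm _ _
      rw [e1, e2]; ring
    rw [Finset.sum_congr rfl fun i _ => h1 i, Finset.sum_neg_distrib,
      hLsum (T (J p)) (J q), TJ]
  have s3' : ∀ p q : E, ∑ i, ⟪J (b i), p⟫ * T (J q) (b i) = - T p q := by
    intro p q
    have h1 : ∀ i : Fin (2 * n), ⟪J (b i), p⟫ * T (J q) (b i)
        = - (⟪J p, b i⟫ * T (J q) (b i)) := by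
      intro i
      have e1 := Jskew (b i) p
      have e2 : ⟪b i, J p⟫ = ⟪J p, b i⟫ := comm _ _
      rw [e1, e2]; ring
    rw [Finset.sum_congr rfl fun i _ => h1 i, Finset.sum_neg_distrib,
      hLsum (T (J q)) (J p), TJ, Tsym q p]
  have s5' : ∀ p q : E, ∑ i, ⟪J p, b i⟫ * T (J (b i)) q = - T p q := by
    intro p q
    have h1 : ∀ i : Fin (2 * n), T (J (b i)) q = ((T.flip q).comp J) (b i) :=
      fun i => rfl
    rw [Finset.sum_congr rfl fun i _ => by rw [h1 i], hLsum ((T.flip q).comp J) (J p)]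
    simp only [LinearMap.comp_apply, LinearMap.flip_apply, hJ2 p, map_neg,
      LinearMap.neg_apply]
  have s6' : ∀ p q : E, ∑ i, ⟪J q, b i⟫ * T (J (b i)) p = - T p q := by
    intro p q
    have h1 : ∀ i : Fin (2 * n), T (J (b i)) p = ((T.flip p).comp J) (b i) :=
      fun i => rfl
    rw [Finset.sum_congr rfl fun i _ => by rw [h1 i], hLsum ((T.flip p).comp J) (J q)]
    simp only [LinearMap.comp_apply, LinearMap.flip_apply, hJ2 q, map_neg,
      LinearMap.neg_apply]
    rw [Tsym q p]
  have hconst2 : ∑ i, ⟪b i, b i⟫ = 2 * (n : ℝ) := by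
    rw [Finset.sum_congr rfl fun i _ => hbb i, Finset.sum_const, Finset.card_univ,
      Fintype.card_fin, nsmul_eq_mul]
    push_cast
    ring
  have hparse : ∀ p q : E, ∑ i, ⟪b i, q⟫ * ⟪p, b i⟫ = ⟪p, q⟫ := by
    intro p q
    have h1 : ∀ i : Fin (2 * n), ⟪b i, q⟫ * ⟪p, b i⟫ = ⟪p, b i⟫ * ⟪b i, q⟫ :=
      fun i => by ring
    rw [Finset.sum_congr rfl fun i _ => h1 i]
    exact b.sum_inner_mul_inner p q
  have hURic : ∀ p q : E, ∑ i, U (b i) p q (b i) = 0 := by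
    intro p q
    have hexp : ∀ i : Fin (2 * n), U (b i) p q (b i)
        = R (b i) p q (b i) - ν * (⟪p, q⟫ * ⟪b i, b i⟫ - ⟪b i, q⟫ * ⟪p, b i⟫)
          - (1/6) * (⟪J p, q⟫ * T (J (b i)) (b i) - ⟪J (b i), q⟫ * T (J p) (b i)
              - 2 * (⟪J (b i), p⟫ * T (J q) (b i)) + ⟪J (b i), b i⟫ * T (J p) q
              - ⟪J p, b i⟫ * T (J (b i)) q - 2 * (⟪J q, b i⟫ * T (J (b i)) p)) := by
      intro i
      rw [Uapp]
      ring
    have hsR : ∑ i, R (b i) p q (b i) = T p q + μ * ⟪p, q⟫ := by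
      rw [Tapp]; ring
    rw [Finset.sum_congr rfl fun i _ => hexp i]
    simp only [Finset.sum_sub_distrib, Finset.sum_add_distrib, ← Finset.mul_sum]
    rw [hsR, hconst2, hparse p q, s1'', s2' p q, s3' p q, s4' p q, s5' p q, s6' p q, hμ]
    ring
  have hzero := aux_main hn b J hJ2 hJg U hUA hUB hUBi hUK hU0 hURic
  intro x y z u
  have h := hzero x y z u
  rw [Uapp] at h
  simp only [Tapp] at h
  rw [hψdef x y z u, hR₁def x y z u, hR₂def x y z u]
  simp only [hS]
  rw [hμ] at h
  linear_combination h
end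

section
/- Let E be a real inner product space of dimension 2n with 2n ≥ 4, J a compatible almost complex structure, and R an algebraic curvature tensor on E that is an RK-tensor and has constant antiholomorphic sectional curvature ν. Then 3S'(x,y) - (n+1)S(x,y) = (1/(2n))·(3τ' - (n+1)τ)·⟨x,y⟩ for all x,y ∈ E, where S, τ are the Ricci tensor and scalar curvature of R and S', τ' are those of R'(x,y,z,u) = R(x,y,Jz,Ju). -/
open scoped RealInnerProductSpace

section Aux
variable {E : Type*} [NormedAddCommGroup E] [InnerProductSpace ℝ E]

private lemma jskew (J : E →ₗ[ℝ] E) (hJ2 : ∀ x : E, J (J x) = -x)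
    (hJg : ∀ x y : E, ⟪J x, J y⟫ = ⟪x, y⟫) (x y : E) : ⟪J x, y⟫ = -⟪x, J y⟫ := by
  have h := hJg x (J y)
  rw [hJ2 y, inner_neg_right] at h
  linarith

private lemma jxx (J : E →ₗ[ℝ] E) (hJ2 : ∀ x : E, J (J x) = -x)
    (hJg : ∀ x y : E, ⟪J x, J y⟫ = ⟪x, y⟫) (x : E) : ⟪x, J x⟫ = 0 := by
  have h := jskew J hJ2 hJg x x
  have h2 : ⟪J x, x⟫ = ⟪x, J x⟫ := real_inner_comm _ _
  linarith

variable (R : E →ₗ[ℝ] E →ₗ[ℝ] E →ₗ[ℝ] E →ₗ[ℝ] ℝ)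

private lemma Rzero1 (hR1 : ∀ x y z u : E, R x y z u = - R y x z u) (x z u : E) :
    R x x z u = 0 := by have := hR1 x x z u; linarith

private lemma Rzero2 (hR2 : ∀ x y z u : E, R x y z u = - R x y u z) (x y z : E) :
    R x y z z = 0 := by have := hR2 x y z z; linarith

/-- midswap for equal outer slots -/
private lemma Rs3 (hR1 : ∀ x y z u : E, R x y z u = - R y x z u)
    (hR2 : ∀ x y z u : E, R x y z u = - R x y u z)
    (hRb : ∀ x y z u : E, R x y z u + R y z x u + R z x y u = 0) (a y z : E) :
    R a y z a = R a z y a := by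
  have h := hRb a y z a
  have h0 : R y z a a = 0 := Rzero2 R hR2 y z a
  have h1 := hR1 z a y a
  linarith

/-- pair symmetry -/
private lemma Rpair (hR1 : ∀ x y z u : E, R x y z u = - R y x z u)
    (hR2 : ∀ x y z u : E, R x y z u = - R x y u z)
    (hRb : ∀ x y z u : E, R x y z u + R y z x u + R z x y u = 0) (x y z u : E) :
    R x y z u = R z u x y := by
  have b1 := hRb x y z u
  have b2 := hRb y z u x
  have b3 := hRb z u x y
  have b4 := hRb u x y z
  linarith [hR1 y z x u, hR1 z x y u, hR1 y z u x, hR1 z u y x, hR1 u y z x,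
    hR1 u x z y, hR1 x z u y, hR1 u x y z, hR1 x y u z, hR1 y u x z,
    hR2 y z x u, hR2 z x y u, hR2 y z u x, hR2 z u y x, hR2 u y z x,
    hR2 u x z y, hR2 x z u y, hR2 x y u z, hR2 y u x z,
    hR2 x y z u, hR2 z u x y,
    hR2 y x z u, hR2 x z y u, hR2 y x u z, hR2 z y x u,
    hR1 x y z u, hR1 z u x y, hR1 y x u z, hR1 u z y x,
    hR2 u z x y, hR1 x u y z, hR1 z y u x]

/-- R x y y w = R w y y x -/
private lemma Rs2 (hR1 : ∀ x y z u : E, R x y z u = - R y x z u)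
    (hR2 : ∀ x y z u : E, R x y z u = - R x y u z)
    (hRb : ∀ x y z u : E, R x y z u + R y z x u + R z x y u = 0) (x y w : E) :
    R x y y w = R w y y x := by
  have h1 := hRb x y w y
  have h0 : R w x y y = 0 := Rzero2 R hR2 w x y
  linarith [hR2 x y y w, hR1 y w x y, hR2 w y y x]


variable {E : Type*} [NormedAddCommGroup E] [InnerProductSpace ℝ E]
variable (J : E →ₗ[ℝ] E) (R : E →ₗ[ℝ] E →ₗ[ℝ] E →ₗ[ℝ] E →ₗ[ℝ] ℝ) (ν : ℝ)

/-- homogeneous form of the constant antiholomorphic curvature hypothesis -/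
private lemma hnu2 (hν : ∀ x y : E, ‖x‖ = 1 → ‖y‖ = 1 → ⟪x, y⟫ = 0 → ⟪J x, y⟫ = 0 →
      R x y y x = ν) (x y : E) (h1 : ⟪x, y⟫ = 0) (h2 : ⟪J x, y⟫ = 0) :
    R x y y x = ν * (⟪x, x⟫ * ⟪y, y⟫) := by
  by_cases hx : x = 0
  · simp [hx]
  by_cases hy : y = 0
  · simp [hy]
  have ha : ‖x‖ ≠ 0 := norm_ne_zero_iff.mpr hx
  have hb : ‖y‖ ≠ 0 := norm_ne_zero_iff.mpr hy
  have hxu : ‖(‖x‖⁻¹ • x)‖ = 1 := norm_smul_inv_norm hx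
  have hyu : ‖(‖y‖⁻¹ • y)‖ = 1 := norm_smul_inv_norm hy
  have ho : ⟪(‖x‖⁻¹ • x), (‖y‖⁻¹ • y)⟫ = 0 := by
    rw [real_inner_smul_left, real_inner_smul_right, h1]; ring
  have hJo : ⟪J (‖x‖⁻¹ • x), (‖y‖⁻¹ • y)⟫ = 0 := by
    rw [map_smul, real_inner_smul_left, real_inner_smul_right, h2]; ring
  have hv := hν _ _ hxu hyu ho hJo
  simp only [map_smul, LinearMap.smul_apply, smul_eq_mul] at hv
  rw [real_inner_self_eq_norm_sq, real_inner_self_eq_norm_sq]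
  field_simp at hv ⊢
  nlinarith [hv, sq_nonneg (‖x‖*‖y‖)]

private lemma P1 (hR1 : ∀ x y z u : E, R x y z u = - R y x z u)
    (hR2 : ∀ x y z u : E, R x y z u = - R x y u z)
    (hRb : ∀ x y z u : E, R x y z u + R y z x u + R z x y u = 0)
    (hν2 : ∀ x y : E, ⟪x, y⟫ = 0 → ⟪J x, y⟫ = 0 → R x y y x = ν * (⟪x, x⟫ * ⟪y, y⟫))
    (x w y : E) (hxy : ⟪x, y⟫ = 0) (hwy : ⟪w, y⟫ = 0)
    (hJxy : ⟪J x, y⟫ = 0) (hJwy : ⟪J w, y⟫ = 0) :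
    R x y y w = ν * (⟪x, w⟫ * ⟪y, y⟫) := by
  have h := hν2 (x + w) y (by rw [inner_add_left, hxy, hwy]; ring)
    (by rw [map_add, inner_add_left, hJxy, hJwy]; ring)
  have hx := hν2 x y hxy hJxy
  have hw := hν2 w y hwy hJwy
  have hs := Rs2 R hR1 hR2 hRb x y w
  simp only [map_add, LinearMap.add_apply, inner_add_left, inner_add_right] at h
  have hcomm : ⟪w, x⟫ = ⟪x, w⟫ := real_inner_comm _ _
  linear_combination h/2 - hx/2 - hw/2 + hs/2 + (ν * ⟪y, y⟫ / 2) * hcomm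

private lemma P2 (hR1 : ∀ x y z u : E, R x y z u = - R y x z u)
    (hR2 : ∀ x y z u : E, R x y z u = - R x y u z)
    (hRb : ∀ x y z u : E, R x y z u + R y z x u + R z x y u = 0)
    (hν2 : ∀ x y : E, ⟪x, y⟫ = 0 → ⟪J x, y⟫ = 0 → R x y y x = ν * (⟪x, x⟫ * ⟪y, y⟫))
    (x w y z : E) (hxy : ⟪x, y⟫ = 0) (hwy : ⟪w, y⟫ = 0)
    (hJxy : ⟪J x, y⟫ = 0) (hJwy : ⟪J w, y⟫ = 0)
    (hxz : ⟪x, z⟫ = 0) (hwz : ⟪w, z⟫ = 0)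
    (hJxz : ⟪J x, z⟫ = 0) (hJwz : ⟪J w, z⟫ = 0) :
    R x y z w + R x z y w = 2 * ν * (⟪x, w⟫ * ⟪y, z⟫) := by
  have h := P1 J R ν hR1 hR2 hRb hν2 x w (y + z) (by rw [inner_add_right, hxy, hxz]; ring)
    (by rw [inner_add_right, hwy, hwz]; ring) (by rw [inner_add_right, hJxy, hJxz]; ring)
    (by rw [inner_add_right, hJwy, hJwz]; ring)
  have hy := P1 J R ν hR1 hR2 hRb hν2 x w y hxy hwy hJxy hJwy
  have hz := P1 J R ν hR1 hR2 hRb hν2 x w z hxz hwz hJxz hJwz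
  simp only [map_add, LinearMap.add_apply, inner_add_left, inner_add_right] at h
  have hcomm : ⟪z, y⟫ = ⟪y, z⟫ := real_inner_comm _ _
  linear_combination h - hy - hz + (ν * ⟪x, w⟫) * hcomm



private lemma bval (hJ2 : ∀ x : E, J (J x) = -x) (hJg : ∀ x y : E, ⟪J x, J y⟫ = ⟪x, y⟫)
    (hR1 : ∀ x y z u : E, R x y z u = - R y x z u)
    (hR2 : ∀ x y z u : E, R x y z u = - R x y u z)
    (hRb : ∀ x y z u : E, R x y z u + R y z x u + R z x y u = 0)
    (hν2 : ∀ x y : E, ⟪x, y⟫ = 0 → ⟪J x, y⟫ = 0 → R x y y x = ν * (⟪x, x⟫ * ⟪y, y⟫))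
    (x v : E) (hxv : ⟪x, v⟫ = 0) (hJxv : ⟪J x, v⟫ = 0) :
    R x (J v) (J x) v = -(1/2) * R x (J x) v (J v) := by
  have hxJv : ⟪x, J v⟫ = 0 := by have := jskew J hJ2 hJg x v; linarith
  have hJxJv : ⟪J x, J v⟫ = 0 := by rw [hJg]; exact hxv
  have hJJx : ⟪J (J x), J v⟫ = 0 := by rw [hJ2, inner_neg_left, hxJv]; ring
  have hJJxv : ⟪J (J x), v⟫ = 0 := by rw [hJ2, inner_neg_left, hxv]; ring
  have hα := P2 J R ν hR1 hR2 hRb hν2 x (J x) (J v) v hxJv hJxJv hJxJv hJJx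
      hxv hJxv hJxv hJJxv
  have hxJx : ⟪x, J x⟫ = 0 := jxx J hJ2 hJg x
  rw [hxJx] at hα
  have hβ := hRb x v (J x) (J v)
  have hγ := Rpair R hR1 hR2 hRb v (J x) x (J v)
  linarith [hα, hβ, hγ, hR2 x v (J v) (J x), hR1 (J x) x v (J v), hR2 x (J v) (J x) v]

private lemma I0 (hJ2 : ∀ x : E, J (J x) = -x) (hJg : ∀ x y : E, ⟪J x, J y⟫ = ⟪x, y⟫)
    (hR1 : ∀ x y z u : E, R x y z u = - R y x z u)
    (hR2 : ∀ x y z u : E, R x y z u = - R x y u z)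
    (hRb : ∀ x y z u : E, R x y z u + R y z x u + R z x y u = 0)
    (hν2 : ∀ x y : E, ⟪x, y⟫ = 0 → ⟪J x, y⟫ = 0 → R x y y x = ν * (⟪x, x⟫ * ⟪y, y⟫))
    (x v : E) (hxv : ⟪x, v⟫ = 0) (hJxv : ⟪J x, v⟫ = 0) :
    R v x (J x) (J v) = -(1/2) * R x (J x) v (J v) := by
  have hb := bval J R ν hJ2 hJg hR1 hR2 hRb hν2 x v hxv hJxv
  have hB := hRb x (J x) v (J v)
  have hp := Rpair R hR1 hR2 hRb (J x) v x (J v)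
  linarith

private lemma I1 (hJ2 : ∀ x : E, J (J x) = -x) (hJg : ∀ x y : E, ⟪J x, J y⟫ = ⟪x, y⟫)
    (hR1 : ∀ x y z u : E, R x y z u = - R y x z u)
    (hR2 : ∀ x y z u : E, R x y z u = - R x y u z)
    (hRb : ∀ x y z u : E, R x y z u + R y z x u + R z x y u = 0)
    (hν2 : ∀ x y : E, ⟪x, y⟫ = 0 → ⟪J x, y⟫ = 0 → R x y y x = ν * (⟪x, x⟫ * ⟪y, y⟫))
    (x v : E) (hx1 : ⟪x, x⟫ = 1) (hv1 : ⟪v, v⟫ = 1)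
    (hxv : ⟪x, v⟫ = 0) (hJxv : ⟪J x, v⟫ = 0) :
    R x (J x) (J x) x + R v (J v) (J v) v + 3 * R x (J x) v (J v) = 2 * ν := by
  have hvx : ⟪v, x⟫ = 0 := by rw [real_inner_comm]; exact hxv
  have hxJv : ⟪x, J v⟫ = 0 := by have := jskew J hJ2 hJg x v; linarith
  have hvJx : ⟪v, J x⟫ = 0 := by rw [real_inner_comm]; exact hJxv
  have hJvx : ⟪J v, x⟫ = 0 := by have := jskew J hJ2 hJg v x; linarith
  have hJxJv : ⟪J x, J v⟫ = 0 := by rw [hJg]; exact hxv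
  have hJvJx : ⟪J v, J x⟫ = 0 := by rw [hJg]; exact hvx
  have hxJx : ⟪x, J x⟫ = 0 := jxx J hJ2 hJg x
  have hvJv : ⟪v, J v⟫ = 0 := jxx J hJ2 hJg v
  have hJxx : ⟪J x, x⟫ = 0 := by rw [real_inner_comm]; exact hxJx
  have hJvv : ⟪J v, v⟫ = 0 := by rw [real_inner_comm]; exact hvJv
  have hJxJx : ⟪J x, J x⟫ = 1 := by rw [hJg]; exact hx1
  have hJvJv : ⟪J v, J v⟫ = 1 := by rw [hJg]; exact hv1
  have cond1 : ⟪x + v, J x - J v⟫ = 0 := by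
    rw [inner_add_left, inner_sub_right, inner_sub_right, hxJx, hxJv, hvJx, hvJv]; ring
  have cond2 : ⟪J (x + v), J x - J v⟫ = 0 := by
    rw [map_add, inner_add_left, inner_sub_right, inner_sub_right, hJxJx, hJxJv, hJvJx, hJvJv]
    ring
  have hA : ⟪x + v, x + v⟫ = 2 := by
    rw [inner_add_left, inner_add_right, inner_add_right, hx1, hxv, hvx, hv1]; ring
  have hB : ⟪J x - J v, J x - J v⟫ = 2 := by
    rw [inner_sub_left, inner_sub_right, inner_sub_right, hJxJx, hJxJv, hJvJx, hJvJv]; ring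
  have h1 := hν2 (x + v) (J x - J v) cond1 cond2
  rw [hA, hB] at h1
  have cond1' : ⟪x - v, J x + J v⟫ = 0 := by
    rw [inner_sub_left, inner_add_right, inner_add_right, hxJx, hxJv, hvJx, hvJv]; ring
  have cond2' : ⟪J (x - v), J x + J v⟫ = 0 := by
    rw [map_sub, inner_sub_left, inner_add_right, inner_add_right, hJxJx, hJxJv, hJvJx, hJvJv]
    ring
  have hA' : ⟪x - v, x - v⟫ = 2 := by
    rw [inner_sub_left, inner_sub_right, inner_sub_right, hx1, hxv, hvx, hv1]; ring
  have hB' : ⟪J x + J v, J x + J v⟫ = 2 := by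
    rw [inner_add_left, inner_add_right, inner_add_right, hJxJx, hJxJv, hJvJx, hJvJv]; ring
  have h2 := hν2 (x - v) (J x + J v) cond1' cond2'
  rw [hA', hB'] at h2
  simp only [map_add, map_sub, LinearMap.add_apply, LinearMap.sub_apply] at h1 h2
  have hsub : ∀ a c d : E, R (x - v) a c d = R x a c d - R v a c d := by
    intro a c d
    have := map_add R (x - v) v
    rw [sub_add_cancel] at this
    rw [this]; simp only [LinearMap.add_apply]; ring
  simp only [hsub] at h2
  have a1 := hν2 x (J v) hxJv hJxJv
  rw [hx1, hJvJv] at a1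
  have a2 := hν2 v (J x) hvJx hJvJx
  rw [hv1, hJxJx] at a2
  have a5 := bval J R ν hJ2 hJg hR1 hR2 hRb hν2 x v hxv hJxv
  have a6 := bval J R ν hJ2 hJg hR1 hR2 hRb hν2 v x hvx hJvx
  have hp6 := Rpair R hR1 hR2 hRb v (J v) x (J x)
  have a3 := hR2 x (J x) v (J v)
  have a4 := Rpair R hR1 hR2 hRb v (J v) (J x) x
  have a4' := hR1 (J x) x v (J v)
  linarith [h1, h2, a1, a2, a3, a4, a4', a5, a6, hp6]

private lemma split_sum {ι : Type*} [Fintype ι] (b : OrthonormalBasis ι ℝ E)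
    {m : ℕ} (c : Fin m → E) (hc : ∀ k l, ⟪c k, c l⟫ = if k = l then (1:ℝ) else 0)
    (T : E →ₗ[ℝ] E →ₗ[ℝ] ℝ) :
    ∑ i, T (b i) (b i)
      = (∑ i, T (b i - ∑ k, ⟪b i, c k⟫ • c k) (b i - ∑ k, ⟪b i, c k⟫ • c k))
        + ∑ k, T (c k) (c k) := by
  have hpars : ∀ y w : E, ∑ i, ⟪b i, y⟫ * ⟪b i, w⟫ = ⟪y, w⟫ := by
    intro y w
    conv_rhs => rw [← b.sum_repr' y]
    rw [sum_inner]
    exact Finset.sum_congr rfl fun i _ => (real_inner_smul_left _ _ _).symm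
  set v : ι → E := fun i => b i - ∑ k, ⟪b i, c k⟫ • c k with hv
  set p : ι → E := fun i => ∑ k, ⟪b i, c k⟫ • c k with hp
  have KV : ∀ k, (∑ i, ⟪b i, c k⟫ • v i) = (0:E) := by
    intro k
    have h1 : (∑ i, ⟪b i, c k⟫ • b i) = c k := b.sum_repr' (c k)
    have h2 : (∑ i, ⟪b i, c k⟫ • (∑ l, ⟪b i, c l⟫ • c l)) = c k := by
      calc ∑ i, ⟪b i, c k⟫ • (∑ l, ⟪b i, c l⟫ • c l)
          = ∑ i, ∑ l, (⟪b i, c k⟫ * ⟪b i, c l⟫) • c l := by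
            refine Finset.sum_congr rfl fun i _ => ?_
            rw [Finset.smul_sum]
            exact Finset.sum_congr rfl fun l _ => smul_smul _ _ _
        _ = ∑ l, (∑ i, ⟪b i, c k⟫ * ⟪b i, c l⟫) • c l := by
            rw [Finset.sum_comm]
            exact Finset.sum_congr rfl fun l _ => (Finset.sum_smul).symm
        _ = ∑ l, ⟪c k, c l⟫ • c l := Finset.sum_congr rfl fun l _ => by rw [hpars]
        _ = c k := by simp [hc, ite_smul]
    simp only [hv, smul_sub, Finset.sum_sub_distrib, h1, h2, sub_self]
  have hbi : ∀ i, b i = v i + p i := fun i => by simp [hv, hp]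
  have hvp : (∑ i, T (v i) (p i)) = 0 := by
    calc ∑ i, T (v i) (p i) = ∑ i, ∑ k, ⟪b i, c k⟫ * T (v i) (c k) := by
          refine Finset.sum_congr rfl fun i _ => ?_
          rw [hp]
          simp [map_sum, map_smul, smul_eq_mul]
      _ = ∑ k, ∑ i, ⟪b i, c k⟫ * T (v i) (c k) := Finset.sum_comm
      _ = ∑ k, T.flip (c k) (∑ i, ⟪b i, c k⟫ • v i) := by
          refine Finset.sum_congr rfl fun k _ => ?_
          rw [map_sum]
          exact Finset.sum_congr rfl fun i _ => by
            rw [map_smul, smul_eq_mul, LinearMap.flip_apply]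
      _ = 0 := by simp [KV]
  have hpv : (∑ i, T (p i) (v i)) = 0 := by
    calc ∑ i, T (p i) (v i) = ∑ i, ∑ k, ⟪b i, c k⟫ * T (c k) (v i) := by
          refine Finset.sum_congr rfl fun i _ => ?_
          rw [hp]
          simp [map_sum, map_smul, smul_eq_mul, LinearMap.sum_apply, LinearMap.smul_apply]
      _ = ∑ k, ∑ i, ⟪b i, c k⟫ * T (c k) (v i) := Finset.sum_comm
      _ = ∑ k, T (c k) (∑ i, ⟪b i, c k⟫ • v i) := by
          refine Finset.sum_congr rfl fun k _ => ?_
          rw [map_sum]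
          exact Finset.sum_congr rfl fun i _ => by rw [map_smul, smul_eq_mul]
      _ = 0 := by simp [KV]
  have hpp : (∑ i, T (p i) (p i)) = ∑ k, T (c k) (c k) := by
    calc ∑ i, T (p i) (p i) = ∑ i, ∑ k, ∑ l, (⟪b i, c k⟫ * ⟪b i, c l⟫) * T (c l) (c k) := by
          refine Finset.sum_congr rfl fun i _ => ?_
          rw [hp]
          simp only [map_sum, LinearMap.sum_apply, map_smul, LinearMap.smul_apply,
            smul_eq_mul]
          exact Finset.sum_congr rfl fun k _ => by
            rw [Finset.mul_sum]
            exact Finset.sum_congr rfl fun l _ => by ring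
      _ = ∑ k, ∑ l, (∑ i, ⟪b i, c k⟫ * ⟪b i, c l⟫) * T (c l) (c k) := by
          rw [Finset.sum_comm]
          refine Finset.sum_congr rfl fun k _ => ?_
          rw [Finset.sum_comm]
          exact Finset.sum_congr rfl fun l _ => (Finset.sum_mul _ _ _).symm
      _ = ∑ k, ∑ l, ⟪c k, c l⟫ * T (c l) (c k) := by
          refine Finset.sum_congr rfl fun k _ => Finset.sum_congr rfl fun l _ => by rw [hpars]
      _ = ∑ k, T (c k) (c k) := by simp [hc, ite_mul]
  calc ∑ i, T (b i) (b i)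
      = ∑ i, (T (v i) (v i) + T (v i) (p i) + (T (p i) (v i) + T (p i) (p i))) := by
        refine Finset.sum_congr rfl fun i _ => ?_
        conv_lhs => rw [hbi i]
        simp only [map_add, LinearMap.add_apply]
        ring
    _ = (∑ i, T (v i) (v i)) + (∑ i, T (v i) (p i))
        + ((∑ i, T (p i) (v i)) + ∑ i, T (p i) (p i)) := by
        rw [Finset.sum_add_distrib, Finset.sum_add_distrib, Finset.sum_add_distrib]
    _ = (∑ i, T (v i) (v i)) + ∑ k, T (c k) (c k) := by rw [hvp, hpv, hpp]; ring

section Traces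
variable {ι : Type*} [Fintype ι] (b : OrthonormalBasis ι ℝ E)

/-- orthonormality of the pair (x, Jx) -/
private lemma hc2 (hJ2 : ∀ x : E, J (J x) = -x) (hJg : ∀ x y : E, ⟪J x, J y⟫ = ⟪x, y⟫)
    (x : E) (hx1 : ⟪x, x⟫ = 1) :
    ∀ k l : Fin 2, ⟪(![x, J x]) k, (![x, J x]) l⟫ = if k = l then (1:ℝ) else 0 := by
  have h1 : ⟪x, J x⟫ = 0 := jxx J hJ2 hJg x
  have h2 : ⟪J x, x⟫ = 0 := by rw [real_inner_comm]; exact h1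
  have h3 : ⟪J x, J x⟫ = 1 := by rw [hJg]; exact hx1
  have hna : ‖x‖ = 1 := by
    have := norm_nonneg (x); have h' := hx1; simp at h'; rcases h' with h | h <;> linarith
  have hnb : ‖J x‖ = 1 := by
    have := norm_nonneg (J x); have h' := h3; simp at h'; rcases h' with h | h <;> linarith
  intro k l
  fin_cases k <;> fin_cases l <;> simp [hx1, h1, h2, h3, hna, hnb]

/-- the residual vector for the (x, Jx) family -/
private lemma vperp2 (hJ2 : ∀ x : E, J (J x) = -x) (hJg : ∀ x y : E, ⟪J x, J y⟫ = ⟪x, y⟫)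
    (x : E) (hx1 : ⟪x, x⟫ = 1) (e : E) :
    ⟪e - ∑ k, ⟪e, (![x, J x]) k⟫ • (![x, J x]) k, x⟫ = 0 ∧
    ⟪e - ∑ k, ⟪e, (![x, J x]) k⟫ • (![x, J x]) k, J x⟫ = 0 := by
  have h1 : ⟪x, J x⟫ = 0 := jxx J hJ2 hJg x
  have h2 : ⟪J x, x⟫ = 0 := by rw [real_inner_comm]; exact h1
  have h3 : ⟪J x, J x⟫ = 1 := by rw [hJg]; exact hx1
  constructor <;>
  · rw [Fin.sum_univ_two]
    simp only [Matrix.cons_val_zero, Matrix.cons_val_one, Matrix.head_cons]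
    rw [inner_sub_left, inner_add_left, real_inner_smul_left, real_inner_smul_left]
    first
    | rw [hx1, h2]; ring
    | rw [h1, h3]; ring

/-- S(x,x) = (N-2)ν + λ(x) -/
private lemma diagS (hJ2 : ∀ x : E, J (J x) = -x) (hJg : ∀ x y : E, ⟪J x, J y⟫ = ⟪x, y⟫)
    (hR1 : ∀ x y z u : E, R x y z u = - R y x z u)
    (hR2 : ∀ x y z u : E, R x y z u = - R x y u z)
    (hRb : ∀ x y z u : E, R x y z u + R y z x u + R z x y u = 0)
    (hν2 : ∀ x y : E, ⟪x, y⟫ = 0 → ⟪J x, y⟫ = 0 → R x y y x = ν * (⟪x, x⟫ * ⟪y, y⟫))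
    (x : E) (hx1 : ⟪x, x⟫ = 1) :
    ∑ i, R (b i) x x (b i)
      = ((Fintype.card ι : ℝ) - 2) * ν + R x (J x) (J x) x := by
  have hc := hc2 J hJ2 hJg x hx1
  have hT := split_sum b (![x, J x]) hc
    (LinearMap.mk₂ ℝ (fun u w => R u x x w)
      (by intros; simp [map_add, LinearMap.add_apply])
      (by intros; simp [map_smul, LinearMap.smul_apply, smul_eq_mul])
      (by intros; simp [map_add, LinearMap.add_apply])
      (by intros; simp [map_smul, LinearMap.smul_apply, smul_eq_mul]))
  have hI := split_sum b (![x, J x]) hc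
    (LinearMap.mk₂ ℝ (fun u w => (⟪u, w⟫ : ℝ))
      (by intros; simp [inner_add_left])
      (by intros; simp [real_inner_smul_left])
      (by intros; simp [inner_add_right])
      (by intros; simp [real_inner_smul_right]))
  simp only [LinearMap.mk₂_apply] at hT hI
  rw [Fin.sum_univ_two] at hT hI
  simp only [Matrix.cons_val_zero, Matrix.cons_val_one, Matrix.head_cons] at hT hI
  -- card
  have hcard : ∑ i : ι, ⟪b i, b i⟫ = (Fintype.card ι : ℝ) := by
    have : ∀ i : ι, ⟪b i, b i⟫ = (1:ℝ) := by
      intro i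
      rw [real_inner_self_eq_norm_sq, b.orthonormal.1 i]
      norm_num
    rw [Finset.sum_congr rfl fun i _ => this i]
    simp
  rw [hcard] at hI
  have h3 : ⟪J x, J x⟫ = 1 := by rw [hJg]; exact hx1
  rw [hx1, h3] at hI
  -- pointwise value on residuals
  have hpt : ∀ i : ι, R (b i - ∑ k, ⟪b i, (![x, J x]) k⟫ • (![x, J x]) k) x x
      (b i - ∑ k, ⟪b i, (![x, J x]) k⟫ • (![x, J x]) k)
      = ν * ⟪(b i - ∑ k, ⟪b i, (![x, J x]) k⟫ • (![x, J x]) k),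
          (b i - ∑ k, ⟪b i, (![x, J x]) k⟫ • (![x, J x]) k)⟫ := by
    intro i
    obtain ⟨hp1, hp2⟩ := vperp2 J hJ2 hJg x hx1 (b i)
    set v := b i - ∑ k, ⟪b i, (![x, J x]) k⟫ • (![x, J x]) k with hvdef
    have hJvx : ⟪J v, x⟫ = 0 := by
      have := jskew J hJ2 hJg v x
      rw [this, hp2]  -- ⟪J v, x⟫ = -⟪v, J x⟫ = 0
      ring
    have := hν2 v x hp1 hJvx
    rw [this, hx1]
    ring
  rw [Finset.sum_congr rfl fun i _ => hpt i, ← Finset.mul_sum] at hT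
  -- R x x x x = 0, and R (J x) x x (J x) = λ
  have hz : R x x x x = 0 := Rzero1 R hR1 x x x
  have hl : R (J x) x x (J x) = R x (J x) (J x) x := Rpair R hR1 hR2 hRb (J x) x x (J x)
  rw [hz, hl] at hT
  -- combine
  have hsum : (∑ i, ⟪(b i - ∑ k, ⟪b i, (![x, J x]) k⟫ • (![x, J x]) k),
      (b i - ∑ k, ⟪b i, (![x, J x]) k⟫ • (![x, J x]) k)⟫)
      = (Fintype.card ι : ℝ) - 2 := by linarith
  rw [hsum] at hT
  linarith

/-- S(x,Jx) = 0 -/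
private lemma offSxJx (hJ2 : ∀ x : E, J (J x) = -x) (hJg : ∀ x y : E, ⟪J x, J y⟫ = ⟪x, y⟫)
    (hR1 : ∀ x y z u : E, R x y z u = - R y x z u)
    (hR2 : ∀ x y z u : E, R x y z u = - R x y u z)
    (hRb : ∀ x y z u : E, R x y z u + R y z x u + R z x y u = 0)
    (hν2 : ∀ x y : E, ⟪x, y⟫ = 0 → ⟪J x, y⟫ = 0 → R x y y x = ν * (⟪x, x⟫ * ⟪y, y⟫))
    (x : E) (hx1 : ⟪x, x⟫ = 1) :
    ∑ i, R (b i) x (J x) (b i) = 0 := by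
  have hc := hc2 J hJ2 hJg x hx1
  have hT := split_sum b (![x, J x]) hc
    (LinearMap.mk₂ ℝ (fun u w => R u x (J x) w)
      (by intros; simp [map_add, LinearMap.add_apply])
      (by intros; simp [map_smul, LinearMap.smul_apply, smul_eq_mul])
      (by intros; simp [map_add, LinearMap.add_apply])
      (by intros; simp [map_smul, LinearMap.smul_apply, smul_eq_mul]))
  simp only [LinearMap.mk₂_apply] at hT
  rw [Fin.sum_univ_two] at hT
  simp only [Matrix.cons_val_zero, Matrix.cons_val_one, Matrix.head_cons] at hT
  have hz1 : R x x (J x) x = 0 := Rzero1 R hR1 x (J x) x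
  have hz2 : R (J x) x (J x) (J x) = 0 := by
    have := hR2 (J x) x (J x) (J x); linarith
  have hxJx : ⟪x, J x⟫ = 0 := jxx J hJ2 hJg x
  have hpt : ∀ i : ι, R (b i - ∑ k, ⟪b i, (![x, J x]) k⟫ • (![x, J x]) k) x (J x)
      (b i - ∑ k, ⟪b i, (![x, J x]) k⟫ • (![x, J x]) k) = 0 := by
    intro i
    obtain ⟨hp1, hp2⟩ := vperp2 J hJ2 hJg x hx1 (b i)
    set v := b i - ∑ k, ⟪b i, (![x, J x]) k⟫ • (![x, J x]) k with hvdef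
    have hJvx : ⟪J v, x⟫ = 0 := by have := jskew J hJ2 hJg v x; rw [this, hp2]; ring
    have hJvJx : ⟪J v, J x⟫ = 0 := by rw [hJg]; exact hp1
    have hP := P2 J R ν hR1 hR2 hRb hν2 v v x (J x) hp1 hp1 hJvx hJvx hp2 hp2 hJvJx hJvJx
    rw [hxJx] at hP
    have hm := Rs3 R hR1 hR2 hRb v x (J x)
    linarith [hP, hm]
  rw [Finset.sum_congr rfl fun i _ => hpt i] at hT
  simp only [Finset.sum_const_zero] at hT
  rw [hz1, hz2] at hT
  linarith

/-- sum R(bi, x, x, J bi) = 0 (gives S'(x,Jx) = 0) -/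
private lemma offS'xJx (hJ2 : ∀ x : E, J (J x) = -x) (hJg : ∀ x y : E, ⟪J x, J y⟫ = ⟪x, y⟫)
    (hR1 : ∀ x y z u : E, R x y z u = - R y x z u)
    (hR2 : ∀ x y z u : E, R x y z u = - R x y u z)
    (hRb : ∀ x y z u : E, R x y z u + R y z x u + R z x y u = 0)
    (hν2 : ∀ x y : E, ⟪x, y⟫ = 0 → ⟪J x, y⟫ = 0 → R x y y x = ν * (⟪x, x⟫ * ⟪y, y⟫))
    (x : E) (hx1 : ⟪x, x⟫ = 1) :
    ∑ i, R (b i) x x (J (b i)) = 0 := by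
  have hc := hc2 J hJ2 hJg x hx1
  have hT := split_sum b (![x, J x]) hc
    (LinearMap.mk₂ ℝ (fun u w => R u x x (J w))
      (by intros; simp [map_add, LinearMap.add_apply])
      (by intros; simp [map_smul, LinearMap.smul_apply, smul_eq_mul])
      (by intros; simp [map_add, LinearMap.add_apply])
      (by intros; simp [map_smul, LinearMap.smul_apply, smul_eq_mul]))
  simp only [LinearMap.mk₂_apply] at hT
  rw [Fin.sum_univ_two] at hT
  simp only [Matrix.cons_val_zero, Matrix.cons_val_one, Matrix.head_cons] at hT
  have hz1 : R x x x (J x) = 0 := Rzero1 R hR1 x x (J x)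
  have hz2 : R (J x) x x (J (J x)) = 0 := by
    rw [hJ2]
    have h0 : R (J x) x x x = 0 := Rzero2 R hR2 (J x) x x
    have : R (J x) x x (-x) = - R (J x) x x x := by simp [map_neg]
    rw [this, h0]; ring
  have hpt : ∀ i : ι, R (b i - ∑ k, ⟪b i, (![x, J x]) k⟫ • (![x, J x]) k) x x
      (J (b i - ∑ k, ⟪b i, (![x, J x]) k⟫ • (![x, J x]) k)) = 0 := by
    intro i
    obtain ⟨hp1, hp2⟩ := vperp2 J hJ2 hJg x hx1 (b i)
    set v := b i - ∑ k, ⟪b i, (![x, J x]) k⟫ • (![x, J x]) k with hvdef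
    have hJvx : ⟪J v, x⟫ = 0 := by have := jskew J hJ2 hJg v x; rw [this, hp2]; ring
    have hJJvx : ⟪J (J v), x⟫ = 0 := by rw [hJ2, inner_neg_left, hp1]; ring
    have hP := P2 J R ν hR1 hR2 hRb hν2 v (J v) x x hp1 hJvx hJvx hJJvx hp1 hJvx hJvx hJJvx
    have hvJv : ⟪v, J v⟫ = 0 := jxx J hJ2 hJg v
    rw [hvJv] at hP
    linarith [hP]
  rw [Finset.sum_congr rfl fun i _ => hpt i] at hT
  simp only [Finset.sum_const_zero] at hT
  rw [hz1, hz2] at hT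
  linarith

/-- polarized identity: 3 R(x,Jx,u,Ju) for u ⊥ x, Jx -/
private lemma I2diag (hJ2 : ∀ x : E, J (J x) = -x) (hJg : ∀ x y : E, ⟪J x, J y⟫ = ⟪x, y⟫)
    (hR1 : ∀ x y z u : E, R x y z u = - R y x z u)
    (hR2 : ∀ x y z u : E, R x y z u = - R x y u z)
    (hRb : ∀ x y z u : E, R x y z u + R y z x u + R z x y u = 0)
    (hν2 : ∀ x y : E, ⟪x, y⟫ = 0 → ⟪J x, y⟫ = 0 → R x y y x = ν * (⟪x, x⟫ * ⟪y, y⟫))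
    (x u : E) (hx1 : ⟪x, x⟫ = 1) (hxu : ⟪x, u⟫ = 0) (hJxu : ⟪J x, u⟫ = 0) :
    3 * R x (J x) u (J u)
      = (2 * ν - R x (J x) (J x) x + ((Fintype.card ι : ℝ) - 2) * ν) * ⟪u, u⟫
        - ∑ i, R (b i) u u (b i) := by
  by_cases hu : u = 0
  · simp [hu]
  · have hr : ‖u‖ ≠ 0 := norm_ne_zero_iff.mpr hu
    set r := ‖u‖ with hrdef
    set w : E := r⁻¹ • u with hwdef
    have hplug : u = r • w := by rw [hwdef, smul_smul, mul_inv_cancel₀ hr, one_smul]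
    have hw1 : ⟪w, w⟫ = 1 := by
      rw [hwdef, real_inner_smul_left, real_inner_smul_right, real_inner_self_eq_norm_sq]
      rw [← hrdef]
      field_simp
    have hxw : ⟪x, w⟫ = 0 := by rw [hwdef, real_inner_smul_right, hxu]; ring
    have hJxw : ⟪J x, w⟫ = 0 := by rw [hwdef, real_inner_smul_right, hJxu]; ring
    have hI := I1 J R ν hJ2 hJg hR1 hR2 hRb hν2 x w hx1 hw1 hxw hJxw
    have hD := diagS J R ν b hJ2 hJg hR1 hR2 hRb hν2 w hw1
    rw [hplug]
    simp only [map_smul, LinearMap.smul_apply, smul_eq_mul, real_inner_smul_left,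
      real_inner_smul_right]
    have hfac : ∑ i, r * (r * R (b i) w w (b i)) = r ^ 2 * ∑ i, R (b i) w w (b i) := by
      rw [Finset.mul_sum]
      exact Finset.sum_congr rfl fun i _ => by ring
    rw [hfac, hw1]
    linear_combination (r ^ 2) * hI + (r ^ 2) * hD

/-- 6 S'(x,x) = (N+2)λ + τ - (N²-4)ν -/
private lemma diagS' (hJ2 : ∀ x : E, J (J x) = -x) (hJg : ∀ x y : E, ⟪J x, J y⟫ = ⟪x, y⟫)
    (hR1 : ∀ x y z u : E, R x y z u = - R y x z u)
    (hR2 : ∀ x y z u : E, R x y z u = - R x y u z)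
    (hRb : ∀ x y z u : E, R x y z u + R y z x u + R z x y u = 0)
    (hν2 : ∀ x y : E, ⟪x, y⟫ = 0 → ⟪J x, y⟫ = 0 → R x y y x = ν * (⟪x, x⟫ * ⟪y, y⟫))
    (x : E) (hx1 : ⟪x, x⟫ = 1) :
    6 * ∑ i, R (b i) x (J x) (J (b i))
      = ((Fintype.card ι : ℝ) + 2) * R x (J x) (J x) x
        + (∑ i, ∑ j, R (b j) (b i) (b i) (b j))
        - ((Fintype.card ι : ℝ) ^ 2 - 4) * ν := by
  have hc := hc2 J hJ2 hJg x hx1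
  set N : ℝ := (Fintype.card ι : ℝ) with hN
  -- main split
  have hT := split_sum b (![x, J x]) hc
    (LinearMap.mk₂ ℝ (fun u w => R u x (J x) (J w))
      (by intros; simp [map_add, LinearMap.add_apply])
      (by intros; simp [map_smul, LinearMap.smul_apply, smul_eq_mul])
      (by intros; simp [map_add, LinearMap.add_apply])
      (by intros; simp [map_smul, LinearMap.smul_apply, smul_eq_mul]))
  -- inner split
  have hI := split_sum b (![x, J x]) hc
    (LinearMap.mk₂ ℝ (fun u w => (⟪u, w⟫ : ℝ))
      (by intros; simp [inner_add_left])
      (by intros; simp [real_inner_smul_left])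
      (by intros; simp [inner_add_right])
      (by intros; simp [real_inner_smul_right]))
  -- S split
  have hS2 := split_sum b (![x, J x]) hc
    (LinearMap.mk₂ ℝ (fun u w => ∑ j, R (b j) u w (b j))
      (by intros; simp [map_add, LinearMap.add_apply, Finset.sum_add_distrib])
      (by intros; simp [map_smul, LinearMap.smul_apply, smul_eq_mul, Finset.mul_sum])
      (by intros; simp [map_add, LinearMap.add_apply, Finset.sum_add_distrib])
      (by intros; simp [map_smul, LinearMap.smul_apply, smul_eq_mul, Finset.mul_sum]))
  simp only [LinearMap.mk₂_apply] at hT hI hS2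
  rw [Fin.sum_univ_two] at hT hI hS2
  simp only [Matrix.cons_val_zero, Matrix.cons_val_one, Matrix.head_cons] at hT hI hS2
  have hcard : ∑ i : ι, ⟪b i, b i⟫ = N := by
    have h1 : ∀ i : ι, ⟪b i, b i⟫ = (1:ℝ) := by
      intro i
      rw [real_inner_self_eq_norm_sq, b.orthonormal.1 i]
      norm_num
    rw [Finset.sum_congr rfl fun i _ => h1 i, hN]
    simp
  have hJxJx : ⟪J x, J x⟫ = 1 := by rw [hJg]; exact hx1
  rw [hcard, hx1, hJxJx] at hI
  -- corner values for hT
  have hz1 : R x x (J x) (J x) = 0 := Rzero1 R hR1 x (J x) (J x)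
  have hz2 : R (J x) x (J x) (J (J x)) = R x (J x) (J x) x := by
    rw [hJ2]
    have hneg : R (J x) x (J x) (-x) = - R (J x) x (J x) x := by simp [map_neg]
    have h1 := hR1 (J x) x (J x) x
    have h2 := hR2 x (J x) (J x) x
    rw [hneg]; linarith
  rw [hz1, hz2] at hT
  -- corner values for hS2
  have hDx := diagS J R ν b hJ2 hJg hR1 hR2 hRb hν2 x hx1
  have hDJx := diagS J R ν b hJ2 hJg hR1 hR2 hRb hν2 (J x) hJxJx
  have hlJx : R (J x) (J (J x)) (J (J x)) (J x) = R x (J x) (J x) x := by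
    rw [hJ2]
    have hneg : R (J x) (-x) (-x) (J x) = R (J x) x x (J x) := by simp [map_neg]
    rw [hneg]
    exact Rpair R hR1 hR2 hRb (J x) x x (J x)
  rw [hlJx] at hDJx
  rw [hDx, hDJx] at hS2
  -- pointwise on residuals
  have hpt : ∀ i ∈ (Finset.univ : Finset ι),
      6 * R (b i - ∑ k, ⟪b i, (![x, J x]) k⟫ • (![x, J x]) k) x (J x)
      (J (b i - ∑ k, ⟪b i, (![x, J x]) k⟫ • (![x, J x]) k))
      = -(N * ν - R x (J x) (J x) x) * ⟪(b i - ∑ k, ⟪b i, (![x, J x]) k⟫ • (![x, J x]) k),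
          (b i - ∑ k, ⟪b i, (![x, J x]) k⟫ • (![x, J x]) k)⟫
        + ∑ j, R (b j) (b i - ∑ k, ⟪b i, (![x, J x]) k⟫ • (![x, J x]) k)
            (b i - ∑ k, ⟪b i, (![x, J x]) k⟫ • (![x, J x]) k) (b j) := by
    intro i _
    obtain ⟨hp1, hp2⟩ := vperp2 J hJ2 hJg x hx1 (b i)
    set v := b i - ∑ k, ⟪b i, (![x, J x]) k⟫ • (![x, J x]) k with hvdef
    have hxv : ⟪x, v⟫ = 0 := by rw [real_inner_comm]; exact hp1
    have hJxv : ⟪J x, v⟫ = 0 := by rw [real_inner_comm]; exact hp2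
    have h0 := I0 J R ν hJ2 hJg hR1 hR2 hRb hν2 x v hxv hJxv
    have h2 := I2diag J R ν b hJ2 hJg hR1 hR2 hRb hν2 x v hx1 hxv hJxv
    rw [← hN] at h2
    linarith
  have hsum := Finset.sum_congr rfl hpt
  rw [← Finset.mul_sum, Finset.sum_add_distrib, ← Finset.mul_sum] at hsum
  rw [← hN] at hS2
  linear_combination 6*hT + hsum + (N*ν - R x (J x) (J x) x)*hI - hS2

/-- orthonormality of (x, Jx, w, Jw) -/
private lemma hc4 (hJ2 : ∀ x : E, J (J x) = -x) (hJg : ∀ x y : E, ⟪J x, J y⟫ = ⟪x, y⟫)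
    (x w : E) (hx1 : ⟪x, x⟫ = 1) (hw1 : ⟪w, w⟫ = 1) (hxw : ⟪x, w⟫ = 0)
    (hJxw : ⟪J x, w⟫ = 0) :
    ∀ k l : Fin 4, ⟪(![x, J x, w, J w]) k, (![x, J x, w, J w]) l⟫
      = if k = l then (1:ℝ) else 0 := by
  have e1 : ⟪x, J x⟫ = 0 := jxx J hJ2 hJg x
  have e2 : ⟪J x, x⟫ = 0 := by rw [real_inner_comm]; exact e1
  have e3 : ⟪J x, J x⟫ = 1 := by rw [hJg]; exact hx1
  have e4 : ⟪w, J w⟫ = 0 := jxx J hJ2 hJg w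
  have e5 : ⟪J w, w⟫ = 0 := by rw [real_inner_comm]; exact e4
  have e6 : ⟪J w, J w⟫ = 1 := by rw [hJg]; exact hw1
  have e7 : ⟪w, x⟫ = 0 := by rw [real_inner_comm]; exact hxw
  have e8 : ⟪w, J x⟫ = 0 := by rw [real_inner_comm]; exact hJxw
  have e9 : ⟪x, J w⟫ = 0 := by have := jskew J hJ2 hJg x w; linarith
  have e10 : ⟪J w, x⟫ = 0 := by rw [real_inner_comm]; exact e9
  have e11 : ⟪J x, J w⟫ = 0 := by rw [hJg]; exact hxw
  have e12 : ⟪J w, J x⟫ = 0 := by rw [real_inner_comm]; exact e11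
  have hna : ‖x‖ = 1 := by
    have := norm_nonneg (x); have h' := hx1; simp at h'; rcases h' with h | h <;> linarith
  have hnb : ‖J x‖ = 1 := by
    have := norm_nonneg (J x); have h' := e3; simp at h'; rcases h' with h | h <;> linarith
  have hnc : ‖w‖ = 1 := by
    have := norm_nonneg (w); have h' := hw1; simp at h'; rcases h' with h | h <;> linarith
  have hnd : ‖J w‖ = 1 := by
    have := norm_nonneg (J w); have h' := e6; simp at h'; rcases h' with h | h <;> linarith
  intro k l
  fin_cases k <;> fin_cases l <;>
    simp [hx1, hw1, hxw, hJxw, e1, e2, e3, e4, e5, e6, e7, e8, e9, e10, e11, e12, hna, hnb, hnc, hnd]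

/-- residual of the 4-family is orthogonal to x, Jx, w, Jw -/
private lemma vperp4 (hJ2 : ∀ x : E, J (J x) = -x) (hJg : ∀ x y : E, ⟪J x, J y⟫ = ⟪x, y⟫)
    (x w : E) (hx1 : ⟪x, x⟫ = 1) (hw1 : ⟪w, w⟫ = 1) (hxw : ⟪x, w⟫ = 0)
    (hJxw : ⟪J x, w⟫ = 0) (e : E) :
    ⟪e - ∑ k, ⟪e, (![x, J x, w, J w]) k⟫ • (![x, J x, w, J w]) k, x⟫ = 0 ∧
    ⟪e - ∑ k, ⟪e, (![x, J x, w, J w]) k⟫ • (![x, J x, w, J w]) k, J x⟫ = 0 ∧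
    ⟪e - ∑ k, ⟪e, (![x, J x, w, J w]) k⟫ • (![x, J x, w, J w]) k, w⟫ = 0 ∧
    ⟪e - ∑ k, ⟪e, (![x, J x, w, J w]) k⟫ • (![x, J x, w, J w]) k, J w⟫ = 0 := by
  have hc := hc4 J hJ2 hJg x w hx1 hw1 hxw hJxw
  have key : ∀ l : Fin 4,
      ⟪e - ∑ k, ⟪e, (![x, J x, w, J w]) k⟫ • (![x, J x, w, J w]) k,
        (![x, J x, w, J w]) l⟫ = 0 := by
    intro l
    rw [inner_sub_left, sum_inner]
    have : ∀ k ∈ (Finset.univ : Finset (Fin 4)),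
        ⟪⟪e, (![x, J x, w, J w]) k⟫ • (![x, J x, w, J w]) k, (![x, J x, w, J w]) l⟫
        = ⟪e, (![x, J x, w, J w]) k⟫ * (if k = l then (1:ℝ) else 0) := by
      intro k _
      rw [real_inner_smul_left, hc k l]
    rw [Finset.sum_congr rfl this]
    simp
  exact ⟨key 0, key 1, key 2, key 3⟩

/-- S(x,w) = R(Jx,x,w,Jx) + R(Jw,x,w,Jw) for an antiholomorphic orthonormal pair -/
private lemma offSxw (hJ2 : ∀ x : E, J (J x) = -x) (hJg : ∀ x y : E, ⟪J x, J y⟫ = ⟪x, y⟫)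
    (hR1 : ∀ x y z u : E, R x y z u = - R y x z u)
    (hR2 : ∀ x y z u : E, R x y z u = - R x y u z)
    (hRb : ∀ x y z u : E, R x y z u + R y z x u + R z x y u = 0)
    (hν2 : ∀ x y : E, ⟪x, y⟫ = 0 → ⟪J x, y⟫ = 0 → R x y y x = ν * (⟪x, x⟫ * ⟪y, y⟫))
    (x w : E) (hx1 : ⟪x, x⟫ = 1) (hw1 : ⟪w, w⟫ = 1) (hxw : ⟪x, w⟫ = 0)
    (hJxw : ⟪J x, w⟫ = 0) :
    ∑ i, R (b i) x w (b i) = R (J x) x w (J x) + R (J w) x w (J w) := by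
  have hc := hc4 J hJ2 hJg x w hx1 hw1 hxw hJxw
  have hT := split_sum b (![x, J x, w, J w]) hc
    (LinearMap.mk₂ ℝ (fun u u' => R u x w u')
      (by intros; simp [map_add, LinearMap.add_apply])
      (by intros; simp [map_smul, LinearMap.smul_apply, smul_eq_mul])
      (by intros; simp [map_add, LinearMap.add_apply])
      (by intros; simp [map_smul, LinearMap.smul_apply, smul_eq_mul]))
  simp only [LinearMap.mk₂_apply] at hT
  rw [Fin.sum_univ_four] at hT
  simp only [Matrix.cons_val_zero, Matrix.cons_val_one, Matrix.head_cons,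
    Matrix.cons_val_two, Matrix.tail_cons, Matrix.cons_val_three] at hT
  have hz1 : R x x w x = 0 := Rzero1 R hR1 x w x
  have hz2 : R w x w w = 0 := Rzero2 R hR2 w x w
  have hpt : ∀ i ∈ (Finset.univ : Finset ι),
      R (b i - ∑ k, ⟪b i, (![x, J x, w, J w]) k⟫ • (![x, J x, w, J w]) k) x w
        (b i - ∑ k, ⟪b i, (![x, J x, w, J w]) k⟫ • (![x, J x, w, J w]) k) = 0 := by
    intro i _
    obtain ⟨hp1, hp2, hp3, hp4⟩ := vperp4 J hJ2 hJg x w hx1 hw1 hxw hJxw (b i)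
    set v := b i - ∑ k, ⟪b i, (![x, J x, w, J w]) k⟫ • (![x, J x, w, J w]) k with hvdef
    have hJvx : ⟪J v, x⟫ = 0 := by have := jskew J hJ2 hJg v x; rw [this, hp2]; ring
    have hJvw : ⟪J v, w⟫ = 0 := by have := jskew J hJ2 hJg v w; rw [this, hp4]; ring
    have hP := P2 J R ν hR1 hR2 hRb hν2 v v x w hp1 hp1 hJvx hJvx hp3 hp3 hJvw hJvw
    rw [hxw] at hP
    have hm := Rs3 R hR1 hR2 hRb v x w
    linarith
  rw [Finset.sum_congr rfl hpt] at hT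
  simp only [Finset.sum_const_zero] at hT
  rw [hz1, hz2] at hT
  linarith

/-- identity I3 -/
private lemma I3lem (hJ2 : ∀ x : E, J (J x) = -x) (hJg : ∀ x y : E, ⟪J x, J y⟫ = ⟪x, y⟫)
    (hR1 : ∀ x y z u : E, R x y z u = - R y x z u)
    (hR2 : ∀ x y z u : E, R x y z u = - R x y u z)
    (hRb : ∀ x y z u : E, R x y z u + R y z x u + R z x y u = 0)
    (hν2 : ∀ x y : E, ⟪x, y⟫ = 0 → ⟪J x, y⟫ = 0 → R x y y x = ν * (⟪x, x⟫ * ⟪y, y⟫))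
    (x w u : E) (hx1 : ⟪x, x⟫ = 1) (hw1 : ⟪w, w⟫ = 1) (hxw : ⟪x, w⟫ = 0)
    (hJxw : ⟪J x, w⟫ = 0) (hu1 : ⟪u, u⟫ = 1)
    (hxu : ⟪x, u⟫ = 0) (hJxu : ⟪J x, u⟫ = 0) (hwu : ⟪w, u⟫ = 0) (hJwu : ⟪J w, u⟫ = 0) :
    3 * (R x (J w) u (J u) + R w (J x) u (J u)) = -2 * ∑ i, R (b i) x w (b i) := by
  set z : E := (3/5 : ℝ) • x + (4/5 : ℝ) • w with hzdef
  have hwx : ⟪w, x⟫ = 0 := by rw [real_inner_comm]; exact hxw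
  have hzz : ⟪z, z⟫ = 1 := by
    rw [hzdef]
    simp only [inner_add_left, inner_add_right, real_inner_smul_left, real_inner_smul_right,
      hx1, hw1, hxw, hwx]
    ring
  have hzu : ⟪z, u⟫ = 0 := by
    rw [hzdef, inner_add_left, real_inner_smul_left, real_inner_smul_left, hxu, hwu]; ring
  have hJzu : ⟪J z, u⟫ = 0 := by
    rw [hzdef, map_add, map_smul, map_smul, inner_add_left, real_inner_smul_left,
      real_inner_smul_left, hJxu, hJwu]; ring
  have hI1z := I1 J R ν hJ2 hJg hR1 hR2 hRb hν2 z u hzz hu1 hzu hJzu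
  have hI1x := I1 J R ν hJ2 hJg hR1 hR2 hRb hν2 x u hx1 hu1 hxu hJxu
  have hI1w := I1 J R ν hJ2 hJg hR1 hR2 hRb hν2 w u hw1 hu1 hwu hJwu
  have hDz := diagS J R ν b hJ2 hJg hR1 hR2 hRb hν2 z hzz
  have hDx := diagS J R ν b hJ2 hJg hR1 hR2 hRb hν2 x hx1
  have hDw := diagS J R ν b hJ2 hJg hR1 hR2 hRb hν2 w hw1
  -- expand the z-dependent quantities
  have hRz : R z (J z) u (J u) = (3/5)*((3/5) * R x (J x) u (J u) + (4/5) * R x (J w) u (J u))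
      + (4/5)*((3/5) * R w (J x) u (J u) + (4/5) * R w (J w) u (J u)) := by
    rw [hzdef]
    simp only [map_add, map_smul, LinearMap.add_apply, LinearMap.smul_apply, smul_eq_mul]
    ring
  have hSz : ∑ i, R (b i) z z (b i)
      = (9/25) * (∑ i, R (b i) x x (b i)) + (12/25) * (∑ i, R (b i) x w (b i))
        + (12/25) * (∑ i, R (b i) w x (b i)) + (16/25) * (∑ i, R (b i) w w (b i)) := by
    have hpt : ∀ i ∈ (Finset.univ : Finset ι), R (b i) z z (b i)
        = (9/25) * R (b i) x x (b i) + (12/25) * R (b i) x w (b i)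
          + (12/25) * R (b i) w x (b i) + (16/25) * R (b i) w w (b i) := by
      intro i _
      rw [hzdef]
      simp only [map_add, map_smul, LinearMap.add_apply, LinearMap.smul_apply, smul_eq_mul]
      ring
    rw [Finset.sum_congr rfl hpt]
    rw [Finset.sum_add_distrib, Finset.sum_add_distrib, Finset.sum_add_distrib,
      ← Finset.mul_sum, ← Finset.mul_sum, ← Finset.mul_sum, ← Finset.mul_sum]
  have hsymm : ∑ i, R (b i) w x (b i) = ∑ i, R (b i) x w (b i) := by
    refine Finset.sum_congr rfl fun i _ => ?_
    have h1 := Rpair R hR1 hR2 hRb (b i) w x (b i)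
    have h2 := Rs2 R hR1 hR2 hRb x (b i) w
    have h3 := Rpair R hR1 hR2 hRb (b i) x w (b i)
    linarith
  rw [hsymm] at hSz
  linarith [hI1z, hI1x, hI1w, hDz, hDx, hDw, hSz, hRz]

/-- Y-lemma: R(u,x,Jw,Ju) = S(x,w)⟪u,u⟫/6 -/
private lemma Ylem (hJ2 : ∀ x : E, J (J x) = -x) (hJg : ∀ x y : E, ⟪J x, J y⟫ = ⟪x, y⟫)
    (hR1 : ∀ x y z u : E, R x y z u = - R y x z u)
    (hR2 : ∀ x y z u : E, R x y z u = - R x y u z)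
    (hRb : ∀ x y z u : E, R x y z u + R y z x u + R z x y u = 0)
    (hRK : ∀ x y z u : E, R x y z u = R (J x) (J y) (J z) (J u))
    (hν2 : ∀ x y : E, ⟪x, y⟫ = 0 → ⟪J x, y⟫ = 0 → R x y y x = ν * (⟪x, x⟫ * ⟪y, y⟫))
    (x w u : E) (hx1 : ⟪x, x⟫ = 1) (hw1 : ⟪w, w⟫ = 1) (hxw : ⟪x, w⟫ = 0)
    (hJxw : ⟪J x, w⟫ = 0)
    (hxu : ⟪x, u⟫ = 0) (hJxu : ⟪J x, u⟫ = 0) (hwu : ⟪w, u⟫ = 0) (hJwu : ⟪J w, u⟫ = 0) :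
    6 * R u x (J w) (J u) = (∑ i, R (b i) x w (b i)) * ⟪u, u⟫ := by
  -- first the unit case, via an auxiliary claim
  have core : ∀ v : E, ⟪v, v⟫ = 1 → ⟪x, v⟫ = 0 → ⟪J x, v⟫ = 0 → ⟪w, v⟫ = 0 →
      ⟪J w, v⟫ = 0 → 6 * R v x (J w) (J v) = ∑ i, R (b i) x w (b i) := by
    intro v hv1 hxv hJxv hwv hJwv
    have hvx : ⟪v, x⟫ = 0 := by rw [real_inner_comm]; exact hxv
    have hvJx : ⟪v, J x⟫ = 0 := by rw [real_inner_comm]; exact hJxv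
    have hvw : ⟪v, w⟫ = 0 := by rw [real_inner_comm]; exact hwv
    have hvJw : ⟪v, J w⟫ = 0 := by rw [real_inner_comm]; exact hJwv
    have hJvx : ⟪J v, x⟫ = 0 := by have := jskew J hJ2 hJg v x; rw [this, hvJx]; ring
    have hJvw : ⟪J v, w⟫ = 0 := by have := jskew J hJ2 hJg v w; rw [this, hvJw]; ring
    have hJJvx : ⟪J (J v), x⟫ = 0 := by rw [hJ2, inner_neg_left, hvx]; ring
    have hJJvw : ⟪J (J v), w⟫ = 0 := by rw [hJ2, inner_neg_left, hvw]; ring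
    have hJvJx : ⟪J v, J x⟫ = 0 := by rw [hJg]; exact hvx
    have hJvJw : ⟪J v, J w⟫ = 0 := by rw [hJg]; exact hvw
    have hJJvJx : ⟪J (J v), J x⟫ = 0 := by rw [hJ2, inner_neg_left, hvJx]; ring
    have hJJvJw : ⟪J (J v), J w⟫ = 0 := by rw [hJ2, inner_neg_left, hvJw]; ring
    have hvJv : ⟪v, J v⟫ = 0 := jxx J hJ2 hJg v
    have hY1 := P2 J R ν hR1 hR2 hRb hν2 v (J v) x (J w) hvx hJvx hJvx hJJvx
      hvJw hJvJw hJvJw hJJvJw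
    rw [hvJv] at hY1
    have hB1 := hRb v (J w) x (J v)
    have hr1a := hR1 (J w) x v (J v)
    have hr1b := hR1 x v (J w) (J v)
    -- Z1 = -2 Y
    have hY2 := P2 J R ν hR1 hR2 hRb hν2 v (J v) w (J x) hvw hJvw hJvw hJJvw
      hvJx hJvJx hJvJx hJJvJx
    rw [hvJv] at hY2
    have hB2 := hRb v (J x) w (J v)
    have hr2a := hR1 (J x) w v (J v)
    have hr2b := hR1 w v (J x) (J v)
    -- Ybar = Y
    have hK := hRK v w (J x) (J v)
    rw [hJ2 x, hJ2 v] at hK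
    have hKn : R (J v) (J w) (-x) (-v) = R (J v) (J w) x v := by
      simp [map_neg]
    rw [hKn] at hK
    have hp := Rpair R hR1 hR2 hRb (J v) (J w) x v
    have hr3a := hR1 x v (J v) (J w)
    have hr3b := hR2 v x (J v) (J w)
    have hI3 := I3lem J R ν b hJ2 hJg hR1 hR2 hRb hν2 x w v hx1 hw1 hxw hJxw hv1
      hxv hJxv hwv hJwv
    linarith
  by_cases hu : u = 0
  · simp [hu]
  · have hr : ‖u‖ ≠ 0 := norm_ne_zero_iff.mpr hu
    set r := ‖u‖ with hrdef
    set v : E := r⁻¹ • u with hvdef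
    have hplug : u = r • v := by rw [hvdef, smul_smul, mul_inv_cancel₀ hr, one_smul]
    have hv1 : ⟪v, v⟫ = 1 := by
      rw [hvdef, real_inner_smul_left, real_inner_smul_right, real_inner_self_eq_norm_sq]
      rw [← hrdef]
      field_simp
    have hxv : ⟪x, v⟫ = 0 := by rw [hvdef, real_inner_smul_right, hxu]; ring
    have hJxv : ⟪J x, v⟫ = 0 := by rw [hvdef, real_inner_smul_right, hJxu]; ring
    have hwv : ⟪w, v⟫ = 0 := by rw [hvdef, real_inner_smul_right, hwu]; ring
    have hJwv : ⟪J w, v⟫ = 0 := by rw [hvdef, real_inner_smul_right, hJwu]; ring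
    have hcore := core v hv1 hxv hJxv hwv hJwv
    rw [hplug]
    simp only [map_smul, LinearMap.smul_apply, smul_eq_mul, real_inner_smul_left,
      real_inner_smul_right]
    rw [hv1]
    linear_combination (r ^ 2) * hcore

/-- 6 S'(x,w) = (N+2) S(x,w) -/
private lemma offS'xw (hJ2 : ∀ x : E, J (J x) = -x) (hJg : ∀ x y : E, ⟪J x, J y⟫ = ⟪x, y⟫)
    (hR1 : ∀ x y z u : E, R x y z u = - R y x z u)
    (hR2 : ∀ x y z u : E, R x y z u = - R x y u z)
    (hRb : ∀ x y z u : E, R x y z u + R y z x u + R z x y u = 0)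
    (hRK : ∀ x y z u : E, R x y z u = R (J x) (J y) (J z) (J u))
    (hν2 : ∀ x y : E, ⟪x, y⟫ = 0 → ⟪J x, y⟫ = 0 → R x y y x = ν * (⟪x, x⟫ * ⟪y, y⟫))
    (x w : E) (hx1 : ⟪x, x⟫ = 1) (hw1 : ⟪w, w⟫ = 1) (hxw : ⟪x, w⟫ = 0)
    (hJxw : ⟪J x, w⟫ = 0) :
    6 * ∑ i, R (b i) x (J w) (J (b i))
      = ((Fintype.card ι : ℝ) + 2) * ∑ i, R (b i) x w (b i) := by
  have hc := hc4 J hJ2 hJg x w hx1 hw1 hxw hJxw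
  have hT := split_sum b (![x, J x, w, J w]) hc
    (LinearMap.mk₂ ℝ (fun u u' => R u x (J w) (J u'))
      (by intros; simp [map_add, LinearMap.add_apply])
      (by intros; simp [map_smul, LinearMap.smul_apply, smul_eq_mul])
      (by intros; simp [map_add, LinearMap.add_apply])
      (by intros; simp [map_smul, LinearMap.smul_apply, smul_eq_mul]))
  have hI := split_sum b (![x, J x, w, J w]) hc
    (LinearMap.mk₂ ℝ (fun u u' => (⟪u, u'⟫ : ℝ))
      (by intros; simp [inner_add_left])
      (by intros; simp [real_inner_smul_left])
      (by intros; simp [inner_add_right])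
      (by intros; simp [real_inner_smul_right]))
  simp only [LinearMap.mk₂_apply] at hT hI
  rw [Fin.sum_univ_four] at hT hI
  simp only [Matrix.cons_val_zero, Matrix.cons_val_one, Matrix.head_cons,
    Matrix.cons_val_two, Matrix.tail_cons, Matrix.cons_val_three] at hT hI
  have hcard : ∑ i : ι, ⟪b i, b i⟫ = (Fintype.card ι : ℝ) := by
    have h1 : ∀ i : ι, ⟪b i, b i⟫ = (1:ℝ) := by
      intro i
      rw [real_inner_self_eq_norm_sq, b.orthonormal.1 i]
      norm_num
    rw [Finset.sum_congr rfl fun i _ => h1 i]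
    simp
  have hJxJx : ⟪J x, J x⟫ = 1 := by rw [hJg]; exact hx1
  have hJwJw : ⟪J w, J w⟫ = 1 := by rw [hJg]; exact hw1
  rw [hcard, hx1, hw1, hJxJx, hJwJw] at hI
  -- corner values
  have hz1 : R x x (J w) (J x) = 0 := Rzero1 R hR1 x (J w) (J x)
  have hz2 : R w x (J w) (J w) = 0 := Rzero2 R hR2 w x (J w)
  have hcJx : R (J x) x (J w) (J (J x)) = R (J x) x w (J x) := by
    rw [hJ2]
    have hneg : R (J x) x (J w) (-x) = - R (J x) x (J w) x := by simp [map_neg]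
    have hK := hRK (J x) x (J w) x
    rw [hJ2 x, hJ2 w] at hK
    have hKn : R (-x) (J x) (-w) (J x) = R x (J x) w (J x) := by
      rw [hR1 (-x)]; simp [map_neg]; linarith [hR1 x (J x) w (J x)]
    rw [hKn] at hK
    have hr := hR1 x (J x) w (J x)
    rw [hneg]
    linarith
  have hcJw : R (J w) x (J w) (J (J w)) = R (J w) x w (J w) := by
    rw [hJ2]
    have hneg : R (J w) x (J w) (-w) = - R (J w) x (J w) w := by simp [map_neg]
    have hp1 := Rpair R hR1 hR2 hRb (J w) x (J w) w
    have hr1 := hR1 (J w) w (J w) x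
    have hp2 := Rpair R hR1 hR2 hRb (J w) x w (J w)
    have hr2 := hR1 w (J w) (J w) x
    rw [hneg]
    linarith
  rw [hz1, hz2, hcJx, hcJw] at hT
  -- residuals
  have hpt : ∀ i ∈ (Finset.univ : Finset ι),
      R (b i - ∑ k, ⟪b i, (![x, J x, w, J w]) k⟫ • (![x, J x, w, J w]) k) x (J w)
        (J (b i - ∑ k, ⟪b i, (![x, J x, w, J w]) k⟫ • (![x, J x, w, J w]) k))
      = (1/6) * ((∑ j, R (b j) x w (b j)) *
          ⟪(b i - ∑ k, ⟪b i, (![x, J x, w, J w]) k⟫ • (![x, J x, w, J w]) k),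
           (b i - ∑ k, ⟪b i, (![x, J x, w, J w]) k⟫ • (![x, J x, w, J w]) k)⟫) := by
    intro i _
    obtain ⟨hp1, hp2, hp3, hp4⟩ := vperp4 J hJ2 hJg x w hx1 hw1 hxw hJxw (b i)
    set v := b i - ∑ k, ⟪b i, (![x, J x, w, J w]) k⟫ • (![x, J x, w, J w]) k with hvdef
    have hxv : ⟪x, v⟫ = 0 := by rw [real_inner_comm]; exact hp1
    have hJxv : ⟪J x, v⟫ = 0 := by rw [real_inner_comm]; exact hp2
    have hwv : ⟪w, v⟫ = 0 := by rw [real_inner_comm]; exact hp3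
    have hJwv : ⟪J w, v⟫ = 0 := by rw [real_inner_comm]; exact hp4
    have hY := Ylem J R ν b hJ2 hJg hR1 hR2 hRb hRK hν2 x w v hx1 hw1 hxw hJxw
      hxv hJxv hwv hJwv
    linarith
  have hsum := Finset.sum_congr rfl hpt
  rw [← Finset.mul_sum, ← Finset.mul_sum] at hsum
  have hD7 := offSxw J R ν b hJ2 hJg hR1 hR2 hRb hν2 x w hx1 hw1 hxw hJxw
  linear_combination 6 * hT + 6 * hsum - (∑ j, R (b j) x w (b j)) * hI - 6 * hD7

end Traces

end Aux

/-- Proposition 1, equation (7): 3S' - (n+1)S = (1/(2n))(3τ' - (n+1)τ) g. -/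
theorem stmt_3 {E : Type*} [NormedAddCommGroup E] [InnerProductSpace ℝ E]
    {n : ℕ} (hn : 4 ≤ 2 * n)
    (b : OrthonormalBasis (Fin (2 * n)) ℝ E)
    (J : E →ₗ[ℝ] E)
    (hJ2 : ∀ x : E, J (J x) = -x)
    (hJg : ∀ x y : E, ⟪J x, J y⟫ = ⟪x, y⟫)
    (R : E →ₗ[ℝ] E →ₗ[ℝ] E →ₗ[ℝ] E →ₗ[ℝ] ℝ)
    (hR1 : ∀ x y z u : E, R x y z u = - R y x z u)
    (hR2 : ∀ x y z u : E, R x y z u = - R x y u z)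
    (hRb : ∀ x y z u : E, R x y z u + R y z x u + R z x y u = 0)
    (hRK : ∀ x y z u : E, R x y z u = R (J x) (J y) (J z) (J u))
    (ν : ℝ)
    (hν : ∀ x y : E, ‖x‖ = 1 → ‖y‖ = 1 → ⟪x, y⟫ = 0 → ⟪J x, y⟫ = 0 →
      R x y y x = ν)
    (S : E → E → ℝ)
    (hS : ∀ x y : E, S x y = ∑ i, R (b i) x y (b i))
    (S' : E → E → ℝ)
    (hS' : ∀ x y : E, S' x y = ∑ i, R (b i) x (J y) (J (b i)))
    (τ τ' : ℝ)
    (hτ : τ = ∑ i, S (b i) (b i))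
    (hτ' : τ' = ∑ i, S' (b i) (b i)) :
    ∀ x y : E, 3 * S' x y - ((n : ℝ) + 1) * S x y =
      (1 / (2 * (n : ℝ))) * (3 * τ' - ((n : ℝ) + 1) * τ) * ⟪x, y⟫ := by
  have hν2 : ∀ x y : E, ⟪x, y⟫ = 0 → ⟪J x, y⟫ = 0 → R x y y x = ν * (⟪x, x⟫ * ⟪y, y⟫) :=
    fun x y => hnu2 J R ν hν x y
  have hNcast : ((Fintype.card (Fin (2*n)) : ℝ)) = 2*(n:ℝ) := by
    rw [Fintype.card_fin]; push_cast; ring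
  set K : ℝ := τ/2 - ((2*(n:ℝ))^2 - 4)*ν with hKdef
  have hττ : τ = ∑ i, ∑ j, R (b j) (b i) (b i) (b j) := by
    rw [hτ]; exact Finset.sum_congr rfl fun i _ => hS (b i) (b i)
  -- diagonal lemma
  have hBdiag : ∀ z : E, ⟪z, z⟫ = 1 → 3 * S' z z - ((n:ℝ)+1) * S z z = K := by
    intro z hz
    have hDS := diagS J R ν b hJ2 hJg hR1 hR2 hRb hν2 z hz
    have hDS' := diagS' J R ν b hJ2 hJg hR1 hR2 hRb hν2 z hz
    rw [hNcast] at hDS hDS'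
    rw [← hττ] at hDS'
    have e1 : S z z = (2*(n:ℝ) - 2)*ν + R z (J z) (J z) z := by rw [hS z z]; exact hDS
    have e2 : 6 * S' z z = (2*(n:ℝ) + 2) * R z (J z) (J z) z + τ - ((2*(n:ℝ))^2 - 4)*ν := by
      rw [hS' z z]; exact hDS'
    rw [hKdef]
    linear_combination (1/2)*e2 - ((n:ℝ)+1)*e1
  -- J-diagonal lemma
  have hBJ : ∀ z : E, ⟪z, z⟫ = 1 →
      S z (J z) = 0 ∧ S' z (J z) = 0 := by
    intro z hz
    constructor
    · rw [hS z (J z)]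
      exact offSxJx J R ν b hJ2 hJg hR1 hR2 hRb hν2 z hz
    · rw [hS' z (J z)]
      have hpt : ∀ i ∈ (Finset.univ : Finset (Fin (2*n))),
          R (b i) z (J (J z)) (J (b i)) = -(R (b i) z z (J (b i))) := by
        intro i _
        rw [hJ2]
        simp [map_neg]
      rw [Finset.sum_congr rfl hpt, Finset.sum_neg_distrib,
        offS'xJx J R ν b hJ2 hJg hR1 hR2 hRb hν2 z hz]
      ring
  -- orthogonal antiholomorphic lemma
  have hBw : ∀ z w : E, ⟪z, z⟫ = 1 → ⟪w, w⟫ = 1 → ⟪z, w⟫ = 0 → ⟪J z, w⟫ = 0 →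
      3 * S' z w - ((n:ℝ)+1) * S z w = 0 := by
    intro z w hz hw hzw hJzw
    have hD := offS'xw J R ν b hJ2 hJg hR1 hR2 hRb hRK hν2 z w hz hw hzw hJzw
    rw [hNcast] at hD
    have e1 : 6 * S' z w = (2*(n:ℝ)+2) * S z w := by
      rw [hS' z w, hS z w]; exact hD
    linear_combination (1/2)*e1
  -- value of the constant
  have hBi : ∀ i : Fin (2*n), 3 * S' (b i) (b i) - ((n:ℝ)+1) * S (b i) (b i) = K := by
    intro i
    refine hBdiag (b i) ?_
    rw [real_inner_self_eq_norm_sq, b.orthonormal.1 i]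
    norm_num
  have hn0 : (n:ℝ) ≠ 0 := by
    have : 2 ≤ n := by omega
    have : (2:ℝ) ≤ (n:ℝ) := by exact_mod_cast this
    linarith
  have hK : 3*τ' - ((n:ℝ)+1)*τ = (2*(n:ℝ)) * K := by
    rw [hτ, hτ', Finset.mul_sum, Finset.mul_sum, ← Finset.sum_sub_distrib]
    rw [Finset.sum_congr rfl (fun i _ => hBi i)]
    rw [Finset.sum_const, Finset.card_univ, Fintype.card_fin, nsmul_eq_mul]
    push_cast; ring
  have hc : (1 / (2 * (n:ℝ))) * (3 * τ' - ((n : ℝ) + 1) * τ) = K := by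
    rw [hK]; field_simp
  -- linearity helpers
  have hSmull : ∀ (t:ℝ) (p q : E), S (t•p) q = t * S p q := by
    intro t p q
    rw [hS (t•p) q, hS p q, Finset.mul_sum]
    refine Finset.sum_congr rfl fun i _ => ?_
    simp [map_smul, LinearMap.smul_apply, smul_eq_mul]
  have hS'mull : ∀ (t:ℝ) (p q : E), S' (t•p) q = t * S' p q := by
    intro t p q
    rw [hS' (t•p) q, hS' p q, Finset.mul_sum]
    refine Finset.sum_congr rfl fun i _ => ?_
    simp [map_smul, LinearMap.smul_apply, smul_eq_mul]
  have hSmulr : ∀ (t:ℝ) (p q : E), S p (t•q) = t * S p q := by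
    intro t p q
    rw [hS p (t•q), hS p q, Finset.mul_sum]
    refine Finset.sum_congr rfl fun i _ => ?_
    simp [map_smul, LinearMap.smul_apply, smul_eq_mul]
  have hS'mulr : ∀ (t:ℝ) (p q : E), S' p (t•q) = t * S' p q := by
    intro t p q
    rw [hS' p (t•q), hS' p q, Finset.mul_sum]
    refine Finset.sum_congr rfl fun i _ => ?_
    simp [map_smul, LinearMap.smul_apply, smul_eq_mul]
  have hSlin2 : ∀ (p : E) (t1 t2 : ℝ) (q1 q2 q3 : E),
      S p (t1•q1 + t2•q2 + q3) = t1 * S p q1 + t2 * S p q2 + S p q3 := by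
    intro p t1 t2 q1 q2 q3
    rw [hS p _, hS p q1, hS p q2, hS p q3]
    have hpt : ∀ i ∈ (Finset.univ : Finset (Fin (2*n))),
        R (b i) p (t1•q1 + t2•q2 + q3) (b i)
        = t1 * R (b i) p q1 (b i) + t2 * R (b i) p q2 (b i) + R (b i) p q3 (b i) := by
      intro i _
      simp [map_add, map_smul, LinearMap.add_apply, LinearMap.smul_apply, smul_eq_mul]
    rw [Finset.sum_congr rfl hpt, Finset.sum_add_distrib, Finset.sum_add_distrib,
      ← Finset.mul_sum, ← Finset.mul_sum]
  have hS'lin2 : ∀ (p : E) (t1 t2 : ℝ) (q1 q2 q3 : E),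
      S' p (t1•q1 + t2•q2 + q3) = t1 * S' p q1 + t2 * S' p q2 + S' p q3 := by
    intro p t1 t2 q1 q2 q3
    rw [hS' p _, hS' p q1, hS' p q2, hS' p q3]
    have hpt : ∀ i ∈ (Finset.univ : Finset (Fin (2*n))),
        R (b i) p (J (t1•q1 + t2•q2 + q3)) (J (b i))
        = t1 * R (b i) p (J q1) (J (b i)) + t2 * R (b i) p (J q2) (J (b i))
          + R (b i) p (J q3) (J (b i)) := by
      intro i _
      simp [map_add, map_smul, LinearMap.add_apply, LinearMap.smul_apply, smul_eq_mul]
    rw [Finset.sum_congr rfl hpt, Finset.sum_add_distrib, Finset.sum_add_distrib,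
      ← Finset.mul_sum, ← Finset.mul_sum]
  have hSzero : ∀ p : E, S p 0 = 0 := by
    intro p
    rw [hS p 0]
    refine Finset.sum_eq_zero fun i _ => by simp
  have hS'zero : ∀ p : E, S' p 0 = 0 := by
    intro p
    rw [hS' p 0]
    refine Finset.sum_eq_zero fun i _ => by simp
  -- main
  intro x y
  rw [hc]
  by_cases hx0 : x = 0
  · subst hx0
    have h1 : S 0 y = 0 := by
      rw [hS 0 y]
      refine Finset.sum_eq_zero fun i _ => by simp
    have h2 : S' 0 y = 0 := by
      rw [hS' 0 y]
      refine Finset.sum_eq_zero fun i _ => by simp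
    rw [h1, h2, inner_zero_left]
    ring
  · have hr : ‖x‖ ≠ 0 := norm_ne_zero_iff.mpr hx0
    set r := ‖x‖ with hrdef
    obtain ⟨x1, hx1def⟩ : ∃ z : E, z = r⁻¹ • x := ⟨_, rfl⟩
    have hplug : x = r • x1 := by rw [hx1def, smul_smul, mul_inv_cancel₀ hr, one_smul]
    have hx1u : ⟪x1, x1⟫ = 1 := by
      rw [hx1def, real_inner_smul_left, real_inner_smul_right, real_inner_self_eq_norm_sq]
      rw [← hrdef]
      field_simp
    set a : ℝ := ⟪x1, y⟫ with hadef
    set a2 : ℝ := ⟪J x1, y⟫ with ha2def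
    obtain ⟨w, hwdef⟩ : ∃ z : E, z = y - a • x1 - a2 • (J x1) := ⟨_, rfl⟩
    have hydecomp : y = a • x1 + a2 • (J x1) + w := by rw [hwdef]; abel
    have hJx1Jx1 : ⟪J x1, J x1⟫ = 1 := by rw [hJg]; exact hx1u
    have hx1Jx1 : ⟪x1, J x1⟫ = 0 := jxx J hJ2 hJg x1
    have hJx1x1 : ⟪J x1, x1⟫ = 0 := by rw [real_inner_comm]; exact hx1Jx1
    have hx1w : ⟪x1, w⟫ = 0 := by
      rw [hwdef, inner_sub_right, inner_sub_right, real_inner_smul_right,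
        real_inner_smul_right, hx1u, hx1Jx1, ← hadef]
      ring
    have hJx1w : ⟪J x1, w⟫ = 0 := by
      rw [hwdef, inner_sub_right, inner_sub_right, real_inner_smul_right,
        real_inner_smul_right, hJx1x1, hJx1Jx1, ← ha2def]
      ring
    -- B(x1, w) = 0
    have hw0 : 3 * S' x1 w - ((n:ℝ)+1) * S x1 w = 0 := by
      by_cases hw : w = 0
      · rw [hw, hSzero, hS'zero]; ring
      · have hrw : ‖w‖ ≠ 0 := norm_ne_zero_iff.mpr hw
        obtain ⟨w1, hw1def⟩ : ∃ z : E, z = ‖w‖⁻¹ • w := ⟨_, rfl⟩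
        have hwplug : w = ‖w‖ • w1 := by
          rw [hw1def, smul_smul, mul_inv_cancel₀ hrw, one_smul]
        have hw1u : ⟪w1, w1⟫ = 1 := by
          rw [hw1def, real_inner_smul_left, real_inner_smul_right,
            real_inner_self_eq_norm_sq]
          field_simp
        have hx1w1 : ⟪x1, w1⟫ = 0 := by
          rw [hw1def, real_inner_smul_right, hx1w]; ring
        have hJx1w1 : ⟪J x1, w1⟫ = 0 := by
          rw [hw1def, real_inner_smul_right, hJx1w]; ring
        have hB := hBw x1 w1 hx1u hw1u hx1w1 hJx1w1
        rw [hwplug, hSmulr, hS'mulr]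
        linear_combination ‖w‖ * hB
    have hdiagv := hBdiag x1 hx1u
    obtain ⟨hJ1, hJ2'⟩ := hBJ x1 hx1u
    -- B(x1, y) = a * K
    have hBx1y : 3 * S' x1 y - ((n:ℝ)+1) * S x1 y = a * K := by
      conv_lhs => rw [hydecomp]
      rw [hSlin2, hS'lin2]
      rw [hJ1, hJ2']
      linear_combination a * hdiagv + hw0
    -- conclude
    rw [hplug, hSmull, hS'mull, real_inner_smul_left]
    rw [← hadef]  -- ⟪x1, y⟫ = a
    linear_combination r * hBx1y
end

section
/- Let E be a real inner product space of dimension 2n with 2n ≥ 4, J a compatible almost complex structure, and R an algebraic curvature tensor on E that is an RK-tensor and has constant antiholomorphic sectional curvature ν. Then ν = ((2n+1)τ - 3τ') / (8n(n²-1)), where τ is the scalar curvature of R and τ' is the scalar curvature of R'(x,y,z,u) = R(x,y,Jz,Ju). -/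
open scoped RealInnerProductSpace

section Aux
variable {E : Type*} [NormedAddCommGroup E] [InnerProductSpace ℝ E] {n : ℕ}

theorem aux_repr (b : OrthonormalBasis (Fin (2 * n)) ℝ E) (v : E) :
    ∑ j, ⟪v, b j⟫ • b j = v := by
  calc ∑ j, ⟪v, b j⟫ • b j = ∑ j, ⟪b j, v⟫ • b j :=
        Finset.sum_congr rfl (fun j _ => by rw [real_inner_comm])
    _ = v := b.sum_repr' v

theorem aux_inner_sum (b : OrthonormalBasis (Fin (2 * n)) ℝ E) (v w : E) :
    ∑ j, ⟪v, b j⟫ * ⟪w, b j⟫ = ⟪v, w⟫ := by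
  calc ∑ j, ⟪v, b j⟫ * ⟪w, b j⟫ = ∑ j, ⟪v, b j⟫ * ⟪b j, w⟫ :=
        Finset.sum_congr rfl (fun j _ => by rw [real_inner_comm w])
    _ = ⟪v, w⟫ := b.sum_inner_mul_inner v w

theorem aux_J_inner (J : E →ₗ[ℝ] E)
    (hJ2 : ∀ x : E, J (J x) = -x)
    (hJg : ∀ x y : E, ⟪J x, J y⟫ = ⟪x, y⟫) :
    ∀ x y : E, ⟪x, J y⟫ = -⟪J x, y⟫ := by
  intro x y
  have h := hJg x (J y)
  rw [hJ2 y, inner_neg_right] at h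
  linarith

theorem aux_xJx (J : E →ₗ[ℝ] E)
    (hJ2 : ∀ x : E, J (J x) = -x)
    (hJg : ∀ x y : E, ⟪J x, J y⟫ = ⟪x, y⟫) :
    ∀ x : E, ⟪x, J x⟫ = 0 := by
  intro x
  have h := aux_J_inner J hJ2 hJg x x
  have h2 : ⟪J x, x⟫ = ⟪x, J x⟫ := real_inner_comm _ _
  linarith

theorem aux_proj_orth (b : OrthonormalBasis (Fin (2 * n)) ℝ E) (J : E →ₗ[ℝ] E)
    (hJ2 : ∀ x : E, J (J x) = -x)
    (hJg : ∀ x y : E, ⟪J x, J y⟫ = ⟪x, y⟫)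
    (x : E) (hx : ⟪x, x⟫ = 1) (j : Fin (2 * n)) :
    ⟪x, b j - ⟪x, b j⟫ • x - ⟪J x, b j⟫ • J x⟫ = 0 ∧
    ⟪J x, b j - ⟪x, b j⟫ • x - ⟪J x, b j⟫ • J x⟫ = 0 := by
  have hxJ : ⟪x, J x⟫ = 0 := aux_xJx J hJ2 hJg x
  have hJx : ⟪J x, x⟫ = 0 := by rw [real_inner_comm]; exact hxJ
  have hJJ : ⟪J x, J x⟫ = 1 := by rw [hJg]; exact hx
  constructor
  · rw [inner_sub_right, inner_sub_right, real_inner_smul_right, real_inner_smul_right,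
      hx, hxJ]
    ring
  · rw [inner_sub_right, inner_sub_right, real_inner_smul_right, real_inner_smul_right,
      hJx, hJJ]
    ring

theorem aux_proj_self (b : OrthonormalBasis (Fin (2 * n)) ℝ E) (J : E →ₗ[ℝ] E)
    (hJ2 : ∀ x : E, J (J x) = -x)
    (hJg : ∀ x y : E, ⟪J x, J y⟫ = ⟪x, y⟫)
    (x : E) (hx : ⟪x, x⟫ = 1) (j : Fin (2 * n)) :
    ⟪b j - ⟪x, b j⟫ • x - ⟪J x, b j⟫ • J x, b j - ⟪x, b j⟫ • x - ⟪J x, b j⟫ • J x⟫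
      = ⟪b j, b j⟫ - ⟪x, b j⟫ * ⟪x, b j⟫ - ⟪J x, b j⟫ * ⟪J x, b j⟫ := by
  have hxJ : ⟪x, J x⟫ = 0 := aux_xJx J hJ2 hJg x
  have hJx : ⟪J x, x⟫ = 0 := by rw [real_inner_comm]; exact hxJ
  have hJJ : ⟪J x, J x⟫ = 1 := by rw [hJg]; exact hx
  have hbx : ⟪b j, x⟫ = ⟪x, b j⟫ := real_inner_comm _ _
  have hbJ : ⟪b j, J x⟫ = ⟪J x, b j⟫ := real_inner_comm _ _
  simp only [inner_sub_left, inner_sub_right, real_inner_smul_left, real_inner_smul_right,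
    hx, hxJ, hJx, hJJ, hbx, hbJ]
  ring

theorem aux_proj_coef_sum (b : OrthonormalBasis (Fin (2 * n)) ℝ E) (J : E →ₗ[ℝ] E)
    (hJ2 : ∀ x : E, J (J x) = -x)
    (hJg : ∀ x y : E, ⟪J x, J y⟫ = ⟪x, y⟫)
    (x : E) (hx : ⟪x, x⟫ = 1) :
    ∑ j, ⟪J x, b j⟫ • (b j - ⟪x, b j⟫ • x - ⟪J x, b j⟫ • J x) = 0 := by
  have hJx : ⟪J x, x⟫ = 0 := by rw [real_inner_comm]; exact aux_xJx J hJ2 hJg x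
  have hJJ : ⟪J x, J x⟫ = 1 := by rw [hJg]; exact hx
  have e1 : ∑ j, ⟪J x, b j⟫ • b j = J x := aux_repr b (J x)
  have e2 : ∑ j, (⟪J x, b j⟫ * ⟪x, b j⟫) • x = (0:ℝ) • x := by
    rw [← Finset.sum_smul]
    congr 1
    calc ∑ j, ⟪J x, b j⟫ * ⟪x, b j⟫ = ⟪J x, x⟫ := aux_inner_sum b (J x) x
      _ = 0 := hJx
  have e3 : ∑ j, (⟪J x, b j⟫ * ⟪J x, b j⟫) • J x = (1:ℝ) • J x := by
    rw [← Finset.sum_smul]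
    congr 1
    calc ∑ j, ⟪J x, b j⟫ * ⟪J x, b j⟫ = ⟪J x, J x⟫ := aux_inner_sum b (J x) (J x)
      _ = 1 := hJJ
  calc ∑ j, ⟪J x, b j⟫ • (b j - ⟪x, b j⟫ • x - ⟪J x, b j⟫ • J x)
      = (∑ j, ⟪J x, b j⟫ • b j) - (∑ j, (⟪J x, b j⟫ * ⟪x, b j⟫) • x)
        - (∑ j, (⟪J x, b j⟫ * ⟪J x, b j⟫) • J x) := by
        rw [← Finset.sum_sub_distrib, ← Finset.sum_sub_distrib]
        exact Finset.sum_congr rfl (fun j _ => by rw [smul_sub, smul_sub, smul_smul, smul_smul])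
    _ = 0 := by rw [e1, e2, e3]; simp

theorem aux_card_sum (b : OrthonormalBasis (Fin (2 * n)) ℝ E) :
    ∑ j : Fin (2 * n), ⟪b j, b j⟫ = 2 * (n : ℝ) := by
  have h : ∀ j, ⟪b j, b j⟫ = (1 : ℝ) := fun j => by
    rw [real_inner_self_eq_norm_mul_norm, b.orthonormal.1 j]; norm_num
  rw [Finset.sum_congr rfl (fun j _ => h j), Finset.sum_const, Finset.card_univ,
    Fintype.card_fin, nsmul_eq_mul]
  push_cast; ring

/-- Step 1: for unit x, ∑_j R x (b j) (b j) x = R x (Jx) (Jx) x + (2n-2) ν -/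
theorem aux_step1 (b : OrthonormalBasis (Fin (2 * n)) ℝ E) (J : E →ₗ[ℝ] E)
    (hJ2 : ∀ x : E, J (J x) = -x)
    (hJg : ∀ x y : E, ⟪J x, J y⟫ = ⟪x, y⟫)
    (R : E →ₗ[ℝ] E →ₗ[ℝ] E →ₗ[ℝ] E →ₗ[ℝ] ℝ)
    (hR1 : ∀ x y z u : E, R x y z u = - R y x z u)
    (hR2 : ∀ x y z u : E, R x y z u = - R x y u z)
    (ν : ℝ)
    (hν2 : ∀ x y : E, ⟪x, y⟫ = 0 → ⟪J x, y⟫ = 0 → R x y y x = ν * (⟪x, x⟫ * ⟪y, y⟫))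
    (x : E) (hx : ⟪x, x⟫ = 1) :
    ∑ j, R x (b j) (b j) x = R x (J x) (J x) x + (2 * (n : ℝ) - 2) * ν := by
  have hR0a : ∀ z u w : E, R z z u w = 0 := fun z u w => by linarith [hR1 z z u w]
  have hR0b : ∀ z u w : E, R z u w w = 0 := fun z u w => by linarith [hR2 z u w w]
  have hJJ : ⟪J x, J x⟫ = 1 := by rw [hJg]; exact hx
  have key : ∀ j, R x (b j) (b j) x =
      ⟪J x, b j⟫ * ⟪J x, b j⟫ * R x (J x) (J x) x
      + (⟪J x, b j⟫ * R x (J x) (b j - ⟪x, b j⟫ • x - ⟪J x, b j⟫ • J x) x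
         + ⟪J x, b j⟫ * R x (b j - ⟪x, b j⟫ • x - ⟪J x, b j⟫ • J x) (J x) x)
      + ν * (⟪b j, b j⟫ - ⟪x, b j⟫ * ⟪x, b j⟫ - ⟪J x, b j⟫ * ⟪J x, b j⟫) := by
    intro j
    obtain ⟨h1, h2⟩ := aux_proj_orth b J hJ2 hJg x hx j
    have h3 := aux_proj_self b J hJ2 hJg x hx j
    have hyval := hν2 x _ h1 h2
    rw [hx, one_mul, h3] at hyval
    have hdec : b j = ⟪x, b j⟫ • x + ⟪J x, b j⟫ • J x
        + (b j - ⟪x, b j⟫ • x - ⟪J x, b j⟫ • J x) := by module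
    conv_lhs => rw [hdec]
    simp only [map_add, map_smul, LinearMap.add_apply, LinearMap.smul_apply, smul_eq_mul,
      hR0a, hR0b]
    rw [hyval]
    ring
  rw [Finset.sum_congr rfl (fun j _ => key j), Finset.sum_add_distrib, Finset.sum_add_distrib]
  have hA : ∑ j, ⟪J x, b j⟫ * ⟪J x, b j⟫ * R x (J x) (J x) x = R x (J x) (J x) x := by
    rw [← Finset.sum_mul, aux_inner_sum b (J x) (J x), hJJ, one_mul]
  have z1 : ∑ j, ⟪J x, b j⟫ * R x (J x) (b j - ⟪x, b j⟫ • x - ⟪J x, b j⟫ • J x) x = 0 := by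
    have h := congrArg (fun v => R x (J x) v x) (aux_proj_coef_sum b J hJ2 hJg x hx)
    simp only [map_sum, map_smul, LinearMap.sum_apply, LinearMap.smul_apply, smul_eq_mul,
      map_zero, LinearMap.zero_apply] at h
    exact h
  have z2 : ∑ j, ⟪J x, b j⟫ * R x (b j - ⟪x, b j⟫ • x - ⟪J x, b j⟫ • J x) (J x) x = 0 := by
    have h := congrArg (fun v => R x v (J x) x) (aux_proj_coef_sum b J hJ2 hJg x hx)
    simp only [map_sum, map_smul, LinearMap.sum_apply, LinearMap.smul_apply, smul_eq_mul,
      map_zero, LinearMap.zero_apply] at h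
    exact h
  have hB : ∑ j, (⟪J x, b j⟫ * R x (J x) (b j - ⟪x, b j⟫ • x - ⟪J x, b j⟫ • J x) x
      + ⟪J x, b j⟫ * R x (b j - ⟪x, b j⟫ • x - ⟪J x, b j⟫ • J x) (J x) x) = 0 := by
    rw [Finset.sum_add_distrib, z1, z2]; ring
  have hC : ∑ j, ν * (⟪b j, b j⟫ - ⟪x, b j⟫ * ⟪x, b j⟫ - ⟪J x, b j⟫ * ⟪J x, b j⟫)
      = ν * (2 * (n:ℝ) - 2) := by
    rw [← Finset.mul_sum]
    congr 1
    rw [Finset.sum_sub_distrib, Finset.sum_sub_distrib, aux_card_sum b,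
      aux_inner_sum b x x, aux_inner_sum b (J x) (J x), hx, hJJ]
    ring
  rw [hA, hB, hC]
  ring

-- pair swap symmetry
theorem aux_pair_swap (R : E →ₗ[ℝ] E →ₗ[ℝ] E →ₗ[ℝ] E →ₗ[ℝ] ℝ)
    (hR1 : ∀ x y z u : E, R x y z u = - R y x z u)
    (hR2 : ∀ x y z u : E, R x y z u = - R x y u z)
    (hRb : ∀ x y z u : E, R x y z u + R y z x u + R z x y u = 0) :
    ∀ x y z u : E, R x y z u = R z u x y := by
  intro x y z u
  linarith [hRb z x y u, hRb x y u z, hRb y u z x, hRb u z x y,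
    hR2 x y z u, hR2 y u x z, hR1 u z y x, hR2 z u x y, hR1 z y u x,
    hR2 y z x u, hR1 u z x y, hR2 z x y u, hR1 x u z y, hR2 u x y z]


theorem aux_norm_one (v : E) (h : ⟪v, v⟫ = 1) : ‖v‖ = 1 := by
  have h1 : ⟪v, v⟫ = ‖v‖ * ‖v‖ := real_inner_self_eq_norm_mul_norm v
  have h2 : (‖v‖ - 1) * (‖v‖ + 1) = 0 := by nlinarith
  rcases mul_eq_zero.1 h2 with h3 | h3
  · linarith
  · linarith [norm_nonneg v]

-- scaled version of the constant antiholomorphic curvature hypothesis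
theorem aux_nu2 (J : E →ₗ[ℝ] E) (R : E →ₗ[ℝ] E →ₗ[ℝ] E →ₗ[ℝ] E →ₗ[ℝ] ℝ) (ν : ℝ)
    (hν : ∀ x y : E, ‖x‖ = 1 → ‖y‖ = 1 → ⟪x, y⟫ = 0 → ⟪J x, y⟫ = 0 → R x y y x = ν) :
    ∀ x y : E, ⟪x, y⟫ = 0 → ⟪J x, y⟫ = 0 →
      R x y y x = ν * (⟪x, x⟫ * ⟪y, y⟫) := by
  intro x y h1 h2
  rcases eq_or_ne x 0 with rfl | hx
  · simp
  rcases eq_or_ne y 0 with rfl | hy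
  · simp
  have hxn : ‖x‖ ≠ 0 := norm_ne_zero_iff.2 hx
  have hyn : ‖y‖ ≠ 0 := norm_ne_zero_iff.2 hy
  have key := hν (‖x‖⁻¹ • x) (‖y‖⁻¹ • y) ?_ ?_ ?_ ?_
  · have expand : R (‖x‖⁻¹ • x) (‖y‖⁻¹ • y) (‖y‖⁻¹ • y) (‖x‖⁻¹ • x)
        = ‖x‖⁻¹ * (‖y‖⁻¹ * (‖y‖⁻¹ * (‖x‖⁻¹ * R x y y x))) := by
      simp [map_smul, LinearMap.smul_apply, smul_eq_mul]
    rw [expand] at key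
    have hx2 : ⟪x, x⟫ = ‖x‖ * ‖x‖ := real_inner_self_eq_norm_mul_norm x
    have hy2 : ⟪y, y⟫ = ‖y‖ * ‖y‖ := real_inner_self_eq_norm_mul_norm y
    rw [hx2, hy2]
    field_simp at key ⊢
    nlinarith [key]
  · rw [norm_smul]
    simp [abs_of_nonneg (inv_nonneg.2 (norm_nonneg x)), inv_mul_cancel₀ hxn]
  · rw [norm_smul]
    simp [abs_of_nonneg (inv_nonneg.2 (norm_nonneg y)), inv_mul_cancel₀ hyn]
  · rw [real_inner_smul_left, real_inner_smul_right, h1]; ring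
  · rw [map_smul, real_inner_smul_left, real_inner_smul_right, h2]; ring


/-- trace of a bilinear form over the projections onto the complement of span{x,Jx} -/
theorem aux_tp (b : OrthonormalBasis (Fin (2 * n)) ℝ E) (J : E →ₗ[ℝ] E)
    (hJ2 : ∀ x : E, J (J x) = -x)
    (hJg : ∀ x y : E, ⟪J x, J y⟫ = ⟪x, y⟫)
    (B : E →ₗ[ℝ] E →ₗ[ℝ] ℝ)
    (x : E) (hx : ⟪x, x⟫ = 1) (hxJ : ⟪x, J x⟫ = 0) :
    ∑ j, B (b j - ⟪x, b j⟫ • x - ⟪J x, b j⟫ • J x) (b j - ⟪x, b j⟫ • x - ⟪J x, b j⟫ • J x)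
      = (∑ j, B (b j) (b j)) - B x x - B (J x) (J x) := by
  have hJx : ⟪J x, x⟫ = 0 := by rw [real_inner_comm]; exact hxJ
  have hJJ : ⟪J x, J x⟫ = 1 := by rw [hJg]; exact hx
  have key : ∀ j, B (b j - ⟪x, b j⟫ • x - ⟪J x, b j⟫ • J x)
      (b j - ⟪x, b j⟫ • x - ⟪J x, b j⟫ • J x)
      = B (b j) (b j)
        - (⟪x, b j⟫ * B (b j) x + ⟪J x, b j⟫ * B (b j) (J x)
           + ⟪x, b j⟫ * B x (b j) + ⟪J x, b j⟫ * B (J x) (b j))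
        + (⟪x, b j⟫ * ⟪x, b j⟫ * B x x
           + ⟪x, b j⟫ * ⟪J x, b j⟫ * (B x (J x) + B (J x) x)
           + ⟪J x, b j⟫ * ⟪J x, b j⟫ * B (J x) (J x)) := by
    intro j
    simp only [map_sub, map_smul, LinearMap.sub_apply, LinearMap.smul_apply, smul_eq_mul]
    ring
  rw [Finset.sum_congr rfl (fun j _ => key j)]
  have k1 : ∑ j, ⟪x, b j⟫ * B (b j) x = B x x := by
    have h := congrArg (fun v => B v x) (aux_repr b x)
    simp only [map_sum, map_smul, LinearMap.sum_apply, LinearMap.smul_apply, smul_eq_mul] at h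
    exact h
  have k2 : ∑ j, ⟪J x, b j⟫ * B (b j) (J x) = B (J x) (J x) := by
    have h := congrArg (fun v => B v (J x)) (aux_repr b (J x))
    simp only [map_sum, map_smul, LinearMap.sum_apply, LinearMap.smul_apply, smul_eq_mul] at h
    exact h
  have k3 : ∑ j, ⟪x, b j⟫ * B x (b j) = B x x := by
    have h := congrArg (fun v => B x v) (aux_repr b x)
    simp only [map_sum, map_smul, smul_eq_mul] at h
    exact h
  have k4 : ∑ j, ⟪J x, b j⟫ * B (J x) (b j) = B (J x) (J x) := by
    have h := congrArg (fun v => B (J x) v) (aux_repr b (J x))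
    simp only [map_sum, map_smul, smul_eq_mul] at h
    exact h
  have k5 : ∑ j, ⟪x, b j⟫ * ⟪x, b j⟫ * B x x = B x x := by
    rw [← Finset.sum_mul, aux_inner_sum b x x, hx, one_mul]
  have k6 : ∑ j, ⟪x, b j⟫ * ⟪J x, b j⟫ * (B x (J x) + B (J x) x) = 0 := by
    rw [← Finset.sum_mul, aux_inner_sum b x (J x), hxJ, zero_mul]
  have k7 : ∑ j, ⟪J x, b j⟫ * ⟪J x, b j⟫ * B (J x) (J x) = B (J x) (J x) := by
    rw [← Finset.sum_mul, aux_inner_sum b (J x) (J x), hJJ, one_mul]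
  simp only [Finset.sum_add_distrib, Finset.sum_sub_distrib]
  rw [k1, k2, k3, k4, k5, k6, k7]
  ring


set_option maxHeartbeats 2000000 in
/-- The key pointwise identity: 6 R(x,y,Jx,Jy) = 2ν - H(x) - H(y) for an
antiholomorphic orthonormal pair (x,y). -/
theorem aux_t4 (J : E →ₗ[ℝ] E)
    (hJ2 : ∀ x : E, J (J x) = -x)
    (hJg : ∀ x y : E, ⟪J x, J y⟫ = ⟪x, y⟫)
    (R : E →ₗ[ℝ] E →ₗ[ℝ] E →ₗ[ℝ] E →ₗ[ℝ] ℝ)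
    (hR1 : ∀ x y z u : E, R x y z u = - R y x z u)
    (hR2 : ∀ x y z u : E, R x y z u = - R x y u z)
    (hRb : ∀ x y z u : E, R x y z u + R y z x u + R z x y u = 0)
    (hRK : ∀ x y z u : E, R x y z u = R (J x) (J y) (J z) (J u))
    (ν : ℝ)
    (hν2 : ∀ x y : E, ⟪x, y⟫ = 0 → ⟪J x, y⟫ = 0 → R x y y x = ν * (⟪x, x⟫ * ⟪y, y⟫))
    (x y : E) (hx : ⟪x, x⟫ = 1) (hy : ⟪y, y⟫ = 1)
    (hxy : ⟪x, y⟫ = 0) (hJxy : ⟪J x, y⟫ = 0) :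
    6 * R x y (J x) (J y) = 2 * ν - R x (J x) (J x) x - R y (J y) (J y) y := by
  have hRs := aux_pair_swap R hR1 hR2 hRb
  have f2 : ⟪y, x⟫ = 0 := by rw [real_inner_comm]; exact hxy
  have f4 : ⟪y, J x⟫ = 0 := by rw [real_inner_comm]; exact hJxy
  have f5 : ⟪x, J y⟫ = 0 := by rw [aux_J_inner J hJ2 hJg x y, hJxy]; ring
  have f6 : ⟪J y, x⟫ = 0 := by rw [real_inner_comm]; exact f5
  have f7 : ⟪J x, J y⟫ = 0 := by rw [hJg]; exact hxy
  have f8 : ⟪J y, J x⟫ = 0 := by rw [real_inner_comm]; exact f7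
  have f11 : ⟪J x, J x⟫ = 1 := by rw [hJg]; exact hx
  have f12 : ⟪J y, J y⟫ = 1 := by rw [hJg]; exact hy
  have f13 : ⟪x, J x⟫ = 0 := aux_xJx J hJ2 hJg x
  have f14 : ⟪J x, x⟫ = 0 := by rw [real_inner_comm]; exact f13
  have f15 : ⟪y, J y⟫ = 0 := aux_xJx J hJ2 hJg y
  have f16 : ⟪J y, y⟫ = 0 := by rw [real_inner_comm]; exact f15
  -- values of antiholomorphic curvatures
  have v0 : R x y y x = ν := by
    have h := hν2 x y hxy hJxy; rw [hx, hy] at h; linarith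
  have v1 : R x (J y) (J y) x = ν := by
    have h := hν2 x (J y) f5 f7; rw [hx, f12] at h; linarith
  have v2 : R y (J x) (J x) y = ν := by
    have h := hν2 y (J x) f4 f8; rw [hy, f11] at h; linarith
  -- first 16-term identity, from the pair (x + Jy, y + Jx)
  have cond1 : ⟪x + J y, y + J x⟫ = 0 := by
    rw [inner_add_left, inner_add_right, inner_add_right, hxy, f13, f16, f8]; ring
  have cond2 : ⟪J (x + J y), y + J x⟫ = 0 := by
    rw [map_add, hJ2 y, inner_add_left, inner_add_right, inner_add_right,
      inner_neg_left, inner_neg_left, hJxy, f11, hy, f4]; ring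
  have big1 := hν2 (x + J y) (y + J x) cond1 cond2
  have n1 : ⟪x + J y, x + J y⟫ = 2 := by
    rw [inner_add_left, inner_add_right, inner_add_right, hx, f5, f6, f12]; ring
  have n2 : ⟪y + J x, y + J x⟫ = 2 := by
    rw [inner_add_left, inner_add_right, inner_add_right, hy, f4, hJxy, f11]; ring
  rw [n1, n2] at big1
  simp only [map_add, LinearMap.add_apply] at big1
  -- cancellations via the RK property and pair symmetry
  have c1 : R x y y (J y) = - R (J y) y (J x) (J y) := by
    have h := hRK x y y (J y)
    rw [hJ2 y, map_neg] at h
    rw [h, hRs (J y) y (J x) (J y)]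
  have c2 : R x y (J x) x = - R x (J x) (J x) (J y) := by
    have h := hRK x y (J x) x
    rw [hJ2 x] at h
    simp only [map_neg, LinearMap.neg_apply] at h
    rw [h, hRs x (J x) (J x) (J y)]
  have c3 : R x (J x) y x = - R (J y) (J x) (J x) x := by
    have h := hRK x (J x) y x
    rw [hJ2 x] at h
    simp only [map_neg, LinearMap.neg_apply] at h
    rw [h, hRs (J y) (J x) (J x) x]
  have c4 : R (J y) y y x = - R (J y) (J x) y (J y) := by
    have h := hRK (J y) y y x
    rw [hJ2 y] at h
    rw [show -y = (-1 : ℝ) • y by simp, map_smul] at h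
    simp only [map_neg, LinearMap.neg_apply, LinearMap.smul_apply, smul_eq_mul, neg_one_mul] at h
    rw [h, hRs (J y) (J x) y (J y)]
  have c5 : R (J y) (J x) (J x) (J y) = R x y y x := by
    have h := hRK (J y) (J x) (J x) (J y)
    rw [hJ2 x, hJ2 y] at h
    rw [show -y = (-1 : ℝ) • y by simp, map_smul, map_smul] at h
    simp only [map_neg, LinearMap.neg_apply, neg_neg, LinearMap.smul_apply, smul_eq_mul,
      neg_one_mul] at h
    rw [h]; linarith [hR1 y x x y, hR2 x y x y]
  have c6 : R (J y) y y (J y) = R y (J y) (J y) y := hRs (J y) y y (J y)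
  have c7 : R (J y) y (J x) x = R x (J x) y (J y) := by
    rw [hRs (J y) y (J x) x]; linarith [hR1 (J x) x (J y) y, hR2 x (J x) (J y) y]
  have c8 : R (J y) (J x) y x = R x y (J x) (J y) := by
    rw [hRs (J y) (J x) y x]; linarith [hR1 y x (J y) (J x), hR2 x y (J y) (J x)]
  have tI : 2 * R x y (J x) (J y) + 2 * R x (J x) y (J y)
      = 2 * ν - R x (J x) (J x) x - R y (J y) (J y) y := by
    linarith [big1, c1, c2, c3, c4, c5, c6, c7, c8, v0]
  -- second 16-term identity, from the pair (x + y, Jx - Jy)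
  have cond3 : ⟪x + y, J x - J y⟫ = 0 := by
    rw [inner_add_left, inner_sub_right, inner_sub_right, f13, f5, f4, f15]; ring
  have cond4 : ⟪J (x + y), J x - J y⟫ = 0 := by
    rw [map_add, inner_add_left, inner_sub_right, inner_sub_right, f11, f7, f8, f12]; ring
  have big2 := hν2 (x + y) (J x - J y) cond3 cond4
  have n3 : ⟪x + y, x + y⟫ = 2 := by
    rw [inner_add_left, inner_add_right, inner_add_right, hx, hxy, f2, hy]; ring
  have n4 : ⟪J x - J y, J x - J y⟫ = 2 := by
    rw [inner_sub_left, inner_sub_right, inner_sub_right, f11, f7, f8, f12]; ring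
  rw [n3, n4] at big2
  simp only [map_add, map_sub, LinearMap.add_apply, LinearMap.sub_apply] at big2
  have d1 : R x (J x) (J y) x = R y (J x) (J x) x := by
    have h := hRK x (J x) (J y) x
    rw [hJ2 x, hJ2 y] at h
    simp only [map_neg, LinearMap.neg_apply, neg_neg] at h
    rw [h, hRs y (J x) (J x) x]
  have d2 : R x (J x) (J x) y = R x (J y) (J x) x := by
    have h := hRK x (J x) (J x) y
    rw [hJ2 x] at h
    simp only [map_neg, LinearMap.neg_apply, neg_neg] at h
    rw [h, hRs x (J y) (J x) x]
  have d3 : R x (J y) (J y) y = R y (J y) (J x) y := by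
    have h := hRK x (J y) (J y) y
    rw [hJ2 y] at h
    simp only [map_neg, LinearMap.neg_apply, neg_neg] at h
    rw [h, hRs y (J y) (J x) y]
  have d4 : R y (J y) (J y) x = R y (J x) (J y) y := by
    have h := hRK y (J y) (J y) x
    rw [hJ2 y] at h
    simp only [map_neg, LinearMap.neg_apply, neg_neg] at h
    rw [h, hRs y (J x) (J y) y]
  have d5 : R y (J y) (J x) x = - R x (J x) y (J y) := by
    rw [hRs y (J y) (J x) x]; linarith [hR1 (J x) x y (J y)]
  have d6 : R y (J x) (J y) x = R x (J y) (J x) y := by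
    rw [hRs y (J x) (J y) x]; linarith [hR1 (J y) x y (J x), hR2 x (J y) y (J x)]
  have d7 : R x (J x) (J y) y = - R x (J x) y (J y) := by
    linarith [hR2 x (J x) y (J y)]
  have tII : 2 * R x (J x) y (J y) - 2 * R x (J y) (J x) y
      = 2 * ν - R x (J x) (J x) x - R y (J y) (J y) y := by
    linarith [big2, d1, d2, d3, d4, d5, d6, d7, v1, v2]
  -- first Bianchi identity
  have e1 : R y (J x) x (J y) = - R x (J y) (J x) y := by
    rw [hRs y (J x) x (J y)]; linarith [hR2 x (J y) (J x) y]
  have e2 : R (J x) x y (J y) = - R x (J x) y (J y) := by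
    linarith [hR1 (J x) x y (J y)]
  have tIII := hRb x y (J x) (J y)
  linarith [tI, tII, tIII, e1, e2]


/-- scaled version of aux_t4 + aux_step1, valid for any y orthogonal to x and Jx -/
theorem aux_G (b : OrthonormalBasis (Fin (2 * n)) ℝ E) (J : E →ₗ[ℝ] E)
    (hJ2 : ∀ x : E, J (J x) = -x)
    (hJg : ∀ x y : E, ⟪J x, J y⟫ = ⟪x, y⟫)
    (R : E →ₗ[ℝ] E →ₗ[ℝ] E →ₗ[ℝ] E →ₗ[ℝ] ℝ)
    (hR1 : ∀ x y z u : E, R x y z u = - R y x z u)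
    (hR2 : ∀ x y z u : E, R x y z u = - R x y u z)
    (hRb : ∀ x y z u : E, R x y z u + R y z x u + R z x y u = 0)
    (hRK : ∀ x y z u : E, R x y z u = R (J x) (J y) (J z) (J u))
    (ν : ℝ)
    (hν2 : ∀ x y : E, ⟪x, y⟫ = 0 → ⟪J x, y⟫ = 0 → R x y y x = ν * (⟪x, x⟫ * ⟪y, y⟫))
    (x y : E) (hx : ⟪x, x⟫ = 1) (hxy : ⟪x, y⟫ = 0) (hJxy : ⟪J x, y⟫ = 0) :
    6 * R x y (J x) (J y) + (∑ j, R y (b j) (b j) y)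
      = (2 * ν - R x (J x) (J x) x + (2 * (n : ℝ) - 2) * ν) * ⟪y, y⟫ := by
  rcases eq_or_ne y 0 with rfl | hy0
  · simp
  have hc : ‖y‖ ≠ 0 := norm_ne_zero_iff.2 hy0
  have hyy : ⟪y, y⟫ = ‖y‖ * ‖y‖ := real_inner_self_eq_norm_mul_norm y
  have huu : ⟪(‖y‖⁻¹ • y), (‖y‖⁻¹ • y)⟫ = 1 := by
    rw [real_inner_smul_left, real_inner_smul_right, hyy]
    field_simp
  have h1 : ⟪x, ‖y‖⁻¹ • y⟫ = 0 := by rw [real_inner_smul_right, hxy]; ring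
  have h2 : ⟪J x, ‖y‖⁻¹ • y⟫ = 0 := by rw [real_inner_smul_right, hJxy]; ring
  have A := aux_t4 J hJ2 hJg R hR1 hR2 hRb hRK ν hν2 x (‖y‖⁻¹ • y) hx huu h1 h2
  have B := aux_step1 b J hJ2 hJg R hR1 hR2 ν hν2 (‖y‖⁻¹ • y) huu
  have sA : R x (‖y‖⁻¹ • y) (J x) (J (‖y‖⁻¹ • y))
      = ‖y‖⁻¹ * (‖y‖⁻¹ * R x y (J x) (J y)) := by
    rw [map_smul]
    simp only [map_smul, LinearMap.smul_apply, smul_eq_mul]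
  have sB : ∑ j, R (‖y‖⁻¹ • y) (b j) (b j) (‖y‖⁻¹ • y)
      = ‖y‖⁻¹ * (‖y‖⁻¹ * ∑ j, R y (b j) (b j) y) := by
    rw [Finset.mul_sum, Finset.mul_sum]
    refine Finset.sum_congr rfl (fun j _ => ?_)
    simp only [map_smul, LinearMap.smul_apply, smul_eq_mul]
    try ring
  rw [sA] at A
  rw [sB] at B
  -- combine: the holomorphic curvature of the normalized vector cancels
  have key : 6 * (‖y‖⁻¹ * (‖y‖⁻¹ * R x y (J x) (J y)))
      + ‖y‖⁻¹ * (‖y‖⁻¹ * ∑ j, R y (b j) (b j) y)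
      = 2 * ν - R x (J x) (J x) x + (2 * (n : ℝ) - 2) * ν := by linarith
  rw [hyy]
  field_simp at key
  linarith [key]


/-- The traced identity for a single unit vector x. -/
theorem aux_E2 (b : OrthonormalBasis (Fin (2 * n)) ℝ E) (J : E →ₗ[ℝ] E)
    (hJ2 : ∀ x : E, J (J x) = -x)
    (hJg : ∀ x y : E, ⟪J x, J y⟫ = ⟪x, y⟫)
    (R : E →ₗ[ℝ] E →ₗ[ℝ] E →ₗ[ℝ] E →ₗ[ℝ] ℝ)
    (hR1 : ∀ x y z u : E, R x y z u = - R y x z u)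
    (hR2 : ∀ x y z u : E, R x y z u = - R x y u z)
    (hRb : ∀ x y z u : E, R x y z u + R y z x u + R z x y u = 0)
    (hRK : ∀ x y z u : E, R x y z u = R (J x) (J y) (J z) (J u))
    (ν : ℝ)
    (hν2 : ∀ x y : E, ⟪x, y⟫ = 0 → ⟪J x, y⟫ = 0 → R x y y x = ν * (⟪x, x⟫ * ⟪y, y⟫))
    (x : E) (hx : ⟪x, x⟫ = 1) :
    6 * (∑ j, R x (b j) (J x) (J (b j))) + 6 * R x (J x) (J x) x
      + ((∑ i, ∑ j, R (b i) (b j) (b j) (b i)) - (∑ j, R x (b j) (b j) x)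
          - (∑ j, R (J x) (b j) (b j) (J x)))
      = (2 * ν - R x (J x) (J x) x + (2 * (n : ℝ) - 2) * ν) * (2 * (n : ℝ) - 2) := by
  have hR0a : ∀ z u w : E, R z z u w = 0 := fun z u w => by linarith [hR1 z z u w]
  have hxJ : ⟪x, J x⟫ = 0 := aux_xJx J hJ2 hJg x
  -- the bilinear forms
  let B1 : E →ₗ[ℝ] E →ₗ[ℝ] ℝ := LinearMap.mk₂ ℝ (fun y z => R x y (J x) (J z))
    (fun m₁ m₂ o => by simp [map_add, LinearMap.add_apply])
    (fun c m o => by simp [map_smul, LinearMap.smul_apply, smul_eq_mul])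
    (fun m o₁ o₂ => by simp [map_add, LinearMap.add_apply])
    (fun c m o => by simp [map_smul, LinearMap.smul_apply, smul_eq_mul])
  let B2 : E →ₗ[ℝ] E →ₗ[ℝ] ℝ := LinearMap.mk₂ ℝ (fun y z => ∑ k, R y (b k) (b k) z)
    (fun m₁ m₂ o => by
      simp [map_add, LinearMap.add_apply, Finset.sum_add_distrib])
    (fun c m o => by
      simp [map_smul, LinearMap.smul_apply, smul_eq_mul, Finset.mul_sum])
    (fun m o₁ o₂ => by
      simp [map_add, LinearMap.add_apply, Finset.sum_add_distrib])
    (fun c m o => by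
      simp [map_smul, LinearMap.smul_apply, smul_eq_mul, Finset.mul_sum])
  let B3 : E →ₗ[ℝ] E →ₗ[ℝ] ℝ := LinearMap.mk₂ ℝ (fun y z => ⟪y, z⟫)
    (fun m₁ m₂ o => by simp [inner_add_left])
    (fun c m o => by simp [real_inner_smul_left])
    (fun m o₁ o₂ => by simp [inner_add_right])
    (fun c m o => by simp [real_inner_smul_right])
  have tp1 := aux_tp b J hJ2 hJg B1 x hx hxJ
  have tp2 := aux_tp b J hJ2 hJg B2 x hx hxJ
  have tp3 := aux_tp b J hJ2 hJg B3 x hx hxJ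
  simp only [B1, B2, B3, LinearMap.mk₂_apply] at tp1 tp2 tp3
  -- evaluate special values
  have v1 : R x x (J x) (J x) = 0 := hR0a x (J x) (J x)
  have v2 : R x (J x) (J x) (J (J x)) = - R x (J x) (J x) x := by
    rw [hJ2 x, map_neg]
  rw [v1, v2] at tp1
  rw [aux_card_sum b, hx, hJg, hx] at tp3
  -- apply the scaled pointwise identity to each projection
  have hG : ∀ j : Fin (2 * n),
      6 * R x (b j - ⟪x, b j⟫ • x - ⟪J x, b j⟫ • J x) (J x)
          (J (b j - ⟪x, b j⟫ • x - ⟪J x, b j⟫ • J x))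
        + (∑ k, R (b j - ⟪x, b j⟫ • x - ⟪J x, b j⟫ • J x) (b k) (b k)
            (b j - ⟪x, b j⟫ • x - ⟪J x, b j⟫ • J x))
      = (2 * ν - R x (J x) (J x) x + (2 * (n : ℝ) - 2) * ν)
        * ⟪b j - ⟪x, b j⟫ • x - ⟪J x, b j⟫ • J x,
            b j - ⟪x, b j⟫ • x - ⟪J x, b j⟫ • J x⟫ := by
    intro j
    obtain ⟨o1, o2⟩ := aux_proj_orth b J hJ2 hJg x hx j
    exact aux_G b J hJ2 hJg R hR1 hR2 hRb hRK ν hν2 x _ hx o1 o2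
  have hGsum := Finset.sum_congr
    (rfl : (Finset.univ : Finset (Fin (2 * n))) = Finset.univ) (fun j _ => hG j)
  rw [Finset.sum_add_distrib, ← Finset.mul_sum, ← Finset.mul_sum] at hGsum
  rw [tp1, tp2, tp3] at hGsum
  linarith [hGsum]


theorem aux_HJ (J : E →ₗ[ℝ] E)
    (hJ2 : ∀ x : E, J (J x) = -x)
    (R : E →ₗ[ℝ] E →ₗ[ℝ] E →ₗ[ℝ] E →ₗ[ℝ] ℝ)
    (hR1 : ∀ x y z u : E, R x y z u = - R y x z u)
    (hR2 : ∀ x y z u : E, R x y z u = - R x y u z)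
    (hRb : ∀ x y z u : E, R x y z u + R y z x u + R z x y u = 0)
    (x : E) :
    R (J x) (J (J x)) (J (J x)) (J x) = R x (J x) (J x) x := by
  have hRs := aux_pair_swap R hR1 hR2 hRb
  rw [hJ2 x]
  simp only [map_neg, LinearMap.neg_apply, neg_neg]
  exact hRs (J x) x x (J x)

theorem aux_swapJ (J : E →ₗ[ℝ] E)
    (hJ2 : ∀ x : E, J (J x) = -x)
    (R : E →ₗ[ℝ] E →ₗ[ℝ] E →ₗ[ℝ] E →ₗ[ℝ] ℝ)
    (hR1 : ∀ x y z u : E, R x y z u = - R y x z u)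
    (hR2 : ∀ x y z u : E, R x y z u = - R x y u z)
    (hRb : ∀ x y z u : E, R x y z u + R y z x u + R z x y u = 0)
    (hRK : ∀ x y z u : E, R x y z u = R (J x) (J y) (J z) (J u))
    (u v : E) :
    R v u (J u) (J v) = - R u v (J u) (J v) := by
  have hRs := aux_pair_swap R hR1 hR2 hRb
  have h := hRK u v (J v) (J u)
  rw [hJ2 u, hJ2 v] at h
  simp only [map_neg, LinearMap.neg_apply, neg_neg] at h
  -- h : R u v (J v) (J u) = R (J u) (J v) v u
  have h2 := hRs (J u) (J v) v u
  have h3 := hR2 u v (J v) (J u)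
  linarith

end Aux

/-- Proposition 1, equation (8): ν = ((2n+1)τ - 3τ′) / (8n(n²-1)). -/
theorem stmt_4 {E : Type*} [NormedAddCommGroup E] [InnerProductSpace ℝ E]
    {n : ℕ} (hn : 4 ≤ 2 * n)
    (b : OrthonormalBasis (Fin (2 * n)) ℝ E)
    (J : E →ₗ[ℝ] E)
    (hJ2 : ∀ x : E, J (J x) = -x)
    (hJg : ∀ x y : E, ⟪J x, J y⟫ = ⟪x, y⟫)
    (R : E →ₗ[ℝ] E →ₗ[ℝ] E →ₗ[ℝ] E →ₗ[ℝ] ℝ)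
    (hR1 : ∀ x y z u : E, R x y z u = - R y x z u)
    (hR2 : ∀ x y z u : E, R x y z u = - R x y u z)
    (hRb : ∀ x y z u : E, R x y z u + R y z x u + R z x y u = 0)
    (hRK : ∀ x y z u : E, R x y z u = R (J x) (J y) (J z) (J u))
    (ν : ℝ)
    (hν : ∀ x y : E, ‖x‖ = 1 → ‖y‖ = 1 → ⟪x, y⟫ = 0 → ⟪J x, y⟫ = 0 →
      R x y y x = ν)
    (S : E → E → ℝ)
    (hS : ∀ x y : E, S x y = ∑ i, R (b i) x y (b i))
    (S' : E → E → ℝ)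
    (hS' : ∀ x y : E, S' x y = ∑ i, R (b i) x (J y) (J (b i)))
    (τ τ' : ℝ)
    (hτ : τ = ∑ i, S (b i) (b i))
    (hτ' : τ' = ∑ i, S' (b i) (b i)) :
    ν = ((2 * (n : ℝ) + 1) * τ - 3 * τ') / (8 * (n : ℝ) * ((n : ℝ) ^ 2 - 1)) := by
  have hν2 := aux_nu2 J R ν hν
  have hbx : ∀ i, ⟪b i, b i⟫ = (1 : ℝ) := fun i => by
    rw [real_inner_self_eq_norm_mul_norm, b.orthonormal.1 i]; norm_num
  have hbJ : ∀ i, ⟪J (b i), J (b i)⟫ = (1 : ℝ) := fun i => by rw [hJg]; exact hbx i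
  -- τ as a double sum
  have e3 : τ = ∑ i, ∑ j, R (b i) (b j) (b j) (b i) := by
    rw [hτ, Finset.sum_congr rfl (fun i _ => hS (b i) (b i))]
    exact Finset.sum_comm
  -- τ' as minus the double J-sum
  have e4 : τ' = - ∑ i, ∑ j, R (b i) (b j) (J (b i)) (J (b j)) := by
    rw [hτ', Finset.sum_congr rfl (fun i _ => hS' (b i) (b i)), ← Finset.sum_neg_distrib]
    refine Finset.sum_congr rfl (fun i _ => ?_)
    rw [← Finset.sum_neg_distrib]
    exact Finset.sum_congr rfl
      (fun k _ => aux_swapJ J hJ2 R hR1 hR2 hRb hRK (b i) (b k))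
  -- trace of step1
  have e1 : (∑ i, ∑ j, R (b i) (b j) (b j) (b i))
      = (∑ i, R (b i) (J (b i)) (J (b i)) (b i))
        + (2 * (n : ℝ)) * ((2 * (n : ℝ) - 2) * ν) := by
    rw [Finset.sum_congr rfl
      (fun i _ => aux_step1 b J hJ2 hJg R hR1 hR2 ν hν2 (b i) (hbx i)),
      Finset.sum_add_distrib, Finset.sum_const, Finset.card_univ, Fintype.card_fin,
      nsmul_eq_mul]
    push_cast; ring
  -- same for the J-translated vectors
  have hStJ : (∑ i, ∑ j, R (J (b i)) (b j) (b j) (J (b i)))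
      = (∑ i, R (b i) (J (b i)) (J (b i)) (b i))
        + (2 * (n : ℝ)) * ((2 * (n : ℝ) - 2) * ν) := by
    have key : ∀ i : Fin (2 * n), (∑ j, R (J (b i)) (b j) (b j) (J (b i)))
        = R (b i) (J (b i)) (J (b i)) (b i) + (2 * (n : ℝ) - 2) * ν := fun i => by
      rw [aux_step1 b J hJ2 hJg R hR1 hR2 ν hν2 (J (b i)) (hbJ i),
        aux_HJ J hJ2 R hR1 hR2 hRb (b i)]
    rw [Finset.sum_congr rfl (fun i _ => key i), Finset.sum_add_distrib,
      Finset.sum_const, Finset.card_univ, Fintype.card_fin, nsmul_eq_mul]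
    push_cast; ring
  -- summed main identity
  have hsum := Finset.sum_congr
    (rfl : (Finset.univ : Finset (Fin (2 * n))) = Finset.univ)
    (fun i _ => aux_E2 b J hJ2 hJg R hR1 hR2 hRb hRK ν hν2 (b i) (hbx i))
  rw [Finset.sum_add_distrib, Finset.sum_add_distrib, Finset.sum_sub_distrib,
    Finset.sum_sub_distrib, ← Finset.mul_sum, ← Finset.mul_sum, Finset.sum_const,
    Finset.card_univ, Fintype.card_fin, nsmul_eq_mul, hStJ, ← Finset.sum_mul,
    Finset.sum_add_distrib, Finset.sum_sub_distrib, Finset.sum_const, Finset.sum_const,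
    Finset.card_univ, Fintype.card_fin, nsmul_eq_mul, nsmul_eq_mul] at hsum
  push_cast at hsum
  -- final algebra
  have hn2 : (2 : ℝ) ≤ (n : ℝ) := by
    have : 2 ≤ n := by omega
    exact_mod_cast this
  have hne : 8 * (n : ℝ) * ((n : ℝ) ^ 2 - 1) ≠ 0 := by
    have : 0 < 8 * (n : ℝ) * ((n : ℝ) ^ 2 - 1) := by nlinarith
    exact this.ne'
  rw [eq_div_iff hne]
  linear_combination (-(2 * (n : ℝ) + 3) / 2) * e1 + (-(1 : ℝ) / 2) * hsum
    + (-(2 * (n : ℝ) + 1)) * e3 + 3 * e4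
end

section
/- Let E be a real inner product space of dimension 2n with 2n ≥ 4, J a compatible almost complex structure, and R an algebraic curvature tensor on E that is an RK-tensor and has constant antiholomorphic sectional curvature ν. If moreover R is Einstein, i.e. its Ricci tensor satisfies S(x,y) = λ⟨x,y⟩ for some constant λ and all x,y ∈ E, then R has constant holomorphic sectional curvature: R(x,Jx,Jx,x) = λ - 2(n-1)ν for every unit vector x ∈ E. -/
open scoped RealInnerProductSpace

/-- The "trace" of a bilinear form over an orthonormal basis is basis-independent. -/
theorem stmt_5_aux {E : Type*} [NormedAddCommGroup E] [InnerProductSpace ℝ E] {ι κ : Type*}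
    [Fintype ι] [Fintype κ] (b : OrthonormalBasis ι ℝ E) (c : OrthonormalBasis κ ℝ E)
    (B : E →ₗ[ℝ] E →ₗ[ℝ] ℝ) : ∑ i, B (b i) (b i) = ∑ j, B (c j) (c j) := by
  classical
  have hexp : ∀ (F : E →ₗ[ℝ] ℝ) (y : E), F y = ∑ j, ⟪c j, y⟫ * F (c j) := by
    intro F y
    conv_lhs => rw [← c.sum_repr y]
    rw [map_sum]
    simp [c.repr_apply_apply]
  have hdelta : ∀ j k, (∑ i, ⟪c j, b i⟫ * ⟪c k, b i⟫) = if j = k then 1 else 0 := by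
    intro j k
    have : ∀ i, ⟪c k, b i⟫ = ⟪b i, c k⟫ := fun i => real_inner_comm _ _
    simp_rw [this]
    rw [b.sum_inner_mul_inner]
    exact orthonormal_iff_ite.mp c.orthonormal j k
  calc ∑ i, B (b i) (b i)
      = ∑ i, ∑ j, ∑ k, (⟪c j, b i⟫ * ⟪c k, b i⟫) * B (c j) (c k) := by
        refine Finset.sum_congr rfl fun i _ => ?_
        have h1 := hexp (B.flip (b i)) (b i)
        simp only [LinearMap.flip_apply] at h1
        rw [h1]
        refine Finset.sum_congr rfl fun j _ => ?_
        rw [hexp (B (c j)) (b i), Finset.mul_sum]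
        exact Finset.sum_congr rfl fun k _ => by ring
    _ = ∑ j, ∑ k, (∑ i, ⟪c j, b i⟫ * ⟪c k, b i⟫) * B (c j) (c k) := by
        rw [Finset.sum_comm]
        refine Finset.sum_congr rfl fun j _ => ?_
        rw [Finset.sum_comm]
        exact Finset.sum_congr rfl fun k _ => by rw [Finset.sum_mul]
    _ = ∑ j, B (c j) (c j) := by
        simp [hdelta, ite_mul]

/-- For an RK-curvature tensor of constant antiholomorphic sectional curvature ν on a
2n-dimensional space (2n ≥ 4): if moreover R is Einstein with S = λ g, then R(x,Jx,Jx,x) = λ - 2(n-1)ν for every unit x. -/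
theorem stmt_5 {E : Type*} [NormedAddCommGroup E] [InnerProductSpace ℝ E]
    {n : ℕ} (hn : 4 ≤ 2 * n)
    (b : OrthonormalBasis (Fin (2 * n)) ℝ E)
    (J : E →ₗ[ℝ] E)
    (hJ2 : ∀ x : E, J (J x) = -x)
    (hJg : ∀ x y : E, ⟪J x, J y⟫ = ⟪x, y⟫)
    (R : E →ₗ[ℝ] E →ₗ[ℝ] E →ₗ[ℝ] E →ₗ[ℝ] ℝ)
    (hR1 : ∀ x y z u : E, R x y z u = - R y x z u)
    (hR2 : ∀ x y z u : E, R x y z u = - R x y u z)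
    (hRb : ∀ x y z u : E, R x y z u + R y z x u + R z x y u = 0)
    (hRK : ∀ x y z u : E, R x y z u = R (J x) (J y) (J z) (J u))
    (ν : ℝ)
    (hν : ∀ x y : E, ‖x‖ = 1 → ‖y‖ = 1 → ⟪x, y⟫ = 0 → ⟪J x, y⟫ = 0 →
      R x y y x = ν)
    (S : E → E → ℝ)
    (hS : ∀ x y : E, S x y = ∑ i, R (b i) x y (b i))
    (lam : ℝ)
    (hEinstein : ∀ x y : E, S x y = lam * ⟪x, y⟫) :
    ∀ x : E, ‖x‖ = 1 → R x (J x) (J x) x = lam - 2 * ((n : ℝ) - 1) * ν := by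
  classical
  intro x hx
  -- basic facts about x and J x
  have hxx : ⟪x, x⟫ = 1 := by rw [real_inner_self_eq_norm_sq, hx]; norm_num
  have hJxJx : ⟪J x, J x⟫ = 1 := by rw [hJg]; exact hxx
  have hJxnorm : ‖J x‖ = 1 := by
    have h := hJxJx
    rw [real_inner_self_eq_norm_sq] at h
    nlinarith [norm_nonneg (J x)]
  have hxJx : ⟪x, J x⟫ = 0 := by
    have h := hJg (J x) x
    rw [hJ2, inner_neg_left] at h
    have h2 : ⟪J x, x⟫ = ⟪x, J x⟫ := real_inner_comm _ _
    linarith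
  have hJxx : ⟪J x, x⟫ = 0 := by rw [real_inner_comm]; exact hxJx
  -- the adapted orthonormal basis `c` with `c i0 = x`, `c i1 = J x`
  set i0 : Fin (2 * n) := ⟨0, by omega⟩ with hi0
  set i1 : Fin (2 * n) := ⟨1, by omega⟩ with hi1
  have hi01 : i0 ≠ i1 := by simp [hi0, hi1, Fin.ext_iff]
  set v : Fin (2 * n) → E := fun i => if i = i0 then x else J x with hv
  have hv0 : v i0 = x := by simp [hv]
  have hv1 : v i1 = J x := by simp [hv, hi01.symm]
  have hcard : Module.finrank ℝ E = Fintype.card (Fin (2 * n)) := by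
    rw [Module.finrank_eq_card_basis b.toBasis]
  have horth : Orthonormal ℝ (Set.restrict ({i0, i1} : Set (Fin (2 * n))) v) := by
    rw [orthonormal_iff_ite]
    rintro ⟨p, hp⟩ ⟨q, hq⟩
    simp only [Set.mem_insert_iff, Set.mem_singleton_iff] at hp hq
    rcases hp with rfl | rfl <;> rcases hq with rfl | rfl <;>
      simp [Set.restrict, hv0, hv1, hi01, hi01.symm, hxx, hJxJx, hxJx, hJxx, Subtype.ext_iff, hx, hJxnorm]
  have : FiniteDimensional ℝ E := Module.Finite.of_basis b.toBasis
  obtain ⟨c, hc⟩ := horth.exists_orthonormalBasis_extension_of_card_eq hcard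
  have hc0 : c i0 = x := by
    rw [hc i0 (by simp), hv0]
  have hc1 : c i1 = J x := by
    rw [hc i1 (by simp), hv1]
  -- basis independence of the Ricci trace
  set B : E →ₗ[ℝ] E →ₗ[ℝ] ℝ :=
    (LinearMap.applyₗ x).comp ((LinearMap.applyₗ x).comp R) with hB
  have hBapp : ∀ u w : E, B u w = R u x x w := fun u w => rfl
  have hsum : ∑ i, R (b i) x x (b i) = ∑ j, R (c j) x x (c j) := by
    have := stmt_5_aux b c B
    simpa only [hBapp] using this
  -- evaluate the trace in the adapted basis
  have hlam : lam = ∑ j, R (c j) x x (c j) := by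
    have h1 := hEinstein x x
    rw [hS x x, hxx, mul_one] at h1
    rw [← hsum]
    exact h1.symm
  -- split the sum
  set s : Finset (Fin (2 * n)) := {i0, i1} with hs
  have hsplit : ∑ j, R (c j) x x (c j)
      = (∑ j ∈ sᶜ, R (c j) x x (c j)) + ∑ j ∈ s, R (c j) x x (c j) :=
    (Finset.sum_compl_add_sum s _).symm
  have hpair : ∑ j ∈ s, R (c j) x x (c j) = R x x x x + R (J x) x x (J x) := by
    rw [hs, Finset.sum_pair hi01, hc0, hc1]
  have hRxx : R x x x x = 0 := by have := hR1 x x x x; linarith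
  have hRJ : R (J x) x x (J x) = R x (J x) (J x) x := by
    have h1 := hR1 (J x) x x (J x)
    have h2 := hR2 x (J x) x (J x)
    linarith
  have hcompl : ∀ j ∈ sᶜ, R (c j) x x (c j) = ν := by
    intro j hj
    rw [Finset.mem_compl, hs, Finset.mem_insert, Finset.mem_singleton] at hj
    push_neg at hj
    have hj0 : j ≠ i0 := hj.1
    have hj1 : j ≠ i1 := hj.2
    have hnorm : ‖c j‖ = 1 := c.orthonormal.1 j
    have hin0 : ⟪c j, x⟫ = 0 := by
      rw [← hc0]; exact c.orthonormal.2 hj0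
    have hin1 : ⟪c j, J x⟫ = 0 := by
      rw [← hc1]; exact c.orthonormal.2 hj1
    have hJin : ⟪J (c j), x⟫ = 0 := by
      have h := hJg (c j) (J x)
      rw [hJ2, inner_neg_right] at h
      linarith
    exact hν (c j) x hnorm hx hin0 hJin
  have hcomplsum : ∑ j ∈ sᶜ, R (c j) x x (c j) = ((2 * n - 2 : ℕ) : ℝ) * ν := by
    rw [Finset.sum_congr rfl hcompl, Finset.sum_const, nsmul_eq_mul]
    congr 1
    rw [Finset.card_compl, hs, Finset.card_pair hi01, Fintype.card_fin]
  have hcast : ((2 * n - 2 : ℕ) : ℝ) = 2 * ((n : ℝ) - 1) := by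
    have h2 : 2 ≤ n := by omega
    push_cast [Nat.cast_sub (by omega : 2 ≤ 2 * n)]
    ring
  rw [hsplit, hpair, hRxx, hRJ, hcomplsum, hcast] at hlam
  linarith
end
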